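/- arXiv:1309.6477 — 5 statements merged into one kernel-verified Lean document; each statement's English description precedes it below -/
import Mathlib

section
/- Both DNF and DH_k (for every integer k ≥ 2) have min/min ratio 1; in particular, liminf_{v→∞} inf{DNF(I)/v : vol(I) = v} = liminf_{v→∞} inf{DH_k(I)/v : vol(I) = v} = liminf_{v→∞} inf{Opt(I)/v : vol(I) = v} = 1/2. -/
open Filter MeasureTheory

/-- A valid bin covering input: all item sizes lie strictly between 0 and 1. -/
def validInput (I : List ℝ) : Prop := ∀ x ∈ I, 0 < x ∧ x < 1

/-- The total volume (sum of item sizes) of an input sequence. -/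
def vol (I : List ℝ) : ℝ := I.sum

/-- One step of Dual Next-Fit: the state is the level of the open bin (0 if none)
together with the number of covered (closed) bins so far. -/
noncomputable def dnfStep (s : ℝ × ℕ) (x : ℝ) : ℝ × ℕ :=
  if 1 ≤ s.1 + x then (0, s.2 + 1) else (s.1 + x, s.2)

/-- The number of bins covered by Dual Next-Fit on input `I`. -/
noncomputable def dnfCount (I : List ℝ) : ℕ := (I.foldl dnfStep (0, 0)).2

/-- The number of bins covered by the Dual Harmonic algorithm `DH_k` on input `I`:
items in `[1/j, 1/(j-1))` (for `2 ≤ j ≤ k`) are packed `j` to a bin, and items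
in `(0, 1/k)` are packed in Next-Fit fashion in separate bins. -/
noncomputable def dhCount (k : ℕ) (I : List ℝ) : ℕ :=
  (∑ j ∈ Finset.Icc 2 k,
      (I.countP fun x => decide ((1:ℝ)/(j:ℝ) ≤ x ∧ x < 1/((j:ℝ)-1))) / j)
  + dnfCount (I.filter fun x => decide (x < 1/(k:ℝ)))

/-- The optimal (offline) number of covered bins: the maximum, over all assignments
of the items of `I` to bins, of the number of bins receiving total size at least 1. -/
noncomputable def optCount (I : List ℝ) : ℕ :=
  Finset.sup Finset.univ (fun f : Fin I.length → Fin I.length =>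
    (Finset.univ.filter fun b : Fin I.length =>
      1 ≤ ∑ i ∈ Finset.univ.filter (fun i => f i = b), I.get i).card)

/-- The competitive ratio of the algorithm `A` restricted to input sequences with
all item sizes in `S`: the supremum of all `c` such that for some constant `b`,
`A I ≥ c·Opt I + b` for all such inputs. -/
noncomputable def CRrestricted (S : Set ℝ) (A : List ℝ → ℕ) : ℝ :=
  sSup {c : ℝ | ∃ b : ℝ, ∀ I : List ℝ, (∀ x ∈ I, x ∈ S) →
    c * (optCount I : ℝ) + b ≤ (A I : ℝ)}

/-- `A`'s performance on a worst permutation of `I`. -/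
noncomputable def worstOf (A : List ℝ → ℕ) (I : List ℝ) : ℕ :=
  (I.permutations.map A).foldr min (A I)

/-- The expected performance of `A` on a uniformly random permutation of `I`. -/
noncomputable def expPerm (A : List ℝ → ℕ) (I : List ℝ) : ℝ :=
  (∑ σ : Equiv.Perm (Fin I.length), (A (List.ofFn fun i => I.get (σ i)) : ℝ)) /
    ((I.length).factorial : ℝ)

/-- `liminf_{v→∞} inf { A(I)/v : vol I = v, items of I in S }`. -/
noncomputable def minRate (S : Set ℝ) (A : List ℝ → ℕ) : ℝ :=
  Filter.liminf (fun v : ℝ =>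
    sInf {r : ℝ | ∃ I : List ℝ, (∀ x ∈ I, x ∈ S) ∧ vol I = v ∧ r = (A I : ℝ) / v})
    Filter.atTop

/-- Expected performance of `A` on `n` items drawn independently and uniformly from `(0,1)`. -/
noncomputable def unifE (A : List ℝ → ℕ) (n : ℕ) : ℝ :=
  ∫ x : Fin n → ℝ, (A (List.ofFn x) : ℝ)
    ∂(Measure.pi fun _ : Fin n => volume.restrict (Set.Ioo (0:ℝ) 1))

/-- Expected performance of `A` on `n` independent items, each of size `ε` with
probability 1/2 and size `1-ε` with probability 1/2. -/
noncomputable def bernE (A : List ℝ → ℕ) (n : ℕ) (ε : ℝ) : ℝ :=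
  (∑ f : Fin n → Bool, (A (List.ofFn fun i => if f i then ε else 1 - ε) : ℝ)) / 2^n

/-- One step of a reasonable online algorithm with decision function `f`:
the accumulator records (history of items seen, levels of the open bins, number of
covered bins).  On item `x`, the algorithm places `x` in the open bin of index
`f hist x` (a new bin is opened if the index is out of range); a bin is closed
exactly when its content reaches 1. -/
noncomputable def algStep (f : List ℝ → ℝ → ℕ) (acc : List ℝ × List ℝ × ℕ) (x : ℝ) :
    List ℝ × List ℝ × ℕ :=
  let hist := acc.1
  let s := acc.2.1
  let c := acc.2.2
  let i := f hist x
  if h : i < s.length then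
    if 1 ≤ s.get ⟨i, h⟩ + x then (hist ++ [x], s.eraseIdx i, c + 1)
    else (hist ++ [x], s.set i (s.get ⟨i, h⟩ + x), c)
  else
    if 1 ≤ x then (hist ++ [x], s, c + 1)
    else (hist ++ [x], s ++ [x], c)

/-- Running the reasonable online algorithm with decision function `f` on input `I`. -/
noncomputable def runAlg (f : List ℝ → ℝ → ℕ) (I : List ℝ) : List ℝ × List ℝ × ℕ :=
  I.foldl (algStep f) ([], [], 0)
open Topology

lemma dnf_inv (I : List ℝ) (hI : ∀ x ∈ I, 0 < x ∧ x < 1) :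
    ∀ s : ℝ × ℕ, 0 ≤ s.1 → s.1 < 1 →
    0 ≤ (I.foldl dnfStep s).1 ∧ (I.foldl dnfStep s).1 < 1 ∧
    I.sum + 2*(s.2:ℝ) + s.1 ≤ 2*((I.foldl dnfStep s).2 : ℝ) + (I.foldl dnfStep s).1 := by
  induction I with
  | nil => intro s h0 h1; exact ⟨h0, h1, by simp⟩
  | cons x t ih =>
    intro s h0 h1
    obtain ⟨hx0, hx1⟩ := hI x List.mem_cons_self
    have ht : ∀ y ∈ t, 0 < y ∧ y < 1 := fun y hy => hI y (List.mem_cons_of_mem x hy)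
    simp only [List.foldl_cons, List.sum_cons]
    by_cases h : 1 ≤ s.1 + x
    · have hs' : dnfStep s x = (0, s.2 + 1) := by simp [dnfStep, h]
      rw [hs']
      obtain ⟨a, b, c⟩ := (fun y hy => ht y hy) |> fun ht' => ih ht' (0, s.2+1) le_rfl one_pos
      refine ⟨a, b, ?_⟩
      have := c
      push_cast at this ⊢
      nlinarith [this]
    · have hs' : dnfStep s x = (s.1 + x, s.2) := by simp [dnfStep, h]
      rw [hs']
      obtain ⟨a, b, c⟩ := ih ht (s.1 + x, s.2) (by simp; positivity) (by simp only; linarith [not_le.mp h])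
      refine ⟨a, b, ?_⟩
      simp only at c
      linarith

lemma dnf_sum_le (I : List ℝ) (hI : ∀ x ∈ I, 0 < x ∧ x < 1) :
    I.sum ≤ 2 * (dnfCount I : ℝ) + 1 := by
  obtain ⟨a, b, c⟩ := dnf_inv I hI (0,0) le_rfl one_pos
  simp only [Nat.cast_zero] at c
  unfold dnfCount
  linarith

lemma getD_eq (l : List ℝ) (j : ℕ) (h : j < l.length) : l.getD j 0 = l.get ⟨j, h⟩ := by
  simp [List.getD_eq_getElem?_getD, List.getElem?_eq_getElem h, List.get_eq_getElem]

lemma dnf_le_opt (I : List ℝ) : dnfCount I ≤ optCount I := by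
  set n := I.length with hn
  set st : ℕ → ℝ × ℕ := fun i => (I.take i).foldl dnfStep (0,0) with hst
  have hstep : ∀ i (h : i < n), st (i+1) = dnfStep (st i) (I.get ⟨i, h⟩) := by
    intro i h
    have : I.take (i+1) = I.take i ++ [I.get ⟨i,h⟩] := by
      rw [List.take_succ]; simp [List.getElem?_eq_getElem h, List.get_eq_getElem]
    simp only [hst, this, List.foldl_append, List.foldl_cons, List.foldl_nil]
  have dich : ∀ i (h : i < n),
      ((st (i+1)).2 = (st i).2 + 1 ∧ (st (i+1)).1 = 0 ∧ 1 ≤ (st i).1 + I.get ⟨i,h⟩) ∨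
      ((st (i+1)).2 = (st i).2 ∧ (st (i+1)).1 = (st i).1 + I.get ⟨i,h⟩) := by
    intro i h
    rw [hstep i h]
    unfold dnfStep
    by_cases hc : 1 ≤ (st i).1 + I.get ⟨i,h⟩
    · rw [if_pos hc]; exact Or.inl ⟨rfl, rfl, hc⟩
    · rw [if_neg hc]; exact Or.inr ⟨rfl, rfl⟩
  have hsat : ∀ i, n ≤ i → st i = st n := by
    intro i hi; simp only [hst]
    rw [List.take_of_length_le (by omega), List.take_of_length_le (by omega)]
  have gmono : Monotone (fun i => (st i).2) := by
    apply monotone_nat_of_le_succ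
    intro i
    rcases lt_or_ge i n with h | h
    · rcases dich i h with ⟨h1, _, _⟩ | ⟨h1, _⟩ <;> (show (st i).2 ≤ (st (i+1)).2) <;> omega
    · have : st (i+1) = st i := by rw [hsat i h, hsat (i+1) (by omega)]
      simp only [this]; exact le_rfl
  have g0 : (st 0).2 = 0 := by simp [hst]
  have g_le : ∀ i, (st i).2 ≤ i := by
    intro i; induction i with
    | zero => omega
    | succ m ih =>
      rcases lt_or_ge m n with h | h
      · rcases dich m h with ⟨h1, _, _⟩ | ⟨h1, _⟩ <;> omega
      · have : st (m+1) = st m := by rw [hsat m h, hsat (m+1) (by omega)]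
        rw [this]; omega
  have Lsum : ∀ i, i ≤ n →
      (st i).1 = ∑ j ∈ (Finset.range i).filter (fun j => (st j).2 = (st i).2), I.getD j 0 := by
    intro i
    induction i with
    | zero => intro _; simp [hst]
    | succ m ih =>
      intro hm
      have hmn : m < n := by omega
      rcases dich m hmn with ⟨h1, h2, _⟩ | ⟨h1, h2⟩
      · rw [h2]
        have : (Finset.range (m+1)).filter (fun j => (st j).2 = (st (m+1)).2) = ∅ := by
          apply Finset.filter_false_of_mem
          intro j hj
          have := gmono (show j ≤ m by simpa [Nat.lt_succ_iff] using hj)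
          simp only at this
          omega
        rw [this, Finset.sum_empty]
      · rw [h2, ih (by omega)]
        simp only [h1]
        rw [Finset.range_add_one, Finset.filter_insert, if_pos rfl]
        rw [Finset.sum_insert (by simp), getD_eq I m hmn]
        ring
  have covered : ∀ b, b < (st n).2 →
      1 ≤ ∑ j ∈ (Finset.range n).filter (fun j => (st j).2 = b), I.getD j 0 := by
    intro b hb
    have hex : ∃ m, b < (st m).2 := ⟨n, hb⟩
    have hbm : b < (st (Nat.find hex)).2 := Nat.find_spec hex
    have hmle : Nat.find hex ≤ n := Nat.find_min' hex hb
    have hm0 : Nat.find hex ≠ 0 := by intro h; rw [h] at hbm; omega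
    set i := Nat.find hex - 1 with hi
    have him : i + 1 = Nat.find hex := by omega
    have hibn : i < n := by omega
    have hbm' : b < (st (i+1)).2 := by rw [him]; exact hbm
    have hgi : (st i).2 ≤ b := by
      have := Nat.find_min hex (show i < Nat.find hex by omega)
      omega
    rcases dich i hibn with ⟨h1, _, h3⟩ | ⟨h1, _⟩
    swap
    · omega
    have hgib : (st i).2 = b := by omega
    have hset : (Finset.range n).filter (fun j => (st j).2 = b) =
        (Finset.range (i+1)).filter (fun j => (st j).2 = b) := by
      ext j
      simp only [Finset.mem_filter, Finset.mem_range]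
      constructor
      · rintro ⟨hj, hgj⟩
        refine ⟨?_, hgj⟩
        by_contra hij
        have h4 : (st (i+1)).2 ≤ (st j).2 := gmono (by omega)
        omega
      · rintro ⟨hj, hgj⟩; exact ⟨by omega, hgj⟩
    rw [hset, Finset.range_add_one, Finset.filter_insert, if_pos hgib,
      Finset.sum_insert (by simp), getD_eq I i hibn]
    have hLs := Lsum i (by omega)
    rw [hgib] at hLs
    rw [← hLs]
    linarith
  have hdnf : dnfCount I = (st n).2 := by
    simp only [hst, dnfCount, hn, List.take_length]
  rcases Nat.eq_zero_or_pos n with h0 | hpos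
  · rw [hdnf]
    have := g_le n
    omega
  have hglt : ∀ i : Fin n, (st i.1).2 < n := fun i => lt_of_le_of_lt (g_le i.1) i.isLt
  set f : Fin n → Fin n := fun i => ⟨(st i.1).2, hglt i⟩ with hf
  rw [hdnf]
  unfold optCount
  have hle : (st n).2 ≤ (Finset.univ.filter fun b : Fin I.length =>
      1 ≤ ∑ i ∈ Finset.univ.filter (fun i => f i = b), I.get i).card := by
    have hcard := Finset.card_le_card_of_injOn
      (s := Finset.range ((st n).2))
      (t := Finset.univ.filter fun b : Fin I.length =>
        1 ≤ ∑ i ∈ Finset.univ.filter (fun i => f i = b), I.get i)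
      (fun b => (⟨min b (n-1), by omega⟩ : Fin n)) ?_ ?_
    · simpa using hcard
    · intro b hb
      have hbn : b < (st n).2 := Finset.mem_range.mp hb
      have hblt : b < n := lt_of_lt_of_le hbn (g_le n)
      have hminb : min b (n-1) = b := by omega
      simp only [Finset.mem_coe, Finset.mem_filter, Finset.mem_univ, true_and]
      have hsum : ∑ i ∈ Finset.univ.filter (fun i => f i = (⟨min b (n-1), by omega⟩ : Fin n)), I.get i
          = ∑ j ∈ (Finset.range n).filter (fun j => (st j).2 = b), I.getD j 0 := by
        rw [Finset.sum_filter, Finset.sum_filter]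
        have key : ∀ i : Fin n, (if f i = (⟨min b (n-1), by omega⟩ : Fin n) then I.get i else 0)
            = (fun j => if (st j).2 = b then I.getD j 0 else 0) i.1 := by
          intro i
          simp only [hf, Fin.ext_iff, hminb]
          by_cases hgi : (st i.1).2 = b
          · rw [if_pos hgi, if_pos hgi, getD_eq I i.1 i.isLt]
          · rw [if_neg hgi, if_neg hgi]
        rw [Finset.sum_congr rfl (fun i _ => key i)]
        exact Fin.sum_univ_eq_sum_range (fun j => if (st j).2 = b then I.getD j 0 else 0) n
      rw [hsum]
      exact covered b hbn
    · intro a ha b hb hab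
      simp only [Finset.coe_range, Set.mem_Iio] at ha hb
      have ha' : a < n := lt_of_lt_of_le ha (g_le n)
      have hb' : b < n := lt_of_lt_of_le hb (g_le n)
      simp only [Fin.mk.injEq] at hab
      omega
  exact hle.trans (Finset.le_sup (f := fun f : Fin I.length → Fin I.length =>
    (Finset.univ.filter fun b : Fin I.length =>
      1 ≤ ∑ i ∈ Finset.univ.filter (fun i => f i = b), I.get i).card) (Finset.mem_univ f))

lemma class_exists (k : ℕ) (hk : 2 ≤ k) (x : ℝ) (hx : 0 < x) (hx1 : x < 1)
    (hxk : ¬ x < 1/(k:ℝ)) : ∃ j ∈ Finset.Icc 2 k, (1:ℝ)/(j:ℝ) ≤ x ∧ x < 1/((j:ℝ)-1) := by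
  push_neg at hxk
  have hk0 : (0:ℝ) < (k:ℝ) := by positivity
  have h1x : (1:ℝ) < 1/x := by rw [lt_div_iff₀ hx]; linarith
  have h1x0 : (0:ℝ) < 1/x := by positivity
  set j := ⌈1/x⌉₊ with hj
  have hj2 : 2 ≤ j := by
    have : (1:ℕ) < j := by rw [hj, Nat.lt_ceil]; exact_mod_cast h1x
    omega
  have hxj : 1/x ≤ (j:ℝ) := Nat.le_ceil _
  have hjk : j ≤ k := by
    rw [hj, Nat.ceil_le]
    rw [div_le_iff₀ hx]
    calc (1:ℝ) = (k:ℝ) * (1/(k:ℝ)) := by field_simp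
    _ ≤ (k:ℝ) * x := by apply mul_le_mul_of_nonneg_left hxk (le_of_lt hk0)
  refine ⟨j, Finset.mem_Icc.mpr ⟨hj2, hjk⟩, ?_, ?_⟩
  · have hjpos : (0:ℝ) < (j:ℝ) := by positivity
    rw [div_le_iff₀ hjpos]
    calc (1:ℝ) = x * (1/x) := by field_simp
    _ ≤ x * (j:ℝ) := mul_le_mul_of_nonneg_left hxj (le_of_lt hx)
  · have hceil : (j:ℝ) < 1/x + 1 := Nat.ceil_lt_add_one (le_of_lt h1x0)
    have hj1 : (0:ℝ) < (j:ℝ) - 1 := by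
      have : (2:ℝ) ≤ (j:ℝ) := by exact_mod_cast hj2
      linarith
    rw [lt_div_iff₀ hj1]
    have : ((j:ℝ) - 1) < 1/x := by linarith
    calc x * ((j:ℝ)-1) < x * (1/x) := by apply mul_lt_mul_of_pos_left this hx
    _ = 1 := by field_simp

lemma dh_vol (k : ℕ) (hk : 2 ≤ k) (I : List ℝ) (hI : ∀ x ∈ I, 0 < x ∧ x < 1) :
    I.sum ≤ (∑ j ∈ Finset.Icc 2 k,
        ((I.countP fun x => decide ((1:ℝ)/(j:ℝ) ≤ x ∧ x < 1/((j:ℝ)-1))) : ℝ) * (1/((j:ℝ)-1)))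
      + (I.filter fun x => decide (x < 1/(k:ℝ))).sum := by
  induction I with
  | nil => simp
  | cons x t ih =>
    obtain ⟨hx0, hx1⟩ := hI x List.mem_cons_self
    have ht := fun y hy => hI y (List.mem_cons_of_mem x hy)
    have iht := ih ht
    simp only [List.sum_cons, List.filter_cons]
    by_cases hQ : x < 1/(k:ℝ)
    · rw [if_pos (by simpa using hQ)]
      have hsum_eq : ∀ j ∈ Finset.Icc 2 k,
          (((x :: t).countP fun y => decide ((1:ℝ)/(j:ℝ) ≤ y ∧ y < 1/((j:ℝ)-1))) : ℝ) * (1/((j:ℝ)-1))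
          = ((t.countP fun y => decide ((1:ℝ)/(j:ℝ) ≤ y ∧ y < 1/((j:ℝ)-1))) : ℝ) * (1/((j:ℝ)-1)) := by
        intro j hj
        obtain ⟨hj2, hjk⟩ := Finset.mem_Icc.mp hj
        have hnot : ¬((1:ℝ)/(j:ℝ) ≤ x ∧ x < 1/((j:ℝ)-1)) := by
          rintro ⟨hle, -⟩
          have hjpos : (0:ℝ) < (j:ℝ) := by positivity
          have : (1:ℝ)/(k:ℝ) ≤ 1/(j:ℝ) := by
            apply one_div_le_one_div_of_le hjpos
            exact_mod_cast hjk
          linarith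
        rw [List.countP_cons, if_neg (by simpa using hnot), add_zero]
      rw [Finset.sum_congr rfl hsum_eq]
      simp only [List.sum_cons]
      linarith
    · rw [if_neg (by simpa using hQ)]
      obtain ⟨j₀, hj₀mem, hj₀⟩ := class_exists k hk x hx0 hx1 hQ
      have expand : ∀ j ∈ Finset.Icc 2 k,
          (((x :: t).countP fun y => decide ((1:ℝ)/(j:ℝ) ≤ y ∧ y < 1/((j:ℝ)-1))) : ℝ) * (1/((j:ℝ)-1))
          = ((t.countP fun y => decide ((1:ℝ)/(j:ℝ) ≤ y ∧ y < 1/((j:ℝ)-1))) : ℝ) * (1/((j:ℝ)-1))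
            + (if ((1:ℝ)/(j:ℝ) ≤ x ∧ x < 1/((j:ℝ)-1)) then 1 else 0) * (1/((j:ℝ)-1)) := by
        intro j hj
        have hcast : (((x :: t).countP fun y => decide ((1:ℝ)/(j:ℝ) ≤ y ∧ y < 1/((j:ℝ)-1))) : ℝ)
            = ((t.countP fun y => decide ((1:ℝ)/(j:ℝ) ≤ y ∧ y < 1/((j:ℝ)-1))) : ℝ)
              + (if ((1:ℝ)/(j:ℝ) ≤ x ∧ x < 1/((j:ℝ)-1)) then 1 else 0) := by
          rw [List.countP_cons]
          by_cases hc : ((1:ℝ)/(j:ℝ) ≤ x ∧ x < 1/((j:ℝ)-1)) <;> simp [hc]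
        rw [hcast, add_mul]
      rw [Finset.sum_congr rfl expand, Finset.sum_add_distrib]
      have hlb : x ≤ ∑ j ∈ Finset.Icc 2 k,
          (if ((1:ℝ)/(j:ℝ) ≤ x ∧ x < 1/((j:ℝ)-1)) then 1 else 0) * (1/((j:ℝ)-1)) := by
        have hterm : x ≤ (if ((1:ℝ)/(j₀:ℝ) ≤ x ∧ x < 1/((j₀:ℝ)-1)) then 1 else 0) * (1/((j₀:ℝ)-1)) := by
          rw [if_pos hj₀, one_mul]
          exact le_of_lt hj₀.2
        refine le_trans hterm (Finset.single_le_sum (s := Finset.Icc 2 k) (f := fun j : ℕ =>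
          (if ((1:ℝ)/(j:ℝ) ≤ x ∧ x < 1/((j:ℝ)-1)) then 1 else 0) * (1/((j:ℝ)-1))) ?_ hj₀mem)
        intro j hj
        obtain ⟨hj2, -⟩ := Finset.mem_Icc.mp hj
        have : (0:ℝ) < (j:ℝ) - 1 := by
          have : (2:ℝ) ≤ (j:ℝ) := by exact_mod_cast hj2
          linarith
        positivity
      linarith

lemma dh_sum_le (k : ℕ) (hk : 2 ≤ k) (I : List ℝ) (hI : ∀ x ∈ I, 0 < x ∧ x < 1) :
    I.sum ≤ 2 * (dhCount k I : ℝ) + k := by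
  have h1 := dh_vol k hk I hI
  have h2 : (I.filter fun x => decide (x < 1/(k:ℝ))).sum
      ≤ 2 * (dnfCount (I.filter fun x => decide (x < 1/(k:ℝ))) : ℝ) + 1 := by
    apply dnf_sum_le
    intro x hx
    exact hI x (List.mem_of_mem_filter hx)
  have h3 : ∀ j ∈ Finset.Icc 2 k,
      ((I.countP fun x => decide ((1:ℝ)/(j:ℝ) ≤ x ∧ x < 1/((j:ℝ)-1))) : ℝ) * (1/((j:ℝ)-1))
      ≤ 2 * (((I.countP fun x => decide ((1:ℝ)/(j:ℝ) ≤ x ∧ x < 1/((j:ℝ)-1))) / j : ℕ) : ℝ) + 1 := by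
    intro j hj
    obtain ⟨hj2, -⟩ := Finset.mem_Icc.mp hj
    set m := I.countP fun x => decide ((1:ℝ)/(j:ℝ) ≤ x ∧ x < 1/((j:ℝ)-1)) with hm
    have hmod : m = j * (m / j) + m % j := (Nat.div_add_mod m j).symm
    have hmlt : m % j < j := Nat.mod_lt _ (by omega)
    have hcast : (m:ℝ) ≤ (j:ℝ) * ((m/j : ℕ):ℝ) + (j:ℝ) - 1 := by
      have : (m:ℝ) = (j:ℝ) * ((m/j : ℕ):ℝ) + ((m % j : ℕ):ℝ) := by exact_mod_cast hmod
      have h2' : ((m % j : ℕ):ℝ) ≤ (j:ℝ) - 1 := by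
        have : (m % j : ℕ) ≤ j - 1 := by omega
        have hc : ((m % j : ℕ):ℝ) ≤ ((j - 1 : ℕ):ℝ) := by exact_mod_cast this
        rwa [Nat.cast_sub (by omega), Nat.cast_one] at hc
      linarith
    have hj1 : (0:ℝ) < (j:ℝ) - 1 := by
      have : (2:ℝ) ≤ (j:ℝ) := by exact_mod_cast hj2
      linarith
    have hjR : (2:ℝ) ≤ (j:ℝ) := by exact_mod_cast hj2
    have hq : (0:ℝ) ≤ ((m/j : ℕ):ℝ) := Nat.cast_nonneg _
    rw [mul_one_div, div_le_iff₀ hj1]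
    nlinarith
  have h4 : (∑ j ∈ Finset.Icc 2 k,
      ((I.countP fun x => decide ((1:ℝ)/(j:ℝ) ≤ x ∧ x < 1/((j:ℝ)-1))) : ℝ) * (1/((j:ℝ)-1)))
      ≤ 2 * ((∑ j ∈ Finset.Icc 2 k,
        ((I.countP fun x => decide ((1:ℝ)/(j:ℝ) ≤ x ∧ x < 1/((j:ℝ)-1))) / j : ℕ)) : ℝ)
        + ((k:ℝ) - 1) := by
    calc _ ≤ ∑ j ∈ Finset.Icc 2 k,
        (2 * (((I.countP fun x => decide ((1:ℝ)/(j:ℝ) ≤ x ∧ x < 1/((j:ℝ)-1))) / j : ℕ) : ℝ) + 1) :=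
          Finset.sum_le_sum h3
    _ = 2 * (∑ j ∈ Finset.Icc 2 k,
        (((I.countP fun x => decide ((1:ℝ)/(j:ℝ) ≤ x ∧ x < 1/((j:ℝ)-1))) / j : ℕ) : ℝ))
        + (Finset.Icc 2 k).card := by
        rw [Finset.sum_add_distrib, Finset.mul_sum, Finset.sum_const, nsmul_eq_mul, mul_one]
    _ = _ := by
        rw [Nat.card_Icc]
        have h5 : k + 1 - 2 = k - 1 := by omega
        rw [h5, Nat.cast_sub (by omega : 1 ≤ k), Nat.cast_one]
  unfold dhCount
  push_cast
  linarith

lemma dnf_replicate_aux (s : ℝ) (hs : 1/2 ≤ s) (hs1 : s < 1) :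
    ∀ m c, ((List.replicate m s).foldl dnfStep (0, c)).2 = c + m / 2 := by
  have key : ∀ m, ∀ c, ((List.replicate m s).foldl dnfStep (0, c)).2 = c + m / 2 := by
    intro m
    induction m using Nat.strong_induction_on with
    | _ m ih =>
      match m with
      | 0 => intro c; simp
      | 1 =>
        intro c
        simp only [List.replicate_succ, List.replicate_zero, List.foldl_cons, List.foldl_nil]
        rw [dnfStep, if_neg (by simp; linarith)]
        simp
      | (m+2) =>
        intro c
        simp only [List.replicate_succ, List.foldl_cons]
        rw [show dnfStep (0, c) s = (s, c) from by rw [dnfStep, if_neg (by simp; linarith)]; simp]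
        rw [show dnfStep (s, c) s = (0, c+1) from by rw [dnfStep, if_pos (by simp; linarith)]]
        rw [ih m (by omega) (c+1)]
        omega
  exact key

lemma dnf_replicate (n : ℕ) (s : ℝ) (hs : 1/2 ≤ s) (hs1 : s < 1) :
    dnfCount (List.replicate n s) = n / 2 := by
  unfold dnfCount
  rw [dnf_replicate_aux s hs hs1 n 0]
  omega

lemma countP_repl (p : ℝ → Bool) (a : ℝ) (n : ℕ) :
    (List.replicate n a).countP p = if p a then n else 0 := by
  induction n with
  | zero => simp
  | succ m ih => rw [List.replicate_succ, List.countP_cons, ih]; by_cases h : p a <;> simp [h]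

lemma filter_repl (p : ℝ → Bool) (a : ℝ) (h : p a = false) (n : ℕ) :
    (List.replicate n a).filter p = [] := by
  induction n with
  | zero => simp
  | succ m ih => rw [List.replicate_succ, List.filter_cons, h]; simpa using ih

lemma dh_replicate (k : ℕ) (hk : 2 ≤ k) (n : ℕ) (s : ℝ) (hs : 1/2 ≤ s) (hs1 : s < 1) :
    dhCount k (List.replicate n s) = n / 2 := by
  unfold dhCount
  have hkR : (2:ℝ) ≤ (k:ℝ) := by exact_mod_cast hk
  have hfil : (List.replicate n s).filter (fun x => decide (x < 1/(k:ℝ))) = [] := by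
    apply filter_repl
    simp only [decide_eq_false_iff_not, not_lt]
    calc (1:ℝ)/(k:ℝ) ≤ 1/2 := by
          apply one_div_le_one_div_of_le <;> linarith
    _ ≤ s := hs
  rw [hfil]
  have hdnf0 : dnfCount ([] : List ℝ) = 0 := by simp [dnfCount]
  rw [hdnf0, add_zero]
  have hterm : ∀ j ∈ Finset.Icc 2 k,
      ((List.replicate n s).countP fun x => decide ((1:ℝ)/(j:ℝ) ≤ x ∧ x < 1/((j:ℝ)-1))) / j
      = if j = 2 then n / 2 else 0 := by
    intro j hj
    obtain ⟨hj2, hjk⟩ := Finset.mem_Icc.mp hj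
    rw [countP_repl]
    by_cases h2 : j = 2
    · subst h2
      rw [if_pos, if_pos rfl]
      simp only [decide_eq_true_eq]
      norm_num
      exact ⟨hs, hs1⟩
    · have hj3 : 3 ≤ j := by omega
      have hj3R : (3:ℝ) ≤ (j:ℝ) := by exact_mod_cast hj3
      rw [if_neg, if_neg h2]
      · simp
      · simp only [decide_eq_true_eq, not_and, not_lt]
        intro _
        calc (1:ℝ)/((j:ℝ)-1) ≤ 1/2 := by
              apply one_div_le_one_div_of_le <;> linarith
        _ ≤ s := hs
  rw [Finset.sum_congr rfl hterm, Finset.sum_ite_eq' (Finset.Icc 2 k) 2 (fun _ => n/2)]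
  rw [if_pos (Finset.mem_Icc.mpr ⟨le_refl 2, hk⟩)]

lemma opt_replicate (n : ℕ) (s : ℝ) (hs0 : 0 < s) (hs1 : s < 1) :
    optCount (List.replicate n s) ≤ n / 2 := by
  unfold optCount
  apply Finset.sup_le
  intro f _
  have hNn : (List.replicate n s).length = n := by simp
  set B := (Finset.univ.filter fun b : Fin (List.replicate n s).length =>
      1 ≤ ∑ i ∈ Finset.univ.filter (fun i => f i = b), (List.replicate n s).get i) with hB
  show B.card ≤ n / 2
  have hget : ∀ i : Fin (List.replicate n s).length, (List.replicate n s).get i = s := by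
    intro i
    simp [List.get_eq_getElem, List.getElem_replicate]
  have hfib : ∀ b ∈ B, 2 ≤ (Finset.univ.filter (fun i => f i = b)).card := by
    intro b hb
    rw [hB, Finset.mem_filter] at hb
    obtain ⟨-, hb1⟩ := hb
    by_contra hlt
    push_neg at hlt
    have hcard : (Finset.univ.filter (fun i => f i = b)).card ≤ 1 := by omega
    have : ∑ i ∈ Finset.univ.filter (fun i => f i = b), (List.replicate n s).get i
        = (Finset.univ.filter (fun i => f i = b)).card • s := by
      rw [Finset.sum_congr rfl (fun i _ => hget i), Finset.sum_const]
    rw [this] at hb1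
    have : ((Finset.univ.filter (fun i => f i = b)).card : ℝ) * s ≤ 1 * s := by
      apply mul_le_mul_of_nonneg_right _ (le_of_lt hs0)
      exact_mod_cast hcard
    rw [nsmul_eq_mul] at hb1
    linarith
  have hdisj : ∑ b ∈ B, (Finset.univ.filter (fun i => f i = b)).card ≤ n := by
    have hfw : (Finset.univ.filter (fun i : Fin (List.replicate n s).length => f i ∈ B)).card
        = ∑ b ∈ B, ((Finset.univ.filter (fun i : Fin (List.replicate n s).length => f i ∈ B)).filter (fun i => f i = b)).card := by
      apply Finset.card_eq_sum_card_fiberwise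
      intro i hi
      exact (Finset.mem_filter.mp hi).2
    have heq : ∀ b ∈ B, ((Finset.univ.filter (fun i : Fin (List.replicate n s).length => f i ∈ B)).filter (fun i => f i = b)).card
        = (Finset.univ.filter (fun i : Fin (List.replicate n s).length => f i = b)).card := by
      intro b hb
      congr 1
      ext i
      simp only [Finset.mem_filter, Finset.mem_univ, true_and]
      constructor
      · rintro ⟨-, h2⟩; exact h2
      · intro h; exact ⟨h ▸ hb, h⟩
    rw [Finset.sum_congr rfl heq] at hfw
    rw [← hfw]
    calc _ ≤ (Finset.univ : Finset (Fin (List.replicate n s).length)).card := Finset.card_le_card (Finset.filter_subset _ _)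
    _ = n := by simp
  have h2B : 2 * B.card ≤ n := by
    calc 2 * B.card = ∑ _b ∈ B, 2 := by rw [Finset.sum_const, smul_eq_mul, mul_comm]
    _ ≤ ∑ b ∈ B, (Finset.univ.filter (fun i => f i = b)).card := Finset.sum_le_sum hfib
    _ ≤ n := hdisj
  omega

lemma tendsto_aux (d : ℝ) : Tendsto (fun v : ℝ => (v + d)/(2*v)) atTop (𝓝 (1/2)) := by
  have h1 : Tendsto (fun v : ℝ => 1/2 + (d/2) * v⁻¹) atTop (𝓝 (1/2 + (d/2) * 0)) :=
    tendsto_const_nhds.add (tendsto_inv_atTop_zero.const_mul _)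
  rw [mul_zero, add_zero] at h1
  apply h1.congr'
  filter_upwards [eventually_ge_atTop (1:ℝ)] with v hv
  have hv0 : v ≠ 0 := by linarith
  field_simp

lemma minRate_eq (A : List ℝ → ℕ) (c : ℝ) (hc : 0 ≤ c)
    (hlow : ∀ I : List ℝ, (∀ x ∈ I, x ∈ Set.Ioo (0:ℝ) 1) → vol I - c ≤ 2 * (A I : ℝ))
    (hup : ∀ (n : ℕ) (s : ℝ), 1/2 ≤ s → s < 1 → (A (List.replicate n s) : ℝ) ≤ (n:ℝ) / 2) :
    minRate (Set.Ioo 0 1) A = 1/2 := by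
  have key : ∀ v : ℝ, 2 ≤ v →
      (v - c)/(2*v) ≤ sInf {r : ℝ | ∃ I : List ℝ, (∀ x ∈ I, x ∈ Set.Ioo (0:ℝ) 1) ∧ vol I = v ∧ r = (A I : ℝ) / v}
      ∧ sInf {r : ℝ | ∃ I : List ℝ, (∀ x ∈ I, x ∈ Set.Ioo (0:ℝ) 1) ∧ vol I = v ∧ r = (A I : ℝ) / v}
        ≤ (v + 2)/(2*v) := by
    intro v hv
    have hv0 : (0:ℝ) < v := by linarith
    set n : ℕ := ⌈v⌉₊ + 1 with hn
    have hceil : v ≤ (⌈v⌉₊ : ℝ) := Nat.le_ceil v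
    have hceil2 : (⌈v⌉₊ : ℝ) < v + 1 := Nat.ceil_lt_add_one (le_of_lt hv0)
    have hnv : v < (n:ℝ) := by push_cast [hn]; linarith
    have hnv2 : (n:ℝ) < v + 2 := by push_cast [hn]; linarith
    have hnpos : (0:ℝ) < (n:ℝ) := by linarith
    set s : ℝ := v / (n:ℝ) with hs
    have hs1 : s < 1 := by rw [hs, div_lt_one hnpos]; exact hnv
    have hs0 : 0 < s := by positivity
    have hshalf : 1/2 ≤ s := by
      rw [hs, le_div_iff₀ hnpos]
      linarith
    have hvol : vol (List.replicate n s) = v := by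
      rw [vol, List.sum_replicate, nsmul_eq_mul, hs]
      field_simp
    have hmem : (A (List.replicate n s) : ℝ) / v ∈
        {r : ℝ | ∃ I : List ℝ, (∀ x ∈ I, x ∈ Set.Ioo (0:ℝ) 1) ∧ vol I = v ∧ r = (A I : ℝ) / v} := by
      refine ⟨List.replicate n s, ?_, hvol, rfl⟩
      intro x hx
      rw [List.eq_of_mem_replicate hx]
      exact Set.mem_Ioo.mpr ⟨hs0, hs1⟩
    have hbdd : ∀ r ∈ {r : ℝ | ∃ I : List ℝ, (∀ x ∈ I, x ∈ Set.Ioo (0:ℝ) 1) ∧ vol I = v ∧ r = (A I : ℝ) / v},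
        (v - c)/(2*v) ≤ r := by
      rintro r ⟨I, hI, hIvol, rfl⟩
      have := hlow I hI
      rw [hIvol] at this
      rw [div_le_div_iff₀ (by linarith) hv0]
      nlinarith [(Nat.cast_nonneg (A I) : (0:ℝ) ≤ (A I : ℝ))]
    constructor
    · exact le_csInf ⟨_, hmem⟩ hbdd
    · have h1 : sInf _ ≤ (A (List.replicate n s) : ℝ) / v :=
        csInf_le ⟨(v - c)/(2*v), hbdd⟩ hmem
      refine le_trans h1 ?_
      have h2 : (A (List.replicate n s) : ℝ) ≤ (n:ℝ)/2 := hup n s hshalf hs1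
      rw [div_le_div_iff₀ hv0 (by linarith)]
      nlinarith
  have t1 : Tendsto (fun v : ℝ => (v + (-c))/(2*v)) atTop (𝓝 (1/2)) := tendsto_aux (-c)
  have t2 : Tendsto (fun v : ℝ => (v + 2)/(2*v)) atTop (𝓝 (1/2)) := tendsto_aux 2
  have hT : Tendsto (fun v : ℝ =>
      sInf {r : ℝ | ∃ I : List ℝ, (∀ x ∈ I, x ∈ Set.Ioo (0:ℝ) 1) ∧ vol I = v ∧ r = (A I : ℝ) / v})
      atTop (𝓝 (1/2)) := by
    apply tendsto_of_tendsto_of_tendsto_of_le_of_le' t1 t2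
    · filter_upwards [eventually_ge_atTop (2:ℝ)] with v hv
      have := (key v hv).1
      rwa [show v + (-c) = v - c by ring]
    · filter_upwards [eventually_ge_atTop (2:ℝ)] with v hv
      exact (key v hv).2
  unfold minRate
  exact hT.liminf_eq

/-- Both DNF and `DH_k` (for every `k ≥ 2`) have min/min ratio 1; in particular,
`liminf_{v→∞} inf{DNF(I)/v : vol I = v} = liminf_{v→∞} inf{DH_k(I)/v : vol I = v}
 = liminf_{v→∞} inf{Opt(I)/v : vol I = v} = 1/2`. -/
theorem minmin_general (k : ℕ) (hk : 2 ≤ k) :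
    minRate (Set.Ioo 0 1) dnfCount = 1/2 ∧
    minRate (Set.Ioo 0 1) (dhCount k) = 1/2 ∧
    minRate (Set.Ioo 0 1) optCount = 1/2 ∧
    minRate (Set.Ioo 0 1) dnfCount / minRate (Set.Ioo 0 1) optCount = 1 ∧
    minRate (Set.Ioo 0 1) (dhCount k) / minRate (Set.Ioo 0 1) optCount = 1 := by
  have hk1R : (1:ℝ) ≤ (k:ℝ) := by exact_mod_cast (by omega : 1 ≤ k)
  have hcast : ∀ n : ℕ, ((n / 2 : ℕ) : ℝ) ≤ (n:ℝ) / 2 := by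
    intro n
    have := Nat.cast_div_le (α := ℝ) (m := n) (n := 2)
    simpa using this
  have hdnf : minRate (Set.Ioo 0 1) dnfCount = 1/2 := by
    apply minRate_eq dnfCount (k:ℝ) (by positivity)
    · intro I hI
      have := dnf_sum_le I (fun x hx => Set.mem_Ioo.mp (hI x hx))
      rw [vol]; linarith
    · intro n s h1 h2
      rw [dnf_replicate n s h1 h2]
      exact hcast n
  have hdh : minRate (Set.Ioo 0 1) (dhCount k) = 1/2 := by
    apply minRate_eq (dhCount k) (k:ℝ) (by positivity)
    · intro I hI
      have := dh_sum_le k hk I (fun x hx => Set.mem_Ioo.mp (hI x hx))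
      rw [vol]; linarith
    · intro n s h1 h2
      rw [dh_replicate k hk n s h1 h2]
      exact hcast n
  have hopt : minRate (Set.Ioo 0 1) optCount = 1/2 := by
    apply minRate_eq optCount (k:ℝ) (by positivity)
    · intro I hI
      have h1 := dnf_sum_le I (fun x hx => Set.mem_Ioo.mp (hI x hx))
      have h2 : (dnfCount I : ℝ) ≤ (optCount I : ℝ) := by
        exact_mod_cast dnf_le_opt I
      rw [vol]; linarith
    · intro n s h1 h2
      have h3 : optCount (List.replicate n s) ≤ n / 2 :=
        opt_replicate n s (by linarith) h2
      calc (optCount (List.replicate n s) : ℝ) ≤ ((n / 2 : ℕ) : ℝ) := by exact_mod_cast h3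
      _ ≤ (n:ℝ)/2 := hcast n
  exact ⟨hdnf, hdh, hopt, by rw [hdnf, hopt]; norm_num, by rw [hdh, hopt]; norm_num⟩
end

section
/- Let (a,b) ⊆ (0,1) be an interval containing at least one point of the form 1/l with integer l ≥ 2, let 1/p = max{1/l : l ∈ ℕ, 1/l < b} be the maximal such partitioning point in (a,b), assume a < 1/p, and let k ≥ p. Then DH_k restricted to input sequences with all item sizes in (a,b) has min/min ratio 1. -/
open Filter MeasureTheory

/-- B1 aux -/
lemma dnf_aux (m : ℝ) : ∀ (L : List ℝ), (∀ x ∈ L, 0 ≤ x ∧ x ≤ m) → ∀ (ℓ : ℝ) (c : ℕ),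
    0 ≤ ℓ → ℓ < 1 →
    0 ≤ (L.foldl dnfStep (ℓ, c)).1 ∧ (L.foldl dnfStep (ℓ, c)).1 < 1 ∧
      L.sum + ℓ + (1+m) * c ≤ (L.foldl dnfStep (ℓ, c)).1 + (1+m) * ((L.foldl dnfStep (ℓ, c)).2) := by
  intro L
  induction L with
  | nil =>
    intro _ ℓ c h0 h1
    simp only [List.foldl_nil, List.sum_nil]
    exact ⟨h0, h1, by linarith⟩
  | cons x L ih =>
    intro hmem ℓ c h0 h1
    have hx := hmem x List.mem_cons_self
    have hL : ∀ y ∈ L, 0 ≤ y ∧ y ≤ m := fun y hy => hmem y (List.mem_cons_of_mem _ hy)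
    simp only [List.foldl_cons, List.sum_cons, dnfStep]
    by_cases hc : 1 ≤ ℓ + x
    · simp only [hc, if_pos]
      have := ih hL 0 (c+1) le_rfl one_pos
      refine ⟨this.1, this.2.1, ?_⟩
      have h2 := this.2.2
      push_cast at h2 ⊢
      nlinarith [hx.1, hx.2]
    · simp only [hc, if_neg, not_false_iff]
      have := ih hL (ℓ + x) c (by linarith [hx.1]) (by linarith [not_le.mp hc])
      refine ⟨this.1, this.2.1, ?_⟩
      have h2 := this.2.2
      linarith

lemma dnf_sum_le_s14 (m : ℝ) (L : List ℝ) (h : ∀ x ∈ L, 0 ≤ x ∧ x ≤ m) :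
    L.sum ≤ (1+m) * dnfCount L + 1 := by
  have := (dnf_aux m L h 0 0 le_rfl one_pos).2
  simp only [Nat.cast_zero, mul_zero, add_zero] at this
  have h1 := this.1
  have h2 := this.2
  simp only [dnfCount]
  linarith

/-- B2: on `n` copies of `s` with `q*s < 1`, each closed bin takes `≥ q+1` items. -/
lemma dnf_rep_aux (s : ℝ) (q : ℕ) (hs : 0 < s) (hq : (q:ℝ) * s < 1) :
    ∀ (n j c : ℕ), (j:ℝ) * s < 1 →
      ((List.replicate n s).foldl dnfStep ((j:ℝ)*s, c)).2 * (q+1) ≤ c*(q+1) + j + n := by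
  intro n
  induction n with
  | zero => intro j c _; simp
  | succ n ih =>
    intro j c hj
    rw [List.replicate_succ, List.foldl_cons]
    simp only [dnfStep]
    by_cases hc : 1 ≤ (j:ℝ)*s + s
    · simp only [hc, if_pos]
      have hjq : q ≤ j := by
        by_contra hlt
        push_neg at hlt
        have : (j:ℝ) + 1 ≤ q := by exact_mod_cast hlt
        nlinarith
      have := ih 0 (c+1) (by simpa using one_pos)
      simp only [Nat.cast_zero, zero_mul] at this
      calc ((List.replicate n s).foldl dnfStep (0, c+1)).2 * (q+1)
          ≤ (c+1)*(q+1) + 0 + n := this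
        _ ≤ c*(q+1) + j + (n+1) := by ring_nf; omega
    · simp only [hc, if_neg, not_false_iff]
      have hx : ((j:ℝ)+1) * s < 1 := by push_neg at hc; linarith [hc]
      have := ih (j+1) c (by exact_mod_cast hx)
      have e : ((j:ℝ)+1)*s = (j:ℝ)*s + s := by ring
      rw [Nat.cast_add, Nat.cast_one, e] at this
      omega

lemma dnf_rep (s : ℝ) (q n : ℕ) (hs : 0 < s) (hq : (q:ℝ) * s < 1) :
    dnfCount (List.replicate n s) * (q+1) ≤ n := by
  have := dnf_rep_aux s q hs hq n 0 0 (by simpa using one_pos)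
  simpa [dnfCount] using this

/-- B3: counter is monotone. -/
lemma dnf_counter_mono (L : List ℝ) : ∀ st : ℝ × ℕ, st.2 ≤ (L.foldl dnfStep st).2 := by
  induction L with
  | nil => intro st; simp
  | cons x L ih =>
    intro st
    rw [List.foldl_cons]
    refine le_trans ?_ (ih (dnfStep st x))
    simp only [dnfStep]
    split <;> simp

noncomputable def binOf (J : List ℝ) (r : ℕ) : ℕ := ((J.take r).foldl dnfStep (0,0)).2

noncomputable def stOf (J : List ℝ) (t : ℕ) : ℝ × ℕ := (J.take t).foldl dnfStep (0,0)

lemma stOf_succ (J : List ℝ) (t : ℕ) (ht : t < J.length) :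
    stOf J (t+1) = dnfStep (stOf J t) (J.getD t 0) := by
  simp only [stOf]
  rw [List.take_succ, List.foldl_append]
  congr 1
  rw [List.getD_eq_getElem J 0 ht]
  simp [List.getElem?_eq_getElem ht]

lemma binOf_mono (J : List ℝ) {r t : ℕ} (h : r ≤ t) : binOf J r ≤ binOf J t := by
  simp only [binOf]
  conv_rhs => rw [← List.take_append_drop r (J.take t)]
  rw [List.foldl_append, List.take_take, min_eq_left h]
  exact dnf_counter_mono _ _

lemma dnf_groups (J : List ℝ) (hpos : ∀ x ∈ J, 0 ≤ x) :
    ∀ t ≤ J.length,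
      (0 ≤ (stOf J t).1) ∧
      (∀ c < (stOf J t).2, 1 ≤ ∑ r ∈ Finset.range t, if binOf J r = c then J.getD r 0 else 0) ∧
      (∑ r ∈ Finset.range t, if binOf J r = (stOf J t).2 then J.getD r 0 else 0) = (stOf J t).1 := by
  intro t
  induction t with
  | zero =>
    intro _
    refine ⟨by simp [stOf], ?_, by simp [stOf]⟩
    intro c hc
    simp only [stOf, List.take_zero, List.foldl_nil] at hc
    omega
  | succ t ih =>
    intro ht
    obtain ⟨h0, hgr, hcur⟩ := ih (by omega)
    have htl : t < J.length := ht
    have hx : 0 ≤ J.getD t 0 := by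
      rw [List.getD_eq_getElem J 0 htl]
      exact hpos _ (List.getElem_mem htl)
    have hbt : binOf J t = (stOf J t).2 := rfl
    have hbmono : ∀ r, r ≤ t → binOf J r ≤ (stOf J t).2 := fun r hr => binOf_mono J hr
    rw [stOf_succ J t htl]
    simp only [dnfStep]
    by_cases hc : 1 ≤ (stOf J t).1 + J.getD t 0
    · simp only [hc, if_pos]
      refine ⟨le_rfl, ?_, ?_⟩
      · intro c hcy
        rw [Finset.sum_range_succ]
        rcases Nat.lt_succ_iff_lt_or_eq.mp hcy with h | h
        · have := hgr c h
          have hne : ¬ (binOf J t = c) := by omega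
          rw [if_neg hne]
          linarith
        · subst h
          rw [if_pos hbt, hcur]
          linarith
      · have hz : ∀ r ∈ Finset.range (t+1), (if binOf J r = (stOf J t).2 + 1 then J.getD r 0 else 0) = 0 := by
          intro r hr
          have hr' : binOf J r ≤ (stOf J t).2 := hbmono r (by simpa [Nat.lt_succ_iff] using hr)
          rw [if_neg (by omega)]
        simpa using Finset.sum_eq_zero hz
    · simp only [hc, if_neg, not_false_iff]
      refine ⟨by linarith, ?_, ?_⟩
      · intro c hcy
        rw [Finset.sum_range_succ]
        have := hgr c hcy
        have hne : ¬ (binOf J t = c) := by omega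
        rw [if_neg hne]
        linarith
      · rw [Finset.sum_range_succ, if_pos hbt, hcur]

lemma dnf_groups_final (J : List ℝ) (hpos : ∀ x ∈ J, 0 ≤ x) :
    ∀ c < dnfCount J, 1 ≤ ∑ r ∈ Finset.range J.length, if binOf J r = c then J.getD r 0 else 0 := by
  intro c hc
  have := (dnf_groups J hpos J.length le_rfl).2.1 c (by simpa [stOf, dnfCount, List.take_length] using hc)
  exact this


open Classical in
lemma opt_bridge (I : List ℝ) (hpos : ∀ x ∈ I, 0 ≤ x) (g : Fin I.length → ℕ) (t : ℕ)
    (hg : ∀ c < t, 1 ≤ ∑ i ∈ Finset.univ.filter (fun i => g i = c), I.get i) :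
    t ≤ optCount I := by
  rcases Nat.eq_zero_or_pos t with rfl | ht
  · exact Nat.zero_le _
  have hne : ∀ c : Fin t, ∃ i : Fin I.length, g i = (c : ℕ) := by
    intro c
    by_contra hcon
    push_neg at hcon
    have := hg c c.2
    have he : Finset.univ.filter (fun i => g i = (c:ℕ)) = ∅ := by
      apply Finset.filter_eq_empty_iff.mpr
      intro i _
      exact hcon i
    rw [he] at this
    simp at this
    linarith
  set rep : Fin t → Fin I.length := fun c => (hne c).choose with hrep
  have hrepg : ∀ c, g (rep c) = (c : ℕ) := fun c => (hne c).choose_spec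
  have hrepinj : Function.Injective rep := by
    intro c c' h
    have : (c : ℕ) = (c' : ℕ) := by rw [← hrepg c, ← hrepg c', h]
    exact Fin.ext this
  set f : Fin I.length → Fin I.length := fun i =>
    if h : g i < t then rep ⟨g i, h⟩ else rep ⟨0, ht⟩ with hf
  have hsub : ∀ c : Fin t,
      Finset.univ.filter (fun i => g i = (c : ℕ)) ⊆ Finset.univ.filter (fun i => f i = rep c) := by
    intro c i hi
    simp only [Finset.mem_filter, Finset.mem_univ, true_and] at hi ⊢
    have hlt : g i < t := hi ▸ c.2
    show (if h : g i < t then rep ⟨g i, h⟩ else rep ⟨0, ht⟩) = rep c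
    rw [dif_pos hlt]
    congr 1
    exact Fin.ext hi
  have hcov : ∀ c : Fin t, rep c ∈
      Finset.univ.filter (fun b : Fin I.length =>
        1 ≤ ∑ i ∈ Finset.univ.filter (fun i => f i = b), I.get i) := by
    intro c
    simp only [Finset.mem_filter, Finset.mem_univ, true_and]
    refine le_trans (hg c c.2) (Finset.sum_le_sum_of_subset_of_nonneg (hsub c) ?_)
    intro i _ _
    exact hpos _ (List.get_mem I i)
  have himg : (Finset.univ.image rep) ⊆
      Finset.univ.filter (fun b : Fin I.length =>
        1 ≤ ∑ i ∈ Finset.univ.filter (fun i => f i = b), I.get i) := by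
    intro x hx
    rcases Finset.mem_image.mp hx with ⟨c, _, rfl⟩
    exact hcov c
  have hcard : t ≤ (Finset.univ.filter (fun b : Fin I.length =>
      1 ≤ ∑ i ∈ Finset.univ.filter (fun i => f i = b), I.get i)).card := by
    calc t = (Finset.univ : Finset (Fin t)).card := by simp
      _ = (Finset.univ.image rep).card := (Finset.card_image_of_injective _ hrepinj).symm
      _ ≤ _ := Finset.card_le_card himg
  refine le_trans hcard ?_
  exact Finset.le_sup (f := fun f : Fin I.length → Fin I.length =>
    (Finset.univ.filter fun b : Fin I.length =>
      1 ≤ ∑ i ∈ Finset.univ.filter (fun i => f i = b), I.get i).card) (Finset.mem_univ f)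

lemma dnf_desc_aux (b M : ℝ) (p : ℕ) (hp : 0 < p) (hM1 : 1 + 1/(p:ℝ) ≤ M) (hM2 : (p:ℝ)*b ≤ M) :
    ∀ L : List ℝ, L.Pairwise (fun x y => y ≤ x) → (∀ x ∈ L, 0 < x ∧ x < b) →
    ∀ (ℓ : ℝ) (c m : ℕ), 0 ≤ ℓ → ℓ < 1 → ℓ ≤ (m:ℝ)*b → (∀ y ∈ L, (m:ℝ)*y ≤ ℓ) →
    L.sum + ℓ + M*c ≤ 1 + M*((L.foldl dnfStep (ℓ,c)).2) := by
  intro L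
  induction L with
  | nil =>
    intro _ _ ℓ c m h0 h1 _ _
    simp only [List.foldl_nil, List.sum_nil]
    linarith
  | cons x L ih =>
    intro hpair hmem ℓ c m h0 h1 hmb hml
    have hx := hmem x List.mem_cons_self
    have hb0 : 0 < b := lt_trans hx.1 hx.2
    have hL : ∀ y ∈ L, 0 < y ∧ y < b := fun y hy => hmem y (List.mem_cons_of_mem _ hy)
    have hpair' : L.Pairwise (fun x y => y ≤ x) := (List.pairwise_cons.mp hpair).2
    have hhead : ∀ y ∈ L, y ≤ x := (List.pairwise_cons.mp hpair).1
    simp only [List.foldl_cons, List.sum_cons, dnfStep]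
    by_cases hc : 1 ≤ ℓ + x
    · simp only [hc, if_pos]
      have hclose : ℓ + x ≤ M := by
        by_cases hxp : x < 1/(p:ℝ)
        · linarith
        · push_neg at hxp
          have hp0 : (0:ℝ) < p := by exact_mod_cast hp
          have hmx : (m:ℝ)*x ≤ ℓ := hml x List.mem_cons_self
          have hmlt : (m:ℝ) < p := by
            by_contra hge
            push_neg at hge
            have : (p:ℝ) * (1/p) ≤ (m:ℝ) * x := by
              apply mul_le_mul hge hxp (by positivity) (le_of_lt (lt_of_lt_of_le hp0 hge))
            rw [mul_one_div_cancel (ne_of_gt hp0)] at this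
            linarith
          have hm1 : (m:ℝ) + 1 ≤ p := by
            have : m + 1 ≤ p := by exact_mod_cast Nat.lt_iff_add_one_le.mp (by exact_mod_cast hmlt)
            exact_mod_cast this
          have : ℓ + x ≤ ((m:ℝ)+1)*b := by nlinarith [hx.2]
          calc ℓ + x ≤ ((m:ℝ)+1)*b := this
            _ ≤ (p:ℝ)*b := by nlinarith
            _ ≤ M := hM2
      have := ih hpair' hL 0 (c+1) 0 le_rfl one_pos (by simp [le_of_lt hb0]) (by simp)
      push_cast at this ⊢
      linarith
    · simp only [hc, if_neg, not_false_iff]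
      push_neg at hc
      have := ih hpair' hL (ℓ + x) c (m+1) (by linarith [hx.1]) hc
        (by push_cast; nlinarith [hx.2])
        (by
          intro y hy
          have h1y : (m:ℝ)*y ≤ ℓ := hml y (List.mem_cons_of_mem _ hy)
          have h2y : y ≤ x := hhead y hy
          push_cast
          nlinarith)
      linarith

lemma opt_lower (b M : ℝ) (p : ℕ) (hp : 0 < p) (hM1 : 1 + 1/(p:ℝ) ≤ M)
    (hM2 : (p:ℝ)*b ≤ M) (I : List ℝ) (hI : ∀ x ∈ I, 0 < x ∧ x < b) :
    I.sum ≤ 1 + M * optCount I := by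
  classical
  set n := I.length with hn
  set σ : Equiv.Perm (Fin n) := Tuple.sort (fun i => -I.get i) with hσ
  have hanti : ∀ r s : Fin n, r ≤ s → I.get (σ s) ≤ I.get (σ r) := by
    intro r s hrs
    have := Tuple.monotone_sort (fun i => -I.get i) hrs
    simp only [Function.comp_apply] at this
    simpa [hσ] using this
  set J : List ℝ := List.ofFn (fun r : Fin n => I.get (σ r)) with hJ
  have hJlen : J.length = n := by simp [hJ]
  have hJmem : ∀ x ∈ J, 0 < x ∧ x < b := by
    intro x hx
    rw [hJ, List.mem_ofFn] at hx
    rcases hx with ⟨r, rfl⟩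
    exact hI _ (List.get_mem I _)
  have hJpair : J.Pairwise (fun x y => y ≤ x) := by
    rw [hJ, List.pairwise_ofFn]
    intro i j hij
    exact hanti i j (le_of_lt hij)
  have hJsum : J.sum = I.sum := by
    rw [hJ, List.sum_ofFn, Equiv.sum_comp σ (fun i => I.get i)]
    conv_rhs => rw [← List.ofFn_get I, List.sum_ofFn]
  have hgetD : ∀ r : Fin n, J.getD (r:ℕ) 0 = I.get (σ r) := by
    intro r
    have hr : (r:ℕ) < J.length := by rw [hJlen]; exact r.2
    rw [List.getD_eq_getElem _ _ hr]
    simp [hJ]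
  -- the grouping
  set g : Fin I.length → ℕ := fun i => binOf J (σ.symm i) with hg
  have hgroups : ∀ c < dnfCount J, 1 ≤ ∑ i ∈ Finset.univ.filter (fun i => g i = c), I.get i := by
    intro c hcy
    have h1 : ∑ i ∈ Finset.univ.filter (fun i => g i = c), I.get i
        = ∑ i : Fin n, if g i = c then I.get i else 0 := by
      rw [Finset.sum_filter]
    have h2 : ∑ i : Fin n, (if g i = c then I.get i else 0)
        = ∑ r : Fin n, (if binOf J (r:ℕ) = c then J.getD (r:ℕ) 0 else 0) := by
      apply Fintype.sum_equiv σ.symm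
      intro i
      simp only [hg]
      rw [hgetD (σ.symm i), Equiv.apply_symm_apply]
    have h3 : ∑ r : Fin n, (if binOf J (r:ℕ) = c then J.getD (r:ℕ) 0 else 0)
        = ∑ r ∈ Finset.range J.length, (if binOf J r = c then J.getD r 0 else 0) := by
      rw [hJlen]
      exact Fin.sum_univ_eq_sum_range (fun r => if binOf J r = c then J.getD r 0 else 0) n
    rw [h1, h2, h3]
    exact dnf_groups_final J (fun x hx => le_of_lt (hJmem x hx).1) c hcy
  have hopt : dnfCount J ≤ optCount I :=
    opt_bridge I (fun x hx => le_of_lt (hI x hx).1) g (dnfCount J) hgroups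
  have hsum : J.sum + 0 + M*(0:ℕ) ≤ 1 + M*((J.foldl dnfStep (0,0)).2) := by
    apply dnf_desc_aux b M p hp hM1 hM2 J hJpair hJmem 0 0 0 le_rfl one_pos (by simp) (by simp)
  have hM0 : 0 ≤ M := by
    have : (0:ℝ) < 1 + 1/p := by positivity
    linarith
  have : I.sum ≤ 1 + M * dnfCount J := by
    rw [← hJsum]
    simpa [dnfCount] using hsum
  calc I.sum ≤ 1 + M * dnfCount J := this
    _ ≤ 1 + M * optCount I := by
        have := hopt
        have : (dnfCount J : ℝ) ≤ optCount I := by exact_mod_cast hopt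
        nlinarith


lemma class_uniq (x : ℝ) (hx0 : 0 < x) (j : ℕ) (hj : 2 ≤ j)
    (h : (1:ℝ)/(j:ℝ) ≤ x ∧ x < 1/((j:ℝ)-1)) : j = ⌈1/x⌉₊ := by
  have hj0 : (0:ℝ) < j := by positivity
  have hj1 : (0:ℝ) < (j:ℝ) - 1 := by
    have : (2:ℝ) ≤ j := by exact_mod_cast hj
    linarith
  have h1 : 1/x ≤ (j:ℝ) := by
    rw [div_le_iff₀ hx0]
    have := (div_le_iff₀ hj0).mp h.1
    linarith
  have h2 : (j:ℝ) - 1 < 1/x := by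
    have := h.2
    rw [lt_div_iff₀ hj1] at this
    rw [lt_div_iff₀ hx0]
    linarith
  symm
  rw [Nat.ceil_eq_iff (by omega)]
  constructor
  · have : ((j - 1 : ℕ):ℝ) = (j:ℝ) - 1 := by
      have : 1 ≤ j := by omega
      push_cast [this]; ring
    rw [this]; exact h2
  · exact h1

lemma class_item (k p : ℕ) (M b : ℝ) (hp : 2 ≤ p) (hk : p ≤ k)
    (hM1 : 1 + 1/(p:ℝ) ≤ M) (hM2 : (p:ℝ)*b ≤ M) (hbp : b ≤ 1/((p:ℝ)-1))
    (x : ℝ) (hx0 : 0 < x) (hxb : x < b) (hx1 : x < 1) (hxk : 1/(k:ℝ) ≤ x) :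
    ∃ j ∈ Finset.Icc 2 k, ((1:ℝ)/(j:ℝ) ≤ x ∧ x < 1/((j:ℝ)-1)) ∧ (j:ℝ)*x ≤ M := by
  have hk0 : (0:ℝ) < k := by
    have : (2:ℕ) ≤ k := le_trans hp hk
    exact_mod_cast Nat.lt_of_lt_of_le Nat.zero_lt_two this
  have hp0 : (0:ℝ) < p := by
    have : (2:ℕ) ≤ p := hp
    exact_mod_cast Nat.lt_of_lt_of_le Nat.zero_lt_two this
  have hp1 : (1:ℝ) ≤ (p:ℝ) - 1 := by
    have : (2:ℝ) ≤ p := by exact_mod_cast hp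
    linarith
  set j := ⌈1/x⌉₊ with hjdef
  have hxinv : (1:ℝ) < 1/x := by
    rw [lt_div_iff₀ hx0]; linarith
  have hj2 : 2 ≤ j := by
    have : 1 < j := by
      rw [hjdef]
      exact_mod_cast Nat.lt_ceil.mpr (by exact_mod_cast hxinv)
    omega
  have hjk : j ≤ k := by
    rw [hjdef]
    apply Nat.ceil_le.mpr
    rw [div_le_iff₀ hx0]
    rw [div_le_iff₀ hk0] at hxk
    nlinarith
  have hle : 1/x ≤ (j:ℝ) := Nat.le_ceil _
  have hgt : (j:ℝ) - 1 < 1/x := by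
    have h1 : j - 1 < j := by omega
    have := Nat.lt_ceil.mp (hjdef ▸ h1)
    have hc : ((j - 1 : ℕ):ℝ) = (j:ℝ) - 1 := by
      have : 1 ≤ j := by omega
      push_cast [this]; ring
    linarith [hc ▸ this]
  have hcls1 : (1:ℝ)/(j:ℝ) ≤ x := by
    rw [div_le_iff₀ (by positivity : (0:ℝ) < (j:ℝ))]
    rw [div_le_iff₀ hx0] at hle
    linarith
  have hcls2 : x < 1/((j:ℝ)-1) := by
    have hj1 : (0:ℝ) < (j:ℝ) - 1 := by
      have : (2:ℝ) ≤ j := by exact_mod_cast hj2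
      linarith
    rw [lt_div_iff₀ hj1]
    rw [lt_div_iff₀ hx0] at hgt
    linarith
  -- j ≥ p
  have hjp : p ≤ j := by
    have hxlt : x < 1/((p:ℝ)-1) := lt_of_lt_of_le hxb hbp
    have : (p:ℝ) - 1 < 1/x := by
      rw [lt_div_iff₀ (by linarith : (0:ℝ) < (p:ℝ)-1)] at hxlt
      rw [lt_div_iff₀ hx0]
      linarith
    have : (p:ℝ) - 1 < j := lt_of_lt_of_le this hle
    have : (p:ℝ) < (j:ℝ) + 1 := by linarith
    exact_mod_cast Nat.lt_succ_iff.mp (by exact_mod_cast this)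
  have hMx : (j:ℝ)*x ≤ M := by
    rcases eq_or_lt_of_le hjp with heq | hlt
    · -- j = p
      rw [← heq]
      calc (p:ℝ)*x ≤ (p:ℝ)*b := by nlinarith
        _ ≤ M := hM2
    · -- j ≥ p+1 : j*x < j/(j-1) ≤ (p+1)/p
      have hj1 : (0:ℝ) < (j:ℝ) - 1 := by
        have : (2:ℝ) ≤ j := by exact_mod_cast hj2
        linarith
      have h1 : (j:ℝ)*x < (j:ℝ)/((j:ℝ)-1) := by
        have := hcls2
        rw [lt_div_iff₀ hj1] at this ⊢
        nlinarith
      have hp1j : (p:ℝ) + 1 ≤ j := by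
        have : p + 1 ≤ j := hlt
        exact_mod_cast this
      have h2 : (j:ℝ)/((j:ℝ)-1) ≤ ((p:ℝ)+1)/(p:ℝ) := by
        rw [div_le_div_iff₀ hj1 hp0]
        nlinarith
      have h3 : ((p:ℝ)+1)/(p:ℝ) = 1 + 1/p := by field_simp
      linarith [h2, h3 ▸ hM1]
  exact ⟨j, Finset.mem_Icc.mpr ⟨hj2, hjk⟩, ⟨hcls1, hcls2⟩, hMx⟩

lemma vol_decomp (k p : ℕ) (M b : ℝ) (hp : 2 ≤ p) (hk : p ≤ k)
    (hM1 : 1 + 1/(p:ℝ) ≤ M) (hM2 : (p:ℝ)*b ≤ M) (hbp : b ≤ 1/((p:ℝ)-1)) :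
    ∀ I : List ℝ, (∀ x ∈ I, 0 < x ∧ x < b ∧ x < 1) →
    I.sum ≤ (∑ j ∈ Finset.Icc 2 k,
        (M/(j:ℝ)) * (I.countP fun x => decide ((1:ℝ)/(j:ℝ) ≤ x ∧ x < 1/((j:ℝ)-1))))
      + (I.filter fun x => decide (x < 1/(k:ℝ))).sum := by
  have hp0 : (0:ℝ) < p := by
    have : (2:ℕ) ≤ p := hp
    exact_mod_cast Nat.lt_of_lt_of_le Nat.zero_lt_two this
  have hM0 : 0 ≤ M := by
    have : (0:ℝ) < 1 + 1/p := by positivity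
    linarith
  intro I
  induction I with
  | nil => intro _; simp
  | cons x I ih =>
    intro hmem
    have hx := hmem x List.mem_cons_self
    have hI : ∀ y ∈ I, 0 < y ∧ y < b ∧ y < 1 := fun y hy => hmem y (List.mem_cons_of_mem _ hy)
    have ihI := ih hI
    simp only [List.sum_cons, List.countP_cons, List.filter_cons]
    by_cases hsm : x < 1/(k:ℝ)
    · simp only [hsm, decide_true, if_true, List.sum_cons]
      have hnn : 0 ≤ ∑ j ∈ Finset.Icc 2 k,
          (M/(j:ℝ)) * ((if (decide ((1:ℝ)/(j:ℝ) ≤ x ∧ x < 1/((j:ℝ)-1))) = true then 1 else 0 : ℕ)) := by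
        apply Finset.sum_nonneg
        intro j hj
        have : (0:ℝ) < j := by
          rcases Finset.mem_Icc.mp hj with ⟨h2, _⟩
          have : (2:ℕ) ≤ j := h2
          exact_mod_cast Nat.lt_of_lt_of_le Nat.zero_lt_two this
        positivity
      push_cast
      push_cast at ihI hnn
      simp only [mul_add, Finset.sum_add_distrib]
      linarith [ihI, hnn]
    · simp only [hsm, decide_false, if_false]
      push_neg at hsm
      obtain ⟨j₀, hj₀mem, hj₀cls, hj₀M⟩ := class_item k p M b hp hk hM1 hM2 hbp x hx.1 hx.2.1 hx.2.2 hsm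
      have hj₀0 : (0:ℝ) < j₀ := by
        rcases Finset.mem_Icc.mp hj₀mem with ⟨h2, _⟩
        have : (2:ℕ) ≤ j₀ := h2
        exact_mod_cast Nat.lt_of_lt_of_le Nat.zero_lt_two this
      have hxle : x ≤ M/(j₀:ℝ) := by
        rw [le_div_iff₀ hj₀0]
        linarith [hj₀M, mul_comm (j₀:ℝ) x]
      have key : x ≤ ∑ j ∈ Finset.Icc 2 k,
          (M/(j:ℝ)) * ((if (decide ((1:ℝ)/(j:ℝ) ≤ x ∧ x < 1/((j:ℝ)-1))) = true then 1 else 0 : ℕ) : ℝ) := by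
        have h1 : (M/(j₀:ℝ)) * ((if (decide ((1:ℝ)/(j₀:ℝ) ≤ x ∧ x < 1/((j₀:ℝ)-1))) = true then 1 else 0 : ℕ) : ℝ) = M/(j₀:ℝ) := by
          rw [if_pos (by simpa using hj₀cls)]
          simp
        have h2 := Finset.single_le_sum
          (f := fun (j : ℕ) => (M/(j:ℝ)) * ((if (decide ((1:ℝ)/(j:ℝ) ≤ x ∧ x < 1/((j:ℝ)-1))) = true then 1 else 0 : ℕ) : ℝ))
          (fun (j : ℕ) hj => by
            have hj0 : (0:ℝ) < (j:ℝ) := by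
              rcases Finset.mem_Icc.mp hj with ⟨h2, _⟩
              have h2' : (0:ℕ) < j := by omega
              exact_mod_cast h2'
            positivity) hj₀mem
        rw [h1] at h2
        exact le_trans hxle h2
      push_cast
      push_cast at ihI key
      simp only [mul_add, Finset.sum_add_distrib]
      linarith [ihI, key]

lemma dh_lower (k p : ℕ) (M b : ℝ) (hp : 2 ≤ p) (hk : p ≤ k)
    (hM1 : 1 + 1/(p:ℝ) ≤ M) (hM2 : (p:ℝ)*b ≤ M) (hbp : b ≤ 1/((p:ℝ)-1))
    (I : List ℝ) (hI : ∀ x ∈ I, 0 < x ∧ x < b ∧ x < 1) :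
    I.sum ≤ M * dhCount k I + (M*(k:ℝ) + 1) := by
  have hp0 : (0:ℝ) < p := by
    have h2' : (0:ℕ) < p := by omega
    exact_mod_cast h2'
  have hk2 : 2 ≤ k := le_trans hp hk
  have hk0 : (0:ℝ) < k := by
    have h2' : (0:ℕ) < k := by omega
    exact_mod_cast h2'
  have hM0 : (0:ℝ) ≤ M := by
    have : (0:ℝ) < 1 + 1/p := by positivity
    linarith
  have hMk : 1 + 1/(k:ℝ) ≤ M := by
    have hpk : (p:ℝ) ≤ k := by exact_mod_cast hk
    have : 1/(k:ℝ) ≤ 1/(p:ℝ) := one_div_le_one_div_of_le hp0 hpk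
    linarith
  have hdecomp := vol_decomp k p M b hp hk hM1 hM2 hbp I hI
  -- small items bound
  set F := I.filter fun x => decide (x < 1/(k:ℝ)) with hF
  have hFmem : ∀ x ∈ F, 0 ≤ x ∧ x ≤ 1/(k:ℝ) := by
    intro x hx
    rw [hF, List.mem_filter] at hx
    have h1 := hI x hx.1
    have h2 : x < 1/(k:ℝ) := by simpa using hx.2
    exact ⟨le_of_lt h1.1, le_of_lt h2⟩
  have hFsum : F.sum ≤ (1 + 1/(k:ℝ)) * dnfCount F + 1 := dnf_sum_le_s14 (1/(k:ℝ)) F hFmem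
  -- class floor bound
  have hclass : ∀ j ∈ Finset.Icc 2 k,
      (M/(j:ℝ)) * (I.countP fun x => decide ((1:ℝ)/(j:ℝ) ≤ x ∧ x < 1/((j:ℝ)-1)))
        ≤ M * (((I.countP fun x => decide ((1:ℝ)/(j:ℝ) ≤ x ∧ x < 1/((j:ℝ)-1))) / j : ℕ) : ℝ) + M := by
    intro j hj
    set cnt := I.countP fun x => decide ((1:ℝ)/(j:ℝ) ≤ x ∧ x < 1/((j:ℝ)-1)) with hcnt
    have hj0 : 0 < j := by rcases Finset.mem_Icc.mp hj with ⟨h2, _⟩; omega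
    have hj0' : (0:ℝ) < j := by exact_mod_cast hj0
    have hcle : (cnt:ℝ) ≤ (j:ℝ) * ((cnt / j : ℕ):ℝ) + j := by
      have h := Nat.div_add_mod cnt j
      have hm : cnt % j < j := Nat.mod_lt _ hj0
      have : cnt ≤ j * (cnt / j) + j := by omega
      exact_mod_cast this
    have := mul_le_mul_of_nonneg_left hcle (by positivity : (0:ℝ) ≤ M/(j:ℝ))
    calc (M/(j:ℝ)) * (cnt:ℝ) ≤ (M/(j:ℝ)) * ((j:ℝ) * ((cnt / j : ℕ):ℝ) + j) := this
      _ = M * ((cnt / j : ℕ):ℝ) + M := by field_simp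
  have hsum : ∑ j ∈ Finset.Icc 2 k,
      (M/(j:ℝ)) * (I.countP fun x => decide ((1:ℝ)/(j:ℝ) ≤ x ∧ x < 1/((j:ℝ)-1)))
      ≤ M * ((∑ j ∈ Finset.Icc 2 k, ((I.countP fun x => decide ((1:ℝ)/(j:ℝ) ≤ x ∧ x < 1/((j:ℝ)-1))) / j : ℕ) : ℕ) : ℝ) + M * ((k:ℝ) - 1) := by
    calc ∑ j ∈ Finset.Icc 2 k, (M/(j:ℝ)) * (I.countP fun x => decide ((1:ℝ)/(j:ℝ) ≤ x ∧ x < 1/((j:ℝ)-1)))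
        ≤ ∑ j ∈ Finset.Icc 2 k, (M * (((I.countP fun x => decide ((1:ℝ)/(j:ℝ) ≤ x ∧ x < 1/((j:ℝ)-1))) / j : ℕ) : ℝ) + M) := Finset.sum_le_sum hclass
      _ = M * ((∑ j ∈ Finset.Icc 2 k, ((I.countP fun x => decide ((1:ℝ)/(j:ℝ) ≤ x ∧ x < 1/((j:ℝ)-1))) / j : ℕ) : ℕ) : ℝ) + M * ((Finset.Icc 2 k).card : ℝ) := by
          rw [Finset.sum_add_distrib, ← Finset.mul_sum, Finset.sum_const, nsmul_eq_mul]
          push_cast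
          ring
      _ = _ := by
          rw [Nat.card_Icc]
          congr 1
          congr 1
          have h1 : (2 : ℕ) ≤ k + 1 := by omega
          have : (k + 1 - 2 : ℕ) = k - 1 := by omega
          rw [this]
          have h2 : (1:ℕ) ≤ k := by omega
          push_cast [h2]
          ring
  -- combine
  have hdh : (dhCount k I : ℝ) = ((∑ j ∈ Finset.Icc 2 k, ((I.countP fun x => decide ((1:ℝ)/(j:ℝ) ≤ x ∧ x < 1/((j:ℝ)-1))) / j : ℕ) : ℕ) : ℝ) + (dnfCount F : ℝ) := by
    rw [dhCount, hF]
    push_cast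
    ring
  have hdnn : (0:ℝ) ≤ (dnfCount F : ℝ) := by positivity
  have hfloors : (0:ℝ) ≤ ((∑ j ∈ Finset.Icc 2 k, ((I.countP fun x => decide ((1:ℝ)/(j:ℝ) ≤ x ∧ x < 1/((j:ℝ)-1))) / j : ℕ) : ℕ) : ℝ) := by positivity
  have hk1 : (1:ℝ) ≤ k := by
    have : (1:ℕ) ≤ k := by omega
    exact_mod_cast this
  nlinarith [hdecomp, hFsum, hsum, hdh, hdnn, hfloors, mul_le_mul_of_nonneg_right hMk hdnn]

lemma countP_replicate (q : ℝ → Bool) (n : ℕ) (s : ℝ) :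
    (List.replicate n s).countP q = if q s then n else 0 := by
  induction n with
  | zero => simp
  | succ n ih =>
    rw [List.replicate_succ, List.countP_cons, ih]
    by_cases h : q s <;> simp [h]

lemma filter_replicate' (q : ℝ → Bool) (n : ℕ) (s : ℝ) :
    (List.replicate n s).filter q = if q s then List.replicate n s else [] := by
  induction n with
  | zero => simp
  | succ n ih =>
    rw [List.replicate_succ, List.filter_cons, ih]
    by_cases h : q s <;> simp [h, List.replicate_succ]

lemma list_get_replicate (n : ℕ) (s : ℝ) (i : Fin (List.replicate n s).length) :
    (List.replicate n s).get i = s := by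
  have := List.eq_of_mem_replicate (List.get_mem (List.replicate n s) i)
  exact this

lemma opt_fiber (L : List ℝ) (s : ℝ) (hget : ∀ i : Fin L.length, L.get i = s)
    (m : ℕ) (hm : 1 ≤ m) (h1 : ((m:ℝ)-1)*s < 1) (f : Fin L.length → Fin L.length) :
    (Finset.univ.filter fun b : Fin L.length =>
      1 ≤ ∑ i ∈ Finset.univ.filter (fun i => f i = b), L.get i).card * m ≤ L.length := by
  classical
  set covered := Finset.univ.filter fun b : Fin L.length =>
    1 ≤ ∑ i ∈ Finset.univ.filter (fun i => f i = b), L.get i with hcov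
  have hfib : ∀ b ∈ covered, m ≤ (Finset.univ.filter (fun i => f i = b)).card := by
    intro b hb
    rw [hcov, Finset.mem_filter] at hb
    have hsum : ∑ i ∈ Finset.univ.filter (fun i => f i = b), L.get i
        = ((Finset.univ.filter (fun i => f i = b)).card : ℝ) * s := by
      rw [Finset.sum_congr rfl (fun i _ => hget i), Finset.sum_const, nsmul_eq_mul]
    rw [hsum] at hb
    by_contra hcon
    push_neg at hcon
    have hs0 : 0 ≤ s := by
      by_contra hneg
      push_neg at hneg
      have : ((Finset.univ.filter (fun i => f i = b)).card : ℝ) * s ≤ 0 := by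
        apply mul_nonpos_of_nonneg_of_nonpos (by positivity) (le_of_lt hneg)
      linarith [hb.2]
    have : ((Finset.univ.filter (fun i => f i = b)).card : ℝ) ≤ (m:ℝ) - 1 := by
      have h2 : (Finset.univ.filter (fun i => f i = b)).card ≤ m - 1 := by omega
      have h3 := (Nat.cast_le (α := ℝ)).mpr h2
      have h4 : ((m - 1 : ℕ):ℝ) = (m:ℝ) - 1 := by push_cast [hm]; ring
      linarith [h4 ▸ h3]
    nlinarith [hb.2, mul_le_mul_of_nonneg_right this hs0]
  have hdisj : ∀ b ∈ covered, ∀ b' ∈ covered, b ≠ b' →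
      Disjoint (Finset.univ.filter (fun i => f i = b)) (Finset.univ.filter (fun i => f i = b')) := by
    intro b _ b' _ hne
    rw [Finset.disjoint_left]
    intro i hi hi'
    rw [Finset.mem_filter] at hi hi'
    exact hne (hi.2 ▸ hi'.2 ▸ rfl)
  calc covered.card * m = ∑ _b ∈ covered, m := by rw [Finset.sum_const, smul_eq_mul, mul_comm]
    _ ≤ ∑ b ∈ covered, (Finset.univ.filter (fun i => f i = b)).card := Finset.sum_le_sum hfib
    _ = (covered.biUnion (fun b => Finset.univ.filter (fun i => f i = b))).card :=
        (Finset.card_biUnion hdisj).symm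
    _ ≤ (Finset.univ : Finset (Fin L.length)).card := Finset.card_le_card (Finset.subset_univ _)
    _ = L.length := by simp

/-- E: opt upper bound on replicate inputs -/
lemma opt_rep (s : ℝ) (m n : ℕ) (hs : 0 < s) (hm : 1 ≤ m) (h1 : ((m:ℝ)-1)*s < 1) :
    optCount (List.replicate n s) * m ≤ n := by
  have hm0 : 0 < m := hm
  have hmain : optCount (List.replicate n s) ≤ n / m := by
    rw [optCount]
    apply Finset.sup_le
    intro f _
    rw [Nat.le_div_iff_mul_le hm0]
    have := opt_fiber (List.replicate n s) s (fun i => list_get_replicate n s i) m hm h1 f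
    simpa using this
  calc optCount (List.replicate n s) * m ≤ (n / m) * m := Nat.mul_le_mul_right m hmain
    _ ≤ n := Nat.div_mul_le_self n m

lemma dh_rep_class (k j₀ n : ℕ) (s : ℝ) (hs : 0 < s) (hj₀ : j₀ ∈ Finset.Icc 2 k)
    (hcls : (1:ℝ)/(j₀:ℝ) ≤ s ∧ s < 1/((j₀:ℝ)-1)) :
    dhCount k (List.replicate n s) = n / j₀ := by
  rcases Finset.mem_Icc.mp hj₀ with ⟨hj₀2, hj₀k⟩
  have hj₀0 : (0:ℝ) < j₀ := by
    have : (0:ℕ) < j₀ := by omega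
    exact_mod_cast this
  have hk0 : (0:ℝ) < k := by
    have : (0:ℕ) < k := by omega
    exact_mod_cast this
  have hns : ¬ (s < 1/(k:ℝ)) := by
    push_neg
    calc 1/(k:ℝ) ≤ 1/(j₀:ℝ) := by
          apply one_div_le_one_div_of_le hj₀0
          exact_mod_cast hj₀k
      _ ≤ s := hcls.1
  rw [dhCount]
  have hfilt : (List.replicate n s).filter (fun x => decide (x < 1/(k:ℝ))) = [] := by
    have hns' : ¬ (s < (k:ℝ)⁻¹) := by rw [← one_div]; exact hns
    rw [filter_replicate']
    simp [hns']
  rw [hfilt]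
  have hdnf0 : dnfCount ([] : List ℝ) = 0 := by simp [dnfCount]
  rw [hdnf0, add_zero]
  rw [Finset.sum_eq_single j₀]
  · rw [countP_replicate]
    rw [if_pos (by simpa using hcls)]
  · intro j hj hne
    rw [countP_replicate]
    have : ¬ ((1:ℝ)/(j:ℝ) ≤ s ∧ s < 1/((j:ℝ)-1)) := by
      intro hcl
      have h1 := class_uniq s hs j (Finset.mem_Icc.mp hj).1 hcl
      have h2 := class_uniq s hs j₀ hj₀2 hcls
      exact hne (h1.trans h2.symm)
    rw [if_neg (by simpa using this)]
    simp
  · intro h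
    exact absurd hj₀ h

lemma dh_rep_small (k n : ℕ) (s : ℝ) (hs : 0 < s) (hk : 2 ≤ k) (hsm : s < 1/(k:ℝ)) :
    dhCount k (List.replicate n s) = dnfCount (List.replicate n s) := by
  have hk0 : (0:ℝ) < k := by
    have : (0:ℕ) < k := by omega
    exact_mod_cast this
  rw [dhCount]
  have hfilt : (List.replicate n s).filter (fun x => decide (x < 1/(k:ℝ))) = List.replicate n s := by
    have hsm' : s < (k:ℝ)⁻¹ := by rw [← one_div]; exact hsm
    rw [filter_replicate']
    simp [hsm']
  rw [hfilt]
  have hzero : ∀ j ∈ Finset.Icc 2 k,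
      (List.replicate n s).countP (fun x => decide ((1:ℝ)/(j:ℝ) ≤ x ∧ x < 1/((j:ℝ)-1))) / j = 0 := by
    intro j hj
    rcases Finset.mem_Icc.mp hj with ⟨h2, hjk⟩
    have hj0 : (0:ℝ) < j := by
      have : (0:ℕ) < j := by omega
      exact_mod_cast this
    have : ¬ ((1:ℝ)/(j:ℝ) ≤ s ∧ s < 1/((j:ℝ)-1)) := by
      rintro ⟨hle, -⟩
      have : 1/(k:ℝ) ≤ 1/(j:ℝ) := by
        apply one_div_le_one_div_of_le hj0
        exact_mod_cast hjk
      linarith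
    rw [countP_replicate, if_neg (by simpa using this)]
    simp
  rw [Finset.sum_congr rfl hzero]
  simp


open Filter in
lemma liminf_rate (a b M : ℝ) (A : List ℝ → ℕ)
    (hab : Set.Ioo a b ⊆ Set.Ioo (0:ℝ) 1) (hM : 1 < M)
    (s₀ : ℝ) (hs₀ : s₀ ∈ Set.Ioo a b)
    (C : ℝ) (hC0 : 0 ≤ C)
    (hlow : ∀ I : List ℝ, (∀ x ∈ I, x ∈ Set.Ioo a b) → I.sum ≤ M * A I + C)
    (hupper : ∀ ε > (0:ℝ), ∃ s m, s ∈ Set.Ioo a b ∧ 0 < m ∧ 1/((m:ℝ)*s) ≤ 1/M + ε ∧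
      ∀ n : ℕ, A (List.replicate n s) * m ≤ n) :
    Filter.liminf (fun v : ℝ =>
      sInf {r : ℝ | ∃ I : List ℝ, (∀ x ∈ I, x ∈ Set.Ioo a b) ∧ vol I = v ∧ r = (A I : ℝ) / v})
      Filter.atTop = 1/M := by
  classical
  have hM0 : (0:ℝ) < M := lt_trans one_pos hM
  set Sv : ℝ → Set ℝ := fun v =>
    {r : ℝ | ∃ I : List ℝ, (∀ x ∈ I, x ∈ Set.Ioo a b) ∧ vol I = v ∧ r = (A I : ℝ) / v} with hSv
  set g : ℝ → ℝ := fun v => sInf (Sv v) with hgdef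
  have hLB : ∀ v, ∀ r ∈ Sv v, 0 ≤ r := by
    intro v r hr
    obtain ⟨I, hImem, hIvol, rfl⟩ := hr
    have hv0 : 0 ≤ v := by
      rw [← hIvol]
      exact List.sum_nonneg (fun x hx => le_of_lt (hab (hImem x hx)).1)
    positivity
  have hg0 : ∀ v, 0 ≤ g v := fun v => Real.sInf_nonneg (hLB v)
  have hbdd : ∀ v, BddBelow (Sv v) := fun v => ⟨0, hLB v⟩
  -- membership from replicate constructions
  have hrep_mem : ∀ (n : ℕ) (s : ℝ), 0 < n → s ∈ Set.Ioo a b →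
      ((A (List.replicate n s) : ℝ) / ((n:ℝ)*s)) ∈ Sv ((n:ℝ)*s) := by
    intro n s hn hs
    refine ⟨List.replicate n s, ?_, ?_, rfl⟩
    · intro x hx
      rw [List.eq_of_mem_replicate hx]
      exact hs
    · rw [vol, List.sum_replicate, nsmul_eq_mul]
  -- frequent upper bound
  have hfreq : ∀ ε > (0:ℝ), ∀ N : ℝ, ∃ v ≥ N, g v ≤ 1/M + ε := by
    intro ε hε N
    obtain ⟨s, m, hsmem, hm, hval, hA⟩ := hupper ε hε
    have hs0 : 0 < s := (hab hsmem).1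
    set n := max (⌈N/s⌉₊) 1 with hn
    have hn1 : 1 ≤ n := le_max_right _ _
    have hn0 : (0:ℝ) < n := by exact_mod_cast hn1
    set v := (n:ℝ) * s with hv
    have hvN : N ≤ v := by
      have h1 : N/s ≤ (⌈N/s⌉₊ : ℝ) := Nat.le_ceil _
      have h2 : (⌈N/s⌉₊ : ℝ) ≤ n := by exact_mod_cast le_max_left _ _
      calc N = (N/s)*s := by field_simp
        _ ≤ (n:ℝ)*s := by nlinarith
    refine ⟨v, hvN, ?_⟩
    have hmem := hrep_mem n s (by omega) hsmem
    have hAle : (A (List.replicate n s) : ℝ) ≤ (n:ℝ)/(m:ℝ) := by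
      have := hA n
      have hcast : (A (List.replicate n s) : ℝ) * (m:ℝ) ≤ (n:ℝ) := by exact_mod_cast this
      have hm0 : (0:ℝ) < m := by exact_mod_cast hm
      rw [le_div_iff₀ hm0]
      linarith
    have hrle : (A (List.replicate n s) : ℝ) / v ≤ 1/M + ε := by
      have hm0 : (0:ℝ) < m := by exact_mod_cast hm
      have hv0 : 0 < v := by positivity
      calc (A (List.replicate n s) : ℝ) / v ≤ ((n:ℝ)/(m:ℝ)) / v :=
            (div_le_div_iff_of_pos_right hv0).mpr hAle
        _ = 1/((m:ℝ)*s) := by rw [hv]; field_simp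
        _ ≤ 1/M + ε := hval
    calc g v ≤ (A (List.replicate n s) : ℝ) / v := csInf_le (hbdd v) hmem
      _ ≤ 1/M + ε := hrle
  -- eventual nonemptiness
  have hne : ∀ᶠ v in atTop, (Sv v).Nonempty := by
    have hs₀0 : 0 < s₀ := (hab hs₀).1
    have hkey : ∀ v : ℝ, 0 < v → a < v/(⌊v/s₀⌋₊ + 1 : ℕ) →
        (Sv v).Nonempty := by
      intro v hv0 ha'
      set n : ℕ := ⌊v/s₀⌋₊ + 1 with hn
      have hn0 : (0:ℝ) < n := by positivity
      have hlt : v/(n:ℝ) < s₀ := by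
        rw [div_lt_iff₀ hn0]
        have h1 : v/s₀ < (n:ℝ) := by
          rw [hn]
          push_cast
          exact Nat.lt_floor_add_one _
        rw [div_lt_iff₀ hs₀0] at h1
        linarith
      have hsmem : v/(n:ℝ) ∈ Set.Ioo a b := ⟨ha', lt_trans hlt hs₀.2⟩
      have := hrep_mem n (v/(n:ℝ)) (by omega) hsmem
      have hvv : (n:ℝ) * (v/(n:ℝ)) = v := by field_simp
      rw [hvv] at this
      exact ⟨_, this⟩
    by_cases ha : a ≤ 0
    · filter_upwards [eventually_gt_atTop (0:ℝ)] with v hv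
      apply hkey v hv
      have : (0:ℝ) < v/(⌊v/s₀⌋₊ + 1 : ℕ) := by positivity
      linarith
    · push_neg at ha
      have hδ : 0 < 1/a - 1/s₀ := by
        have : a < s₀ := hs₀.1
        have h1 : 1/s₀ < 1/a := one_div_lt_one_div_of_lt ha this
        linarith
      filter_upwards [eventually_gt_atTop (0:ℝ),
        eventually_gt_atTop (1/(1/a - 1/s₀))] with v hv hv2
      apply hkey v hv
      set n : ℕ := ⌊v/s₀⌋₊ + 1 with hn
      have hn0 : (0:ℝ) < n := by positivity
      rw [lt_div_iff₀ hn0]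
      have h1 : (n:ℝ) ≤ v/s₀ + 1 := by
        rw [hn]
        push_cast
        have := Nat.floor_le (by positivity : 0 ≤ v/s₀)
        linarith
      have h2 : v/s₀ + 1 < v/a := by
        rw [div_lt_iff₀ hδ] at hv2
        have : v/a - v/s₀ = v * (1/a - 1/s₀) := by field_simp
        nlinarith [hv2]
      have h3 : (n:ℝ) < v/a := lt_of_le_of_lt h1 h2
      rw [lt_div_iff₀ ha] at h3
      nlinarith
  -- eventual lower bound
  have hev : ∀ ε > (0:ℝ), ∀ᶠ v in atTop, 1/M - ε ≤ g v := by
    intro ε hε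
    filter_upwards [hne, eventually_ge_atTop (max 1 ((C+1)/(M*ε)))] with v hvne hvge
    have hv1 : (1:ℝ) ≤ v := le_trans (le_max_left _ _) hvge
    have hv0 : (0:ℝ) < v := lt_of_lt_of_le one_pos hv1
    have hvC : (C+1)/(M*ε) ≤ v := le_trans (le_max_right _ _) hvge
    apply le_csInf hvne
    intro r hr
    obtain ⟨I, hImem, hIvol, rfl⟩ := hr
    have hlowI := hlow I hImem
    rw [vol] at hIvol
    rw [hIvol] at hlowI
    have hA0 : (0:ℝ) ≤ A I := by positivity
    have hMε : 0 < M * ε := by positivity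
    have hvC' : C + 1 ≤ M*ε*v := by rw [div_le_iff₀ hMε] at hvC; linarith
    have hu : (0:ℝ) < 1/M := by positivity
    have hA' : (v - C)/M ≤ (A I : ℝ) := by rw [div_le_iff₀ hM0]; linarith
    have hεv : (C+1)/M ≤ ε*v := by rw [div_le_iff₀ hM0]; linarith [hvC']
    have step : (1/M - ε) * v ≤ (A I : ℝ) := by
      have e1 : (v - C)/M = v*(1/M) - C*(1/M) := by ring
      have e2 : (C+1)/M = C*(1/M) + 1/M := by ring
      have e3 : (1/M - ε)*v = v*(1/M) - ε*v := by ring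
      linarith [hA', hεv, hu]
    calc 1/M - ε = ((1/M - ε) * v)/v := by field_simp
      _ ≤ (A I : ℝ) / v := (div_le_div_iff_of_pos_right hv0).mpr step
  -- conclude
  have hbound : IsBoundedUnder (· ≥ ·) atTop g :=
    ⟨0, Filter.eventually_map.mpr (Filter.Eventually.of_forall fun v => hg0 v)⟩
  have hcob : IsCoboundedUnder (· ≥ ·) atTop g := by
    refine ⟨1/M + 1, ?_⟩
    intro x hx
    rw [Filter.eventually_map] at hx
    have hfr : ∃ᶠ v in atTop, g v ≤ 1/M + 1 :=
      Filter.frequently_atTop.mpr (fun N => hfreq 1 one_pos N)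
    obtain ⟨v, hv1, hv2⟩ := (hfr.and_eventually hx).exists
    exact le_trans hv2 hv1
  have hub : liminf g atTop ≤ 1/M := by
    apply le_of_forall_pos_le_add
    intro ε hε
    apply Filter.liminf_le_of_frequently_le _ hbound
    exact Filter.frequently_atTop.mpr (fun N => hfreq ε hε N)
  have hlb : 1/M ≤ liminf g atTop := by
    apply le_of_forall_pos_le_add
    intro ε hε
    have := Filter.le_liminf_of_le hcob (hev ε hε)
    linarith
  linarith



/-- If `(a,b) ⊆ (0,1)` contains a point `1/l` (integer `l ≥ 2`), `1/p` is the
maximal point of the form `1/l` below `b`, `a < 1/p`, and `k ≥ p`, then `DH_k`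
restricted to item sizes in `(a,b)` has min/min ratio 1. -/
theorem dh_minmin_restricted (a b : ℝ) (p k : ℕ) (hp : 2 ≤ p)
    (hsub : Set.Ioo a b ⊆ Set.Ioo (0:ℝ) 1)
    (hborder : ∃ l : ℕ, 2 ≤ l ∧ (1/(l:ℝ)) ∈ Set.Ioo a b)
    (hpb : 1/(p:ℝ) < b)
    (hpmax : ∀ l : ℕ, 1 ≤ l → 1/(l:ℝ) < b → 1/(l:ℝ) ≤ 1/(p:ℝ))
    (hap : a < 1/(p:ℝ)) (hk : p ≤ k) :
    minRate (Set.Ioo a b) (dhCount k) / minRate (Set.Ioo a b) optCount = 1 := by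
  have hp0 : (0:ℝ) < p := by
    have : (0:ℕ) < p := by omega
    exact_mod_cast this
  have hp2 : (2:ℝ) ≤ p := by exact_mod_cast hp
  have hp1 : (1:ℝ) ≤ (p:ℝ) - 1 := by linarith
  have hb0 : 0 < b := lt_trans (by positivity) hpb
  have hb1 : b ≤ 1/((p:ℝ)-1) := by
    by_contra hcon
    push_neg at hcon
    have hcast : ((p - 1 : ℕ):ℝ) = (p:ℝ) - 1 := by
      have : 1 ≤ p := by omega
      push_cast [this]; ring
    have h1 := hpmax (p-1) (by omega) (by rw [hcast]; exact hcon)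
    rw [hcast] at h1
    have : 1/(p:ℝ) < 1/((p:ℝ)-1) := by
      apply one_div_lt_one_div_of_lt (by linarith) (by linarith)
    linarith
  set M : ℝ := max ((p:ℝ)*b) (1 + 1/(p:ℝ)) with hMdef
  have hM1 : 1 + 1/(p:ℝ) ≤ M := le_max_right _ _
  have hM2 : (p:ℝ)*b ≤ M := le_max_left _ _
  have hMgt1 : 1 < M := by
    have : (0:ℝ) < 1/p := by positivity
    linarith
  have hM0 : (0:ℝ) < M := lt_trans one_pos hMgt1
  have hs₀ : 1/(p:ℝ) ∈ Set.Ioo a b := ⟨hap, hpb⟩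
  have hitems : ∀ I : List ℝ, (∀ x ∈ I, x ∈ Set.Ioo a b) → ∀ x ∈ I, 0 < x ∧ x < b ∧ x < 1 := by
    intro I hI x hx
    have h1 := hsub (hI x hx)
    have h2 := hI x hx
    exact ⟨h1.1, h2.2, h1.2⟩
  -- upper construction
  have hupper : ∀ ε > (0:ℝ), ∃ s : ℝ, ∃ m : ℕ, s ∈ Set.Ioo a b ∧ 0 < m ∧
      1/((m:ℝ)*s) ≤ 1/M + ε ∧
      (∀ n : ℕ, dhCount k (List.replicate n s) * m ≤ n) ∧
      (∀ n : ℕ, optCount (List.replicate n s) * m ≤ n) := by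
    intro ε hε
    have hεM : (0:ℝ) < ε*M := by positivity
    by_cases hcase : (p:ℝ)*b ≤ 1 + 1/(p:ℝ)
    · -- M = 1 + 1/p, use s just below 1/p, m = p+1
      have hMeq : M = 1 + 1/(p:ℝ) := max_eq_right hcase
      set lo : ℝ := max a (1/((p:ℝ)+1)) with hlo
      set hi : ℝ := 1/(p:ℝ) with hhi
      have hhi0 : 0 < hi := by positivity
      have hlohi : lo < hi := by
        apply max_lt hap
        apply one_div_lt_one_div_of_lt hp0
        linarith
      have hfrac : hi/(1+ε*M) < hi := by
        rw [div_lt_iff₀ (by linarith)]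
        nlinarith
      set s : ℝ := (max lo (hi/(1+ε*M)) + hi)/2 with hs
      have hslt : s < hi := by
        rw [hs]
        have : max lo (hi/(1+ε*M)) < hi := max_lt hlohi hfrac
        linarith
      have hsgt : lo < s := by
        rw [hs]
        have h1 : lo ≤ max lo (hi/(1+ε*M)) := le_max_left _ _
        linarith
      have hsgt2 : hi/(1+ε*M) < s := by
        rw [hs]
        have h1 : hi/(1+ε*M) ≤ max lo (hi/(1+ε*M)) := le_max_right _ _
        linarith
      have hs0 : 0 < s := by
        have : (0:ℝ) < hi/(1+ε*M) := by positivity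
        linarith
      have hsmem : s ∈ Set.Ioo a b := by
        constructor
        · exact lt_of_le_of_lt (le_max_left a _) hsgt
        · exact lt_trans hslt hpb
      have hps1 : (p:ℝ)*s < 1 := by
        have := hslt
        rw [hhi, lt_div_iff₀ hp0] at this
        linarith [mul_comm (p:ℝ) s]
      have hmhi : ((p:ℕ)+1:ℝ)*hi = M := by
        rw [hMeq, hhi]
        push_cast
        field_simp
      refine ⟨s, p+1, hsmem, by omega, ?_, ?_, ?_⟩
      · -- 1/((p+1)*s) ≤ 1/M + ε
        have hm0 : (0:ℝ) < ((p+1:ℕ):ℝ) := by positivity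
        have hms : M/(1+ε*M) < ((p+1:ℕ):ℝ)*s := by
          have := hsgt2
          have e : ((p+1:ℕ):ℝ) * (hi/(1+ε*M)) = M/(1+ε*M) := by
            rw [← hmhi]
            push_cast
            ring
          calc M/(1+ε*M) = ((p+1:ℕ):ℝ) * (hi/(1+ε*M)) := e.symm
            _ < ((p+1:ℕ):ℝ) * s := by
                apply mul_lt_mul_of_pos_left hsgt2 hm0
        have hms0 : (0:ℝ) < ((p+1:ℕ):ℝ)*s := by positivity
        have hMfrac : (0:ℝ) < M/(1+ε*M) := by positivity
        calc 1/(((p+1:ℕ):ℝ)*s) ≤ 1/(M/(1+ε*M)) := by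
              apply one_div_le_one_div_of_le hMfrac (le_of_lt hms)
          _ = (1+ε*M)/M := by field_simp
          _ = 1/M + ε := by field_simp
      · -- dh bound
        intro n
        by_cases hsk : s < 1/(k:ℝ)
        · rw [dh_rep_small k n s hs0 (by omega) hsk]
          exact dnf_rep s p n hs0 hps1
        · push_neg at hsk
          have hkp : p < k := by
            by_contra hcon
            push_neg at hcon
            have hkeq : k = p := le_antisymm hcon hk
            rw [hkeq] at hsk
            rw [hhi] at hslt
            linarith
          have hcls : (1:ℝ)/((p+1:ℕ):ℝ) ≤ s ∧ s < 1/(((p+1:ℕ):ℝ)-1) := by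
            constructor
            · have h1 : 1/((p:ℝ)+1) ≤ lo := le_max_right _ _
              push_cast
              linarith [hsgt]
            · push_cast
              have e : (p:ℝ) + 1 - 1 = (p:ℝ) := by ring
              rw [e]
              rw [hhi] at hslt
              exact hslt
          rw [dh_rep_class k (p+1) n s hs0 (Finset.mem_Icc.mpr ⟨by omega, by omega⟩) hcls]
          exact Nat.div_mul_le_self n (p+1)
      · -- opt bound
        intro n
        apply opt_rep s (p+1) n hs0 (by omega)
        push_cast
        have e : (p:ℝ) + 1 - 1 = (p:ℝ) := by ring
        rw [e]
        exact hps1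
    · -- M = p*b, use s just below b, m = p
      push_neg at hcase
      have hMeq : M = (p:ℝ)*b := max_eq_left (le_of_lt hcase)
      set lo : ℝ := 1/(p:ℝ) with hlo
      set hi : ℝ := b with hhi
      have hhi0 : 0 < hi := hb0
      have hlohi : lo < hi := hpb
      have hfrac : hi/(1+ε*M) < hi := by
        rw [div_lt_iff₀ (by linarith)]
        nlinarith
      set s : ℝ := (max lo (hi/(1+ε*M)) + hi)/2 with hs
      have hslt : s < hi := by
        rw [hs]
        have : max lo (hi/(1+ε*M)) < hi := max_lt hlohi hfrac
        linarith
      have hsgt : lo < s := by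
        rw [hs]
        have h1 : lo ≤ max lo (hi/(1+ε*M)) := le_max_left _ _
        linarith
      have hsgt2 : hi/(1+ε*M) < s := by
        rw [hs]
        have h1 : hi/(1+ε*M) ≤ max lo (hi/(1+ε*M)) := le_max_right _ _
        linarith
      have hs0 : 0 < s := by
        have : (0:ℝ) < lo := by rw [hlo]; positivity
        linarith
      have hsmem : s ∈ Set.Ioo a b := ⟨lt_trans hap hsgt, hslt⟩
      have hcls : (1:ℝ)/(p:ℝ) ≤ s ∧ s < 1/((p:ℝ)-1) := by
        constructor
        · exact le_of_lt hsgt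
        · exact lt_of_lt_of_le hslt hb1
      refine ⟨s, p, hsmem, by omega, ?_, ?_, ?_⟩
      · have hm0 : (0:ℝ) < (p:ℝ) := hp0
        have hms : M/(1+ε*M) < (p:ℝ)*s := by
          have e : (p:ℝ) * (hi/(1+ε*M)) = M/(1+ε*M) := by
            rw [hMeq, hhi]
            ring
          calc M/(1+ε*M) = (p:ℝ) * (hi/(1+ε*M)) := e.symm
            _ < (p:ℝ) * s := mul_lt_mul_of_pos_left hsgt2 hm0
        have hMfrac : (0:ℝ) < M/(1+ε*M) := by positivity
        calc 1/((p:ℝ)*s) ≤ 1/(M/(1+ε*M)) := by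
              apply one_div_le_one_div_of_le hMfrac (le_of_lt hms)
          _ = (1+ε*M)/M := by field_simp
          _ = 1/M + ε := by field_simp
      · intro n
        have hnsm : ¬ (s < 1/(k:ℝ)) := by
          push_neg
          have hk0 : (0:ℝ) < k := by
            have : (0:ℕ) < k := by omega
            exact_mod_cast this
          have h1 : 1/(k:ℝ) ≤ 1/(p:ℝ) := by
            apply one_div_le_one_div_of_le hp0
            exact_mod_cast hk
          rw [hlo] at hsgt
          linarith
        rw [dh_rep_class k p n s hs0 (Finset.mem_Icc.mpr ⟨hp, hk⟩) hcls]
        exact Nat.div_mul_le_self n p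
      · intro n
        apply opt_rep s p n hs0 (by omega)
        have h1 : s < 1/((p:ℝ)-1) := hcls.2
        rw [lt_div_iff₀ (by linarith)] at h1
        linarith [mul_comm s ((p:ℝ)-1)]
  -- the two liminf computations
  have hdh_lim : minRate (Set.Ioo a b) (dhCount k) = 1/M := by
    unfold minRate
    apply liminf_rate a b M (dhCount k) hsub hMgt1 (1/(p:ℝ)) hs₀ (M*(k:ℝ)+1) (by positivity)
    · intro I hI
      exact dh_lower k p M b hp hk hM1 hM2 hb1 I (hitems I hI)
    · intro ε hε
      obtain ⟨s, m, h1, h2, h3, h4, _⟩ := hupper ε hε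
      exact ⟨s, m, h1, by exact_mod_cast h2, h3, fun n => by exact_mod_cast h4 n⟩
  have hopt_lim : minRate (Set.Ioo a b) optCount = 1/M := by
    unfold minRate
    apply liminf_rate a b M optCount hsub hMgt1 (1/(p:ℝ)) hs₀ 1 (by norm_num)
    · intro I hI
      have := opt_lower b M p (by omega) hM1 hM2 I
        (fun x hx => ⟨(hitems I hI x hx).1, (hitems I hI x hx).2.1⟩)
      linarith
    · intro ε hε
      obtain ⟨s, m, h1, h2, h3, _, h5⟩ := hupper ε hε
      exact ⟨s, m, h1, by exact_mod_cast h2, h3, fun n => by exact_mod_cast h5 n⟩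
  rw [hdh_lim, hopt_lim]
  apply div_self
  positivity
end

section
/- Let (a,b) ⊆ (0,1) be an interval containing at least one point of the form 1/l with integer l ≥ 2, and let 1/p = max{1/l : l ∈ ℕ, 1/l < b} be the maximal such partitioning point in (a,b), with 1/p ∈ (a,b). Then DNF restricted to input sequences with all item sizes in (a,b) has min/min ratio max{(1 + 1/p)/(1 + b), p·b/(1 + b)}. -/
open Filter MeasureTheory

open Finset

lemma dnf_foldl_lb (b : ℝ) (hb : 0 < b) :
    ∀ (I : List ℝ) (st : ℝ × ℕ), (∀ x ∈ I, 0 < x ∧ x < b) → 0 ≤ st.1 → st.1 < 1 →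
      (0 ≤ (I.foldl dnfStep st).1 ∧ (I.foldl dnfStep st).1 < 1) ∧
      st.1 + I.sum + (st.2 : ℝ) * (1 + b) ≤
        ((I.foldl dnfStep st).2 : ℝ) * (1 + b) + (I.foldl dnfStep st).1 := by
  intro I
  induction I with
  | nil => intro st _ h0 h1; simp [h0, h1]; linarith
  | cons x xs ih =>
    intro st hmem h0 h1
    have hx := hmem x (by simp)
    have hxs : ∀ y ∈ xs, 0 < y ∧ y < b := fun y hy => hmem y (by simp [hy])
    simp only [List.foldl_cons, List.sum_cons]
    by_cases hc : 1 ≤ st.1 + x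
    · have hstep : dnfStep st x = (0, st.2 + 1) := by simp [dnfStep, hc]
      rw [hstep]
      have := ih (0, st.2 + 1) hxs (le_refl 0) one_pos
      refine ⟨this.1, ?_⟩
      have h2 : st.1 + (x + xs.sum) + (st.2 : ℝ) * (1 + b) ≤
          0 + xs.sum + ((st.2 + 1 : ℕ) : ℝ) * (1 + b) := by
        push_cast
        nlinarith [hx.1, hx.2, h1]
      calc st.1 + (x + xs.sum) + (st.2 : ℝ) * (1 + b)
          ≤ (0:ℝ) + xs.sum + ((st.2 + 1 : ℕ) : ℝ) * (1 + b) := h2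
        _ ≤ _ := by simpa using this.2
    · have hstep : dnfStep st x = (st.1 + x, st.2) := by simp [dnfStep, hc]
      rw [hstep]
      have := ih (st.1 + x, st.2) hxs (by simp; linarith [hx.1]) (by push_neg at hc; simpa using hc)
      refine ⟨this.1, ?_⟩
      have := this.2
      simp only at this
      linarith [this]

lemma dnf_lb (b : ℝ) (hb : 0 < b) (I : List ℝ) (hI : ∀ x ∈ I, 0 < x ∧ x < b) :
    vol I ≤ (dnfCount I : ℝ) * (1 + b) + 1 := by
  have := dnf_foldl_lb b hb I (0, 0) hI le_rfl one_pos
  simp only [Nat.cast_zero, zero_mul, add_zero, zero_add] at this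
  have h1 := this.1.2
  have h2 := this.2
  unfold vol dnfCount
  linarith

lemma dnf_fill (p : ℕ) (hp : 0 < p) (u : ℝ) (hu0 : 0 < u) (hu1 : u < 1) (c0 : ℕ) :
    ∀ j ≤ p, List.foldl dnfStep (0, c0) (List.replicate j (u / p)) = ((j : ℝ) * (u / p), c0) := by
  intro j
  induction j with
  | zero => intro _; simp
  | succ j ih =>
    intro hj
    rw [List.replicate_succ', List.foldl_append, ih (Nat.le_of_succ_le hj)]
    have hup : 0 < u / p := by positivity
    have hle : ((j : ℝ) + 1) * (u / p) ≤ u := by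
      have : ((j : ℝ) + 1) ≤ (p : ℝ) := by exact_mod_cast hj
      calc ((j : ℝ) + 1) * (u / p) ≤ (p : ℝ) * (u / p) := by
            apply mul_le_mul_of_nonneg_right this hup.le
        _ = u := by field_simp
    have hnc : ¬ (1 ≤ (j : ℝ) * (u / p) + u / p) := by
      push_neg; nlinarith
    simp only [List.foldl_cons, List.foldl_nil, dnfStep, hnc, if_false]
    push_cast; ring_nf

lemma dnf_block (p : ℕ) (hp : 0 < p) (u t : ℝ) (hu0 : 0 < u) (hu1 : u < 1)
    (hclose : 1 ≤ u + t) (c0 : ℕ) :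
    List.foldl dnfStep (0, c0) (List.replicate p (u / p) ++ [t]) = (0, c0 + 1) := by
  rw [List.foldl_append, dnf_fill p hp u hu0 hu1 c0 p le_rfl]
  have : (p : ℝ) * (u / p) = u := by
    field_simp
  rw [this]
  simp [dnfStep, hclose]

lemma dnf_blocks (p : ℕ) (hp : 0 < p) (u t : ℝ) (hu0 : 0 < u) (hu1 : u < 1)
    (hclose : 1 ≤ u + t) :
    ∀ (k c0 : ℕ), List.foldl dnfStep (0, c0)
      (List.flatten (List.replicate k (List.replicate p (u / p) ++ [t]))) = (0, c0 + k) := by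
  intro k
  induction k with
  | zero => intro c0; simp
  | succ k ih =>
    intro c0
    rw [List.replicate_succ, List.flatten_cons, List.foldl_append,
      dnf_block p hp u t hu0 hu1 hclose c0, ih (c0 + 1)]
    ring_nf

lemma dnf_blocks_count (p : ℕ) (hp : 0 < p) (u t : ℝ) (hu0 : 0 < u) (hu1 : u < 1)
    (hclose : 1 ≤ u + t) (k : ℕ) :
    dnfCount (List.flatten (List.replicate k (List.replicate p (u / p) ++ [t]))) = k := by
  unfold dnfCount
  rw [dnf_blocks p hp u t hu0 hu1 hclose k 0]; simp

lemma dnf_blocks_sum (p : ℕ) (hp : 0 < p) (u t : ℝ) (k : ℕ) :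
    (List.flatten (List.replicate k (List.replicate p (u / p) ++ [t]))).sum = k * (u + t) := by
  induction k with
  | zero => simp
  | succ k ih =>
    rw [List.replicate_succ, List.flatten_cons, List.sum_append, ih]
    simp [List.sum_replicate]
    have : (p : ℝ) * (u / p) = u := by field_simp
    push_cast
    rw [this]; ring

lemma dnf_blocks_mem (p : ℕ) (u t : ℝ) (k : ℕ) (x : ℝ)
    (hx : x ∈ List.flatten (List.replicate k (List.replicate p (u / p) ++ [t]))) :
    x = u / p ∨ x = t := by
  simp only [List.mem_flatten, List.mem_replicate] at hx
  obtain ⟨l, ⟨_, rfl⟩, hxl⟩ := hx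
  simp only [List.mem_append, List.mem_replicate, List.mem_singleton] at hxl
  rcases hxl with ⟨_, h⟩ | h
  · exact Or.inl h
  · exact Or.inr h

variable {n : ℕ}

-- count of P-indices before i
def rnk (P : Fin n → Prop) [DecidablePred P] (i : Fin n) : ℕ :=
  (univ.filter (fun j => j < i ∧ P j)).card

lemma count_prefix_lb (P : Fin n → Prop) [DecidablePred P] (u : ℕ)
    (hu : u ≤ (univ.filter P).card) :
    u ≤ (univ.filter (fun i => P i ∧ rnk P i < u)).card := by
  classical
  by_cases hall : ∀ i, P i → rnk P i < u
  · have : univ.filter P ⊆ univ.filter (fun i => P i ∧ rnk P i < u) := by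
      intro i hi
      simp only [mem_filter] at *
      exact ⟨hi.1, hi.2, hall i hi.2⟩
    calc u ≤ (univ.filter P).card := hu
      _ ≤ _ := card_le_card this
  · push_neg at hall
    have hne : (univ.filter (fun i => P i ∧ u ≤ rnk P i)).Nonempty := by
      obtain ⟨i, hi, hri⟩ := hall
      exact ⟨i, by simp [hi, hri]⟩
    set i0 := (univ.filter (fun i => P i ∧ u ≤ rnk P i)).min' hne with hi0
    have hi0mem := Finset.min'_mem _ hne
    simp only [mem_filter] at hi0mem
    have hsub : univ.filter (fun j => j < i0 ∧ P j) ⊆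
        univ.filter (fun i => P i ∧ rnk P i < u) := by
      intro j hj
      simp only [mem_filter] at hj ⊢
      refine ⟨Finset.mem_univ _, hj.2.2, ?_⟩
      by_contra hge
      push_neg at hge
      have : i0 ≤ j := Finset.min'_le _ j (by simp [hj.2.2, hge])
      exact absurd (lt_of_lt_of_le hj.2.1 this) (lt_irrefl j)
    calc u ≤ rnk P i0 := hi0mem.2.2
      _ = (univ.filter (fun j => j < i0 ∧ P j)).card := rfl
      _ ≤ _ := card_le_card hsub

lemma count_prefix_ub (P : Fin n → Prop) [DecidablePred P] (u : ℕ) :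
    (univ.filter (fun i => P i ∧ rnk P i < u)).card ≤ u := by
  classical
  have : (univ.filter (fun i => P i ∧ rnk P i < u)).card ≤ (Finset.range u).card := by
    apply Finset.card_le_card_of_injOn (fun i => rnk P i)
    · intro i hi
      simp only [Finset.mem_coe, mem_filter] at hi
      simp [hi.2.2]
    · intro i hi i' hi' heq
      simp only [Finset.coe_filter, Set.mem_setOf_eq] at hi hi'
      have heq' : rnk P i = rnk P i' := heq
      by_contra hne
      rcases lt_or_gt_of_ne hne with hlt | hlt
      · have : rnk P i < rnk P i' := by
          have hsub : insert i (univ.filter (fun j => j < i ∧ P j)) ⊆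
              univ.filter (fun j => j < i' ∧ P j) := by
            intro j hj
            rcases Finset.mem_insert.mp hj with rfl | hj
            · simp [hlt, hi.2.1]
            · simp only [mem_filter] at hj ⊢
              exact ⟨Finset.mem_univ _, lt_trans hj.2.1 hlt, hj.2.2⟩
          have := card_le_card hsub
          rw [Finset.card_insert_of_notMem (by simp)] at this
          unfold rnk; omega
        omega
      · have : rnk P i' < rnk P i := by
          have hsub : insert i' (univ.filter (fun j => j < i' ∧ P j)) ⊆
              univ.filter (fun j => j < i ∧ P j) := by
            intro j hj
            rcases Finset.mem_insert.mp hj with rfl | hj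
            · simp [hlt, hi'.2.1]
            · simp only [mem_filter] at hj ⊢
              exact ⟨Finset.mem_univ _, lt_trans hj.2.1 hlt, hj.2.2⟩
          have := card_le_card hsub
          rw [Finset.card_insert_of_notMem (by simp)] at this
          unfold rnk; omega
        omega
  simpa using this

-- prefix sums
def psum (x : Fin n → ℝ) (P : Fin n → Prop) [DecidablePred P] (i : Fin n) : ℝ :=
  ∑ j ∈ univ.filter (fun j => j < i ∧ P j), x j

lemma sum_prefix_lb (x : Fin n → ℝ) (P : Fin n → Prop) [DecidablePred P]
    (hx : ∀ i, P i → 0 ≤ x i) (u : ℝ) (hu : u ≤ ∑ i ∈ univ.filter P, x i) :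
    u ≤ ∑ i ∈ univ.filter (fun i => P i ∧ psum x P i < u), x i := by
  classical
  by_cases hall : ∀ i, P i → psum x P i < u
  · have hsub : univ.filter P ⊆ univ.filter (fun i => P i ∧ psum x P i < u) := by
      intro i hi; simp only [mem_filter] at *; exact ⟨hi.1, hi.2, hall i hi.2⟩
    calc u ≤ ∑ i ∈ univ.filter P, x i := hu
      _ ≤ _ := by
          apply Finset.sum_le_sum_of_subset_of_nonneg hsub
          intro i hi _
          simp only [mem_filter] at hi
          exact hx i hi.2.1
  · push_neg at hall
    have hne : (univ.filter (fun i => P i ∧ u ≤ psum x P i)).Nonempty := by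
      obtain ⟨i, hi, hri⟩ := hall
      exact ⟨i, by simp [hi, hri]⟩
    set i0 := (univ.filter (fun i => P i ∧ u ≤ psum x P i)).min' hne with hi0
    have hi0mem := Finset.min'_mem _ hne
    simp only [mem_filter] at hi0mem
    have hsub : univ.filter (fun j => j < i0 ∧ P j) ⊆
        univ.filter (fun i => P i ∧ psum x P i < u) := by
      intro j hj
      simp only [mem_filter] at hj ⊢
      refine ⟨Finset.mem_univ _, hj.2.2, ?_⟩
      by_contra hge
      push_neg at hge
      have : i0 ≤ j := Finset.min'_le _ j (by simp [hj.2.2, hge])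
      exact absurd (lt_of_lt_of_le hj.2.1 this) (lt_irrefl j)
    calc u ≤ psum x P i0 := hi0mem.2.2
      _ = ∑ j ∈ univ.filter (fun j => j < i0 ∧ P j), x j := rfl
      _ ≤ _ := by
          apply Finset.sum_le_sum_of_subset_of_nonneg hsub
          intro i hi _
          simp only [mem_filter] at hi
          exact hx i hi.2.1

lemma sum_prefix_ub (x : Fin n → ℝ) (P : Fin n → Prop) [DecidablePred P]
    (hx : ∀ i, P i → 0 ≤ x i) (β : ℝ) (hβ0 : 0 ≤ β) (hβ : ∀ i, P i → x i ≤ β) (u : ℝ) (hu : 0 ≤ u) :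
    ∑ i ∈ univ.filter (fun i => P i ∧ psum x P i < u), x i ≤ u + β := by
  classical
  by_cases hne : (univ.filter (fun i => P i ∧ psum x P i < u)).Nonempty
  · set i0 := (univ.filter (fun i => P i ∧ psum x P i < u)).max' hne with hi0
    have hi0mem := Finset.max'_mem _ hne
    simp only [mem_filter] at hi0mem
    have hsub : univ.filter (fun i => P i ∧ psum x P i < u) ⊆
        insert i0 (univ.filter (fun j => j < i0 ∧ P j)) := by
      intro j hj
      have hjle : j ≤ i0 := Finset.le_max' _ j hj
      simp only [mem_filter] at hj
      rcases eq_or_lt_of_le hjle with rfl | hlt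
      · exact Finset.mem_insert_self _ _
      · exact Finset.mem_insert_of_mem (by simp [hlt, hj.2.1])
    calc ∑ i ∈ univ.filter (fun i => P i ∧ psum x P i < u), x i
        ≤ ∑ i ∈ insert i0 (univ.filter (fun j => j < i0 ∧ P j)), x i := by
          apply Finset.sum_le_sum_of_subset_of_nonneg hsub
          intro i hi hnot
          rcases Finset.mem_insert.mp hi with rfl | hi'
          · exact hx i0 hi0mem.2.1
          · simp only [mem_filter] at hi'
            exact hx i hi'.2.2
      _ = x i0 + psum x P i0 := by
          rw [Finset.sum_insert (by simp)]; rfl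
      _ ≤ β + u := by
          have h1 := hβ i0 hi0mem.2.1
          have h2 := hi0mem.2.2
          linarith
      _ = u + β := by ring
  · rw [Finset.not_nonempty_iff_eq_empty] at hne
    rw [hne]
    simp
    linarith

lemma groups_le_opt (I : List ℝ) (hI : ∀ x ∈ I, 0 ≤ x) (m : ℕ) (g : Fin I.length → ℕ)
    (hg : ∀ t < m, 1 ≤ ∑ i ∈ Finset.univ.filter (fun i => g i = t), I.get i) :
    m ≤ optCount I := by
  classical
  rcases Nat.eq_zero_or_pos m with rfl | hm
  · exact Nat.zero_le _
  have hne : ∀ t < m, ∃ i : Fin I.length, g i = t := by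
    intro t ht
    by_contra hno
    push_neg at hno
    have : (Finset.univ.filter (fun i => g i = t)) = ∅ := by
      apply Finset.filter_eq_empty_iff.mpr
      intro i _; exact hno i
    have h1 := hg t ht
    rw [this] at h1
    simp at h1
    linarith
  -- representative
  have hrep : ∀ t : ℕ, ∃ i : Fin I.length, t < m → g i = t := by
    intro t
    by_cases ht : t < m
    · obtain ⟨i, hi⟩ := hne t ht
      exact ⟨i, fun _ => hi⟩
    · obtain ⟨i, hi⟩ := hne 0 hm
      exact ⟨i, fun h => absurd h ht⟩
  choose rep hrepspec using hrep
  set f : Fin I.length → Fin I.length :=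
    fun i => if g i < m then rep (g i) else rep 0 with hf
  have hcov : ∀ t < m, 1 ≤ ∑ i ∈ Finset.univ.filter (fun i => f i = rep t), I.get i := by
    intro t ht
    have hsub : Finset.univ.filter (fun i => g i = t) ⊆
        Finset.univ.filter (fun i => f i = rep t) := by
      intro i hi
      simp only [mem_filter] at hi ⊢
      refine ⟨Finset.mem_univ _, ?_⟩
      rw [hf]
      simp only
      rw [hi.2, if_pos ht]
    calc (1:ℝ) ≤ ∑ i ∈ Finset.univ.filter (fun i => g i = t), I.get i := hg t ht
      _ ≤ _ := by
          apply Finset.sum_le_sum_of_subset_of_nonneg hsub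
          intro i _ _
          apply hI
          rw [show I.get i = I.get ⟨i.1, i.2⟩ from rfl]
          exact List.get_mem I i
  have hinj : Set.InjOn (fun t => rep t) (Finset.range m) := by
    intro t ht t' ht' heq
    simp only [Finset.coe_range, Set.mem_Iio] at ht ht'
    have h1 := hrepspec t ht
    have h2 := hrepspec t' ht'
    simp only [] at heq
    rw [← h1, ← h2, heq]
  have hsubset : (Finset.range m).image (fun t => rep t) ⊆
      Finset.univ.filter (fun b => 1 ≤ ∑ i ∈ Finset.univ.filter (fun i => f i = b), I.get i) := by
    intro b hb
    simp only [Finset.mem_image, Finset.mem_range] at hb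
    obtain ⟨t, ht, rfl⟩ := hb
    simp only [mem_filter]
    exact ⟨Finset.mem_univ _, hcov t ht⟩
  have hcard : m ≤ (Finset.univ.filter (fun b =>
      1 ≤ ∑ i ∈ Finset.univ.filter (fun i => f i = b), I.get i)).card := by
    calc m = (Finset.range m).card := (Finset.card_range m).symm
      _ = ((Finset.range m).image (fun t => rep t)).card :=
          (Finset.card_image_of_injOn hinj).symm
      _ ≤ _ := card_le_card hsubset
  calc m ≤ _ := hcard
    _ ≤ optCount I := by
        unfold optCount
        exact Finset.le_sup (f := fun f : Fin I.length → Fin I.length =>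
          (Finset.univ.filter fun b : Fin I.length =>
            1 ≤ ∑ i ∈ Finset.univ.filter (fun i => f i = b), I.get i).card) (Finset.mem_univ f)

lemma opt_ub_replicate (n k : ℕ) (s : ℝ) (hs : 0 < s) (hks : (k : ℝ) * s < 1) :
    optCount (List.replicate n s) ≤ n / (k + 1) := by
  classical
  apply Finset.sup_le
  intro f _
  rw [Nat.le_div_iff_mul_le (Nat.succ_pos k)]
  set B := Finset.univ.filter (fun b =>
    1 ≤ ∑ i ∈ Finset.univ.filter (fun i => f i = b), (List.replicate n s).get i) with hB
  have hget : ∀ i : Fin (List.replicate n s).length, (List.replicate n s).get i = s := by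
    intro i; simp
  have hfib : ∀ b ∈ B, k + 1 ≤ (Finset.univ.filter (fun i => f i = b)).card := by
    intro b hb
    simp only [hB, mem_filter] at hb
    have hsum : ∑ i ∈ Finset.univ.filter (fun i => f i = b), (List.replicate n s).get i
        = ((Finset.univ.filter (fun i => f i = b)).card : ℝ) * s := by
      rw [Finset.sum_congr rfl (fun i _ => hget i)]
      simp [mul_comm]
    rw [hsum] at hb
    by_contra hlt
    push_neg at hlt
    have : ((Finset.univ.filter (fun i => f i = b)).card : ℝ) ≤ (k : ℝ) := by
      exact_mod_cast Nat.lt_succ_iff.mp hlt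
    have := mul_le_mul_of_nonneg_right this hs.le
    nlinarith [hb.2]
  calc B.card * (k + 1) = ∑ _b ∈ B, (k + 1) := by rw [Finset.sum_const, smul_eq_mul]
    _ ≤ ∑ b ∈ B, (Finset.univ.filter (fun i => f i = b)).card :=
        Finset.sum_le_sum hfib
    _ ≤ ∑ b ∈ Finset.univ, (Finset.univ.filter (fun i => f i = b)).card := by
        apply Finset.sum_le_sum_of_subset (Finset.filter_subset _ _)
    _ = (Finset.univ : Finset (Fin (List.replicate n s).length)).card := by
        rw [← Finset.card_eq_sum_card_fiberwise (fun i _ => Finset.mem_univ (f i))]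
    _ = n := by simp

lemma vol_eq_sum (I : List ℝ) : vol I = ∑ i : Fin I.length, I.get i := by
  conv_lhs => rw [vol, ← List.ofFn_get I]
  rw [List.sum_ofFn]
lemma opt_lb (b : ℝ) (p : ℕ) (hp : 2 ≤ p) (hb0 : 0 < b) (hpb : 1/(p:ℝ) < b)
    (I : List ℝ) (hI : ∀ y ∈ I, 0 < y ∧ y < b) :
    min ((p:ℝ)/((p:ℝ)+1)) (1/((p:ℝ)*b)) * vol I - 2 ≤ (optCount I : ℝ) := by
  classical
  have hp0 : 0 < p := by omega
  have hp0' : (0:ℝ) < p := by exact_mod_cast hp0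
  set x : Fin I.length → ℝ := fun i => I.get i with hxdef
  have hx0 : ∀ i, 0 < x i ∧ x i < b := by
    intro i
    exact hI _ (List.get_mem I i)
  set P : Fin I.length → Prop := fun i => 1/(p:ℝ) ≤ x i with hPdef
  set Q : Fin I.length → Prop := fun i => ¬ P i with hQdef
  set n1 := (univ.filter P).card with hn1def
  set vol1 := ∑ i ∈ univ.filter P, x i with hvol1
  set vol2 := ∑ i ∈ univ.filter Q, x i with hvol2
  have hvol2nn : 0 ≤ vol2 := Finset.sum_nonneg fun i _ => (hx0 i).1.le
  have hvol1nn : 0 ≤ vol1 := Finset.sum_nonneg fun i _ => (hx0 i).1.le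
  set c : ℝ := 1 + 1/(p:ℝ) with hcdef
  have hc0 : 0 < c := by positivity
  set m1 := n1 / p with hm1def
  set m2 := ⌊vol2 / c⌋₊ with hm2def
  set g : Fin I.length → ℕ :=
    fun i => if P i then rnk P i / p else m1 + ⌊psum x Q i / c⌋₊ with hgdef
  have hg : ∀ t < m1 + m2, 1 ≤ ∑ i ∈ univ.filter (fun i => g i = t), I.get i := by
    intro t ht
    by_cases htm : t < m1
    · -- big groups
      set A := univ.filter (fun i => P i ∧ rnk P i < (t+1)*p) with hAdef
      set B := univ.filter (fun i => P i ∧ rnk P i < t*p) with hBdef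
      have hAB : B ⊆ A := by
        intro i hi
        simp only [hAdef, hBdef, mem_filter] at hi ⊢
        refine ⟨hi.1, hi.2.1, ?_⟩
        have : t*p ≤ (t+1)*p := by nlinarith [hp0]
        omega
      have hA : (t+1)*p ≤ A.card := by
        apply count_prefix_lb
        have h1 : t + 1 ≤ m1 := htm
        calc (t+1)*p ≤ m1 * p := Nat.mul_le_mul_right p h1
          _ = n1 / p * p := rfl
          _ ≤ n1 := Nat.div_mul_le_self n1 p
      have hB : B.card ≤ t*p := count_prefix_ub P (t*p)
      have hD : univ.filter (fun i => P i ∧ rnk P i / p = t) = A \ B := by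
        ext i
        simp only [hAdef, hBdef, mem_filter, Finset.mem_sdiff]
        constructor
        · rintro ⟨_, hPi, hdiv⟩
          have h1 : t ≤ rnk P i / p := le_of_eq hdiv.symm
          have h2 : rnk P i / p < t + 1 := by omega
          rw [Nat.le_div_iff_mul_le hp0] at h1
          rw [Nat.div_lt_iff_lt_mul hp0] at h2
          refine ⟨⟨Finset.mem_univ _, hPi, h2⟩, ?_⟩
          rintro ⟨_, _, h3⟩
          omega
        · rintro ⟨⟨_, hPi, h2⟩, h3⟩
          have h4 : ¬ rnk P i < t * p := by
            intro hcon; exact h3 ⟨Finset.mem_univ _, hPi, hcon⟩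
          push_neg at h4
          refine ⟨Finset.mem_univ _, hPi, ?_⟩
          rw [← Nat.le_div_iff_mul_le hp0] at h4
          rw [← Nat.div_lt_iff_lt_mul hp0] at h2
          omega
      have hcard : p ≤ (A \ B).card := by
        rw [Finset.card_sdiff_of_subset hAB]
        have : (t+1)*p = t*p + p := by ring
        omega
      have hsub : A \ B ⊆ univ.filter (fun i => g i = t) := by
        intro i hi
        rw [← hD] at hi
        simp only [mem_filter] at hi ⊢
        refine ⟨Finset.mem_univ _, ?_⟩
        simp only [hgdef, if_pos hi.2.1, hi.2.2]
      calc (1:ℝ) = (p:ℝ) * (1/(p:ℝ)) := by field_simp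
        _ ≤ ((A \ B).card : ℝ) * (1/(p:ℝ)) := by
            apply mul_le_mul_of_nonneg_right _ (by positivity)
            exact_mod_cast hcard
        _ = (A \ B).card • (1/(p:ℝ)) := by rw [nsmul_eq_mul]
        _ ≤ ∑ i ∈ A \ B, x i := by
            apply Finset.card_nsmul_le_sum
            intro i hi
            rw [← hD] at hi
            simp only [mem_filter] at hi
            exact hi.2.1
        _ ≤ ∑ i ∈ univ.filter (fun i => g i = t), x i := by
            apply Finset.sum_le_sum_of_subset_of_nonneg hsub
            intro i _ _; exact (hx0 i).1.le
        _ = ∑ i ∈ univ.filter (fun i => g i = t), I.get i := rfl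
    · -- small groups
      push_neg at htm
      set t' := t - m1 with ht'def
      have htt : t = m1 + t' := by omega
      have ht' : t' < m2 := by omega
      set u1 : ℝ := (t' : ℝ) * c with hu1def
      set u2 : ℝ := ((t' : ℝ) + 1) * c with hu2def
      have hu1nn : 0 ≤ u1 := by positivity
      have hu12 : u1 ≤ u2 := by nlinarith
      set K1 := univ.filter (fun i => Q i ∧ psum x Q i < u1) with hK1def
      set K2 := univ.filter (fun i => Q i ∧ psum x Q i < u2) with hK2def
      have hK12 : K1 ⊆ K2 := by
        intro i hi
        simp only [hK1def, hK2def, mem_filter] at hi ⊢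
        exact ⟨hi.1, hi.2.1, lt_of_lt_of_le hi.2.2 hu12⟩
      have hxQnn : ∀ i, Q i → 0 ≤ x i := fun i _ => (hx0 i).1.le
      have hK2sum : u2 ≤ ∑ i ∈ K2, x i := by
        apply sum_prefix_lb x Q hxQnn
        have h1 : (t' + 1 : ℕ) ≤ m2 := by omega
        have h2 : ((t' + 1 : ℕ) : ℝ) ≤ vol2 / c := by
          rw [hm2def] at h1
          exact_mod_cast (Nat.le_floor_iff (by positivity)).mp h1
        rw [hu2def]
        push_cast at h2 ⊢
        have h3 : ((t':ℝ) + 1) * c ≤ (vol2 / c) * c :=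
          mul_le_mul_of_nonneg_right h2 hc0.le
        have h4 : (vol2 / c) * c = vol2 := by field_simp
        linarith
      have hK1sum : ∑ i ∈ K1, x i ≤ u1 + 1/(p:ℝ) := by
        apply sum_prefix_ub x Q hxQnn (1/(p:ℝ)) (by positivity) _ u1 hu1nn
        intro i hQi
        have : ¬ (1/(p:ℝ) ≤ x i) := hQi
        linarith [not_le.mp this]
      have hE : univ.filter (fun i => Q i ∧ ⌊psum x Q i / c⌋₊ = t') = K2 \ K1 := by
        ext i
        simp only [hK1def, hK2def, mem_filter, Finset.mem_sdiff]
        have hpsnn : 0 ≤ psum x Q i := Finset.sum_nonneg fun j hj => by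
          simp only [mem_filter] at hj
          exact (hx0 j).1.le
        have hiff : ⌊psum x Q i / c⌋₊ = t' ↔ u1 ≤ psum x Q i ∧ psum x Q i < u2 := by
          rw [Nat.floor_eq_iff (by positivity), le_div_iff₀ hc0, div_lt_iff₀ hc0,
            hu1def, hu2def]
        rw [hiff]
        constructor
        · rintro ⟨_, hQi, h1, h2⟩
          exact ⟨⟨Finset.mem_univ _, hQi, h2⟩, fun hcon => absurd hcon.2.2 (not_lt.mpr h1)⟩
        · rintro ⟨⟨_, hQi, h2⟩, h3⟩
          refine ⟨Finset.mem_univ _, hQi, ?_, h2⟩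
          by_contra hlt
          push_neg at hlt
          exact h3 ⟨Finset.mem_univ _, hQi, hlt⟩
      have hsub : K2 \ K1 ⊆ univ.filter (fun i => g i = t) := by
        intro i hi
        rw [← hE] at hi
        simp only [mem_filter] at hi ⊢
        refine ⟨Finset.mem_univ _, ?_⟩
        simp only [hgdef, if_neg hi.2.1, hi.2.2, htt]
      calc (1:ℝ) = c - 1/(p:ℝ) := by rw [hcdef]; ring
        _ = (u2 - u1) - 1/(p:ℝ) := by rw [hu1def, hu2def, hcdef]; ring
        _ ≤ ∑ i ∈ K2, x i - ∑ i ∈ K1, x i := by linarith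
        _ = ∑ i ∈ K2 \ K1, x i := (Finset.sum_sdiff_eq_sub hK12).symm
        _ ≤ ∑ i ∈ univ.filter (fun i => g i = t), x i := by
            apply Finset.sum_le_sum_of_subset_of_nonneg hsub
            intro i _ _; exact (hx0 i).1.le
        _ = ∑ i ∈ univ.filter (fun i => g i = t), I.get i := rfl
  have hopt : m1 + m2 ≤ optCount I :=
    groups_le_opt I (fun y hy => (hI y hy).1.le) (m1 + m2) g hg
  -- numerics
  have hvolsplit : vol I = vol1 + vol2 := by
    rw [vol_eq_sum I, hvol1, hvol2]
    rw [← Finset.sum_filter_add_sum_filter_not univ P x]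
  have hn1b : vol1 ≤ (n1 : ℝ) * b := by
    calc vol1 ≤ ∑ _i ∈ univ.filter P, b :=
          Finset.sum_le_sum fun i _ => (hx0 i).2.le
      _ = (n1:ℝ) * b := by rw [Finset.sum_const, nsmul_eq_mul]
  have hm1r : (n1 : ℝ) - (p:ℝ) ≤ (m1:ℝ) * p := by
    have h1 := Nat.div_add_mod n1 p
    have h2 : n1 % p < p := Nat.mod_lt _ hp0
    have h3 : n1 ≤ p * m1 + p := by
      have h4 : n1 = p * m1 + n1 % p := by
        rw [hm1def]; exact (Nat.div_add_mod n1 p).symm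
      omega
    have : (n1:ℝ) ≤ (p:ℝ) * (m1:ℝ) + p := by exact_mod_cast h3
    linarith
  have hm2r : vol2 / c - 1 ≤ (m2:ℝ) := by
    have := Nat.lt_floor_add_one (vol2 / c)
    rw [← hm2def] at this
    linarith
  set R := min ((p:ℝ)/((p:ℝ)+1)) (1/((p:ℝ)*b)) with hRdef
  have hR1 : R ≤ 1/((p:ℝ)*b) := min_le_right _ _
  have hR2 : R ≤ 1/c := by
    have : (p:ℝ)/((p:ℝ)+1) = 1/c := by
      rw [hcdef]; field_simp
    rw [← this]; exact min_le_left _ _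
  have hRnn : 0 ≤ R := le_min (by positivity) (by positivity)
  have hkey1 : R * vol1 ≤ (m1:ℝ) + 1 := by
    have h1 : R * vol1 ≤ vol1 / ((p:ℝ)*b) := by
      rw [div_eq_mul_inv, mul_comm vol1]
      apply mul_le_mul_of_nonneg_right _ hvol1nn
      rw [← one_div]; exact hR1
    have h2 : vol1 / ((p:ℝ)*b) ≤ (n1:ℝ)/(p:ℝ) := by
      rw [div_le_div_iff₀ (by positivity) hp0']
      calc vol1 * (p:ℝ) ≤ ((n1:ℝ) * b) * (p:ℝ) := by
            apply mul_le_mul_of_nonneg_right hn1b hp0'.le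
        _ = (n1:ℝ) * ((p:ℝ)*b) := by ring
    have h3 : (n1:ℝ)/(p:ℝ) ≤ (m1:ℝ) + 1 := by
      rw [div_le_iff₀ hp0']
      linarith
    linarith
  have hkey2 : R * vol2 ≤ (m2:ℝ) + 1 := by
    have h1 : R * vol2 ≤ vol2 / c := by
      rw [div_eq_mul_inv, mul_comm vol2]
      apply mul_le_mul_of_nonneg_right _ hvol2nn
      rw [← one_div]; exact hR2
    linarith
  have hcast : ((m1 : ℕ) : ℝ) + ((m2 : ℕ) : ℝ) ≤ (optCount I : ℝ) := by
    exact_mod_cast hopt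
  rw [hvolsplit]
  have hdist : R * (vol1 + vol2) = R * vol1 + R * vol2 := by ring
  linarith

lemma minRate_eq_s15 (S : Set ℝ) (A : List ℝ → ℕ) (c : ℝ)
    (hub : ∀ ε > (0:ℝ), ∀ᶠ v : ℝ in Filter.atTop,
      ∃ I : List ℝ, (∀ x ∈ I, x ∈ S) ∧ vol I = v ∧ (A I : ℝ) / v ≤ c + ε)
    (hlb : ∀ ε > (0:ℝ), ∀ᶠ v : ℝ in Filter.atTop,
      ∀ I : List ℝ, (∀ x ∈ I, x ∈ S) → vol I = v → c - ε ≤ (A I : ℝ) / v) :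
    minRate S A = c := by
  have htend : Filter.Tendsto (fun v : ℝ =>
      sInf {r : ℝ | ∃ I : List ℝ, (∀ x ∈ I, x ∈ S) ∧ vol I = v ∧ r = (A I : ℝ) / v})
      Filter.atTop (nhds c) := by
    rw [Metric.tendsto_atTop]
    intro ε hε
    obtain ⟨N1, hN1⟩ := Filter.eventually_atTop.mp (hub (ε/2) (by linarith))
    obtain ⟨N2, hN2⟩ := Filter.eventually_atTop.mp (hlb (ε/2) (by linarith))
    refine ⟨max N1 N2, fun v hv => ?_⟩
    obtain ⟨I, hIS, hIv, hIr⟩ := hN1 v (le_trans (le_max_left _ _) hv)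
    have hlbv := hN2 v (le_trans (le_max_right _ _) hv)
    have hne : {r : ℝ | ∃ I : List ℝ, (∀ x ∈ I, x ∈ S) ∧ vol I = v ∧ r = (A I : ℝ) / v}.Nonempty :=
      ⟨(A I : ℝ) / v, ⟨I, hIS, hIv, rfl⟩⟩
    have hbdd : BddBelow {r : ℝ | ∃ I : List ℝ, (∀ x ∈ I, x ∈ S) ∧ vol I = v ∧ r = (A I : ℝ) / v} := by
      refine ⟨c - ε/2, fun r hr => ?_⟩
      obtain ⟨J, hJ1, hJ2, hJ3⟩ := hr
      rw [hJ3]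
      exact hlbv J hJ1 hJ2
    have hle : sInf {r : ℝ | ∃ I : List ℝ, (∀ x ∈ I, x ∈ S) ∧ vol I = v ∧ r = (A I : ℝ) / v}
        ≤ c + ε/2 :=
      le_trans (csInf_le hbdd ⟨I, hIS, hIv, rfl⟩) hIr
    have hge : c - ε/2 ≤ sInf {r : ℝ | ∃ I : List ℝ, (∀ x ∈ I, x ∈ S) ∧ vol I = v ∧ r = (A I : ℝ) / v} := by
      apply le_csInf hne
      rintro r ⟨J, hJ1, hJ2, hJ3⟩
      rw [hJ3]
      exact hlbv J hJ1 hJ2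
    rw [Real.dist_eq, abs_lt]
    constructor <;> linarith
  exact htend.liminf_eq

set_option maxHeartbeats 2000000 in
lemma minRate_dnf (a b : ℝ) (p : ℕ) (hp : 2 ≤ p) (ha0 : 0 ≤ a) (hab : a < b)
    (hb1 : b ≤ 1) (hpb : 1/(p:ℝ) < b) (hap : a < 1/(p:ℝ)) :
    minRate (Set.Ioo a b) dnfCount = 1/(1+b) := by
  have hp0' : (0:ℝ) < p := by positivity
  have hb0 : 0 < b := lt_trans (by positivity) hpb
  have hpa1 : (p:ℝ) * a < 1 := by
    have h := mul_lt_mul_of_pos_left hap hp0'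
    rw [mul_one_div, div_self (ne_of_gt hp0')] at h
    exact h
  apply minRate_eq_s15
  · -- upper bound
    intro ε hε
    set ε' : ℝ := min (ε/2) (min (b/4) (min ((1 - (p:ℝ)*a)/2) (b - a))) with hε'def
    have hε'0 : 0 < ε' := by
      apply lt_min (by linarith)
      apply lt_min (by linarith)
      exact lt_min (by linarith) (by linarith)
    have hε'1 : ε' ≤ ε/2 := min_le_left _ _
    have hε'2 : ε' ≤ b/4 := le_trans (min_le_right _ _) (min_le_left _ _)
    have hε'3 : ε' ≤ (1 - (p:ℝ)*a)/2 :=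
      le_trans (min_le_right _ _) (le_trans (min_le_right _ _) (min_le_left _ _))
    have hε'4 : ε' ≤ b - a :=
      le_trans (min_le_right _ _) (le_trans (min_le_right _ _) (min_le_right _ _))
    set D1 : ℝ := 1 + b - ε' with hD1
    set D2 : ℝ := 1 + b - 2*ε' with hD2
    have hD1pos : 1 ≤ D1 := by rw [hD1]; linarith
    have hD2pos : 1 ≤ D2 := by rw [hD2]; linarith
    have hD1' : (0:ℝ) < D1 := by linarith
    have hD2' : (0:ℝ) < D2 := by linarith
    have hD1le2 : D1 ≤ 2 := by rw [hD1]; linarith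
    rw [Filter.eventually_atTop]
    refine ⟨8/ε' + 8, fun v hv => ?_⟩
    have hv1 : 1 ≤ v := by
      have : (0:ℝ) < 8/ε' := by positivity
      linarith
    have hv0 : 0 < v := by linarith
    set k := ⌈v / D1⌉₊ with hkdef
    have hk0 : 0 < k := by
      rw [hkdef, Nat.ceil_pos]
      exact div_pos hv0 hD1'
    have hk0' : (0:ℝ) < k := by exact_mod_cast hk0
    have hkge : v / D1 ≤ (k:ℝ) := Nat.le_ceil _
    have hkle : (k:ℝ) ≤ v / D1 + 1 := by
      have := Nat.ceil_lt_add_one (show (0:ℝ) ≤ v / D1 by positivity)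
      rw [hkdef]
      linarith
    set s : ℝ := v / k with hsdef
    have hs_le : s ≤ D1 := by
      rw [hsdef, div_le_iff₀ hk0']
      calc v = (v / D1) * D1 := (div_mul_cancel₀ v (ne_of_gt hD1')).symm
        _ ≤ (k:ℝ) * D1 := mul_le_mul_of_nonneg_right hkge (by linarith)
        _ = D1 * (k:ℝ) := mul_comm _ _
    have hs_gt : D2 < s := by
      rw [hsdef, lt_div_iff₀ hk0']
      have h1 : (k:ℝ) * D2 ≤ (v / D1 + 1) * D2 :=
        mul_le_mul_of_nonneg_right hkle (by linarith)
      have hsplit : (v / D1 + 1) * D2 = v - v*(ε'/D1) + D2 := by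
        have hD2eq : D2 = D1 - ε' := by rw [hD1, hD2]; ring
        rw [hD2eq]
        field_simp
      have h5 : ε'/2 ≤ ε'/D1 := by
        rw [div_le_div_iff₀ two_pos hD1']
        nlinarith
      have h5v : v * (ε'/2) ≤ v * (ε'/D1) := mul_le_mul_of_nonneg_left h5 hv0.le
      have h6 : (8/ε' + 8) * (ε'/2) ≤ v * (ε'/2) :=
        mul_le_mul_of_nonneg_right hv (by positivity)
      have h7 : (8/ε' + 8) * (ε'/2) = 4 + 4*ε' := by field_simp; ring
      have h8 : D2 ≤ 2 := by rw [hD2]; linarith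
      have hgoal : D2 < v * (ε'/D1) := by linarith
      calc D2 * (k:ℝ) = (k:ℝ) * D2 := mul_comm _ _
        _ ≤ (v/D1+1) * D2 := h1
        _ = v - v*(ε'/D1) + D2 := hsplit
        _ < v := by linarith
    set t : ℝ := b - ε'/2 with htdef
    set u : ℝ := s - t with hudef
    have hu1 : u < 1 := by rw [hudef, htdef]; linarith [hs_le, hD1.le]
    have hu0 : (p:ℝ)*a < u := by
      rw [hudef, htdef]
      have hD2v : D2 = 1 + b - 2*ε' := hD2
      nlinarith [hs_gt, hε'3]
    have hu0' : 0 < u := by nlinarith [hu0, hp0', ha0]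
    have hclose : 1 ≤ u + t := by
      rw [hudef]
      have h := hs_gt.le
      linarith [hD2pos]
    set I : List ℝ := (List.replicate k (List.replicate p (u / p) ++ [t])).flatten with hIdef
    have hmem : ∀ y ∈ I, y ∈ Set.Ioo a b := by
      intro y hy
      rcases dnf_blocks_mem p u t k y hy with rfl | rfl
      · constructor
        · rw [lt_div_iff₀ hp0']
          nlinarith [hu0]
        · have h1 : u / (p:ℝ) < 1 / p := by
            rw [div_lt_div_iff₀ hp0' hp0']
            nlinarith [hu1, hp0']
          linarith [hpb]
      · exact ⟨by rw [htdef]; linarith, by rw [htdef]; linarith⟩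
    have hvol : vol I = v := by
      rw [hIdef]
      unfold vol
      rw [dnf_blocks_sum p (by omega) u t k]
      have h1 : u + t = s := by rw [hudef]; ring
      rw [h1, hsdef]
      field_simp
    have hcount : dnfCount I = k := dnf_blocks_count p (by omega) u t hu0' hu1 hclose k
    refine ⟨I, hmem, hvol, ?_⟩
    rw [hcount]
    have hkv : (k:ℝ)/v = 1/s := by
      rw [hsdef, one_div_div]
    rw [hkv]
    have h1 : 1/s ≤ 1/D2 := one_div_le_one_div_of_le hD2' hs_gt.le
    have h2 : 1/D2 - 1/(1+b) = 2*ε' / (D2*(1+b)) := by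
      rw [hD2]
      have hne1 : (1:ℝ) + b - 2*ε' ≠ 0 := by linarith
      have hne2 : (1:ℝ) + b ≠ 0 := by linarith
      field_simp
      ring
    have h3 : 2*ε' / (D2*(1+b)) ≤ 2*ε' := by
      apply div_le_self (by positivity)
      nlinarith [hD2pos]
    linarith [hε'1]
  · -- lower bound
    intro ε hε
    rw [Filter.eventually_atTop]
    refine ⟨max 1 (1/ε), fun v hv => ?_⟩
    intro I hIS hIv
    have hv1 : (1:ℝ) ≤ v := le_trans (le_max_left _ _) hv
    have hv0 : (0:ℝ) < v := by linarith
    have hvε : 1/ε ≤ v := le_trans (le_max_right _ _) hv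
    have hb0' : (0:ℝ) < 1 + b := by linarith
    have hIb : ∀ y ∈ I, 0 < y ∧ y < b := by
      intro y hy
      obtain ⟨h1, h2⟩ := hIS y hy
      exact ⟨by linarith, h2⟩
    have hmain := dnf_lb b hb0 I hIb
    rw [hIv] at hmain
    have h1v : 1/v ≤ ε := by
      rw [div_le_iff₀ hv0]
      have h := mul_le_mul_of_nonneg_left hvε hε.le
      rw [mul_one_div, div_self (ne_of_gt hε)] at h
      linarith
    have hdnf : (v - 1)/(1+b) ≤ (dnfCount I : ℝ) := by
      rw [div_le_iff₀ hb0']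
      linarith
    have h2 : (v-1)/(1+b)/v ≤ (dnfCount I:ℝ)/v := by
      gcongr
    have h3 : (v-1)/(1+b)/v = 1/(1+b) - 1/((1+b)*v) := by
      field_simp
    have h4 : 1/((1+b)*v) ≤ 1/v := by
      apply one_div_le_one_div_of_le hv0
      nlinarith
    linarith

set_option maxHeartbeats 2000000 in
lemma minRate_opt (a b : ℝ) (p : ℕ) (hp : 2 ≤ p) (ha0 : 0 ≤ a) (hab : a < b)
    (hbp1 : ((p:ℝ)-1)*b ≤ 1) (hpb : 1/(p:ℝ) < b) (hap : a < 1/(p:ℝ)) :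
    minRate (Set.Ioo a b) optCount = min ((p:ℝ)/((p:ℝ)+1)) (1/((p:ℝ)*b)) := by
  have hp0' : (0:ℝ) < p := by positivity
  have hp1' : (1:ℝ) ≤ (p:ℝ) - 1 := by
    have : (2:ℝ) ≤ (p:ℝ) := by exact_mod_cast hp
    linarith
  have hb0 : 0 < b := lt_trans (by positivity) hpb
  have hpa1 : (p:ℝ) * a < 1 := by
    have h := mul_lt_mul_of_pos_left hap hp0'
    rw [mul_one_div, div_self (ne_of_gt hp0')] at h
    exact h
  set R := min ((p:ℝ)/((p:ℝ)+1)) (1/((p:ℝ)*b)) with hRdef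
  apply minRate_eq_s15
  · -- upper bound
    intro ε hε
    rcases le_total ((p:ℝ)/((p:ℝ)+1)) (1/((p:ℝ)*b)) with hcase | hcase
    · -- R = p/(p+1) : items slightly below 1/p
      have hR : R = (p:ℝ)/((p:ℝ)+1) := min_eq_left hcase
      rw [Filter.eventually_atTop]
      refine ⟨max (a/(1 - (p:ℝ)*a) + 1) (max 1 (1/ε)), fun v hv => ?_⟩
      have hva : a/(1 - (p:ℝ)*a) + 1 ≤ v := le_trans (le_max_left _ _) hv
      have hv1 : (1:ℝ) ≤ v := le_trans (le_trans (le_max_left _ _) (le_max_right _ _)) hv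
      have hvε : 1/ε ≤ v := le_trans (le_trans (le_max_right _ _) (le_max_right _ _)) hv
      have hv0 : (0:ℝ) < v := by linarith
      have h1v : 1/v ≤ ε := by
        rw [div_le_iff₀ hv0]
        have h := mul_le_mul_of_nonneg_left hvε hε.le
        rw [mul_one_div, div_self (ne_of_gt hε)] at h
        linarith
      set n := ⌊(p:ℝ)*v⌋₊ + 1 with hndef
      have hn0' : (0:ℝ) < n := by positivity
      have hngt : (p:ℝ)*v < n := by
        rw [hndef]
        push_cast
        exact Nat.lt_floor_add_one _
      have hnle : (n:ℝ) ≤ (p:ℝ)*v + 1 := by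
        rw [hndef]
        push_cast
        have := Nat.floor_le (show (0:ℝ) ≤ (p:ℝ)*v by positivity)
        linarith
      set s : ℝ := v / n with hsdef
      have hs0 : 0 < s := div_pos hv0 hn0'
      have hsp : s < 1/(p:ℝ) := by
        rw [hsdef, div_lt_div_iff₀ hn0' hp0']
        nlinarith
      have hsa : a < s := by
        rw [hsdef, lt_div_iff₀ hn0']
        have key : v * (1 - (p:ℝ)*a) > a := by
          have h1 : (a/(1 - (p:ℝ)*a) + 1) * (1 - (p:ℝ)*a) ≤ v * (1 - (p:ℝ)*a) := by
            apply mul_le_mul_of_nonneg_right hva (by linarith)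
          have h2 : (a/(1 - (p:ℝ)*a) + 1) * (1 - (p:ℝ)*a) = a + (1 - (p:ℝ)*a) := by
            have hne : 1 - (p:ℝ)*a ≠ 0 := by linarith
            rw [add_mul, div_mul_cancel₀ _ hne]; ring
          nlinarith
        nlinarith
      have hmem : ∀ y ∈ List.replicate n s, y ∈ Set.Ioo a b := by
        intro y hy
        rw [List.eq_of_mem_replicate hy]
        exact ⟨hsa, lt_trans hsp hpb⟩
      have hvol : vol (List.replicate n s) = v := by
        unfold vol
        rw [List.sum_replicate, nsmul_eq_mul, hsdef]
        field_simp
      have hopt : optCount (List.replicate n s) ≤ n / (p + 1) := by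
        apply opt_ub_replicate n p s hs0
        calc (p:ℝ) * s < (p:ℝ) * (1/(p:ℝ)) := by
              apply mul_lt_mul_of_pos_left hsp hp0'
          _ = 1 := by rw [mul_one_div, div_self (ne_of_gt hp0')]
      refine ⟨List.replicate n s, hmem, hvol, ?_⟩
      have hc1 : (optCount (List.replicate n s) : ℝ) ≤ (n:ℝ)/((p:ℝ)+1) := by
        calc (optCount (List.replicate n s) : ℝ) ≤ ((n / (p+1) : ℕ) : ℝ) := by
              exact_mod_cast hopt
          _ ≤ (n:ℝ)/(((p:ℕ)+1 : ℕ):ℝ) := Nat.cast_div_le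
          _ = (n:ℝ)/((p:ℝ)+1) := by push_cast; ring_nf
      have hc2 : (optCount (List.replicate n s) : ℝ)/v ≤ (n:ℝ)/(((p:ℝ)+1)*v) := by
        rw [← div_div]
        gcongr
      have hc3 : (n:ℝ)/(((p:ℝ)+1)*v) ≤ ((p:ℝ)*v+1)/(((p:ℝ)+1)*v) := by
        gcongr
      have hc4 : ((p:ℝ)*v+1)/(((p:ℝ)+1)*v) = (p:ℝ)/((p:ℝ)+1) + 1/(((p:ℝ)+1)*v) := by
        field_simp
      have hc5 : 1/(((p:ℝ)+1)*v) ≤ 1/v := by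
        apply one_div_le_one_div_of_le hv0
        nlinarith
      rw [hR]
      linarith
    · -- R = 1/(p*b) : items slightly below b
      have hR : R = 1/((p:ℝ)*b) := min_eq_right hcase
      rw [Filter.eventually_atTop]
      refine ⟨max (a*b/(b - a) + 1) (max 1 (1/ε)), fun v hv => ?_⟩
      have hva : a*b/(b - a) + 1 ≤ v := le_trans (le_max_left _ _) hv
      have hv1 : (1:ℝ) ≤ v := le_trans (le_trans (le_max_left _ _) (le_max_right _ _)) hv
      have hvε : 1/ε ≤ v := le_trans (le_trans (le_max_right _ _) (le_max_right _ _)) hv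
      have hv0 : (0:ℝ) < v := by linarith
      have h1v : 1/v ≤ ε := by
        rw [div_le_iff₀ hv0]
        have h := mul_le_mul_of_nonneg_left hvε hε.le
        rw [mul_one_div, div_self (ne_of_gt hε)] at h
        linarith
      set n := ⌊v/b⌋₊ + 1 with hndef
      have hn0' : (0:ℝ) < n := by positivity
      have hngt : v/b < n := by
        rw [hndef]
        push_cast
        exact Nat.lt_floor_add_one _
      have hnle : (n:ℝ) ≤ v/b + 1 := by
        rw [hndef]
        push_cast
        have := Nat.floor_le (show (0:ℝ) ≤ v/b by positivity)
        linarith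
      set s : ℝ := v / n with hsdef
      have hs0 : 0 < s := div_pos hv0 hn0'
      have hsb : s < b := by
        rw [hsdef, div_lt_iff₀ hn0']
        have h := mul_lt_mul_of_pos_left hngt hb0
        rw [mul_div_cancel₀ _ (ne_of_gt hb0)] at h
        linarith [h]
      have hsa : a < s := by
        rw [hsdef, lt_div_iff₀ hn0']
        have hba : 0 < b - a := by linarith
        have key : v * (1 - a/b) > a := by
          have h1 : (a*b/(b - a) + 1) * ((b-a)/b) ≤ v * ((b-a)/b) := by
            apply mul_le_mul_of_nonneg_right hva (by positivity)
          have h2 : (a*b/(b - a) + 1) * ((b-a)/b) = a + (b-a)/b := by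
            field_simp
          have h3 : 1 - a/b = (b-a)/b := by field_simp
          rw [h3]
          have h4 : 0 < (b-a)/b := by positivity
          linarith
        have h5 : v * (1 - a/b) = v - v*(a/b) := by ring
        have h6 : a * (n:ℝ) ≤ a * (v/b + 1) := by
          apply mul_le_mul_of_nonneg_left hnle ha0
        have h7 : a * (v/b + 1) = v*(a/b) + a := by ring_nf
        nlinarith
      have hmem : ∀ y ∈ List.replicate n s, y ∈ Set.Ioo a b := by
        intro y hy
        rw [List.eq_of_mem_replicate hy]
        exact ⟨hsa, hsb⟩
      have hvol : vol (List.replicate n s) = v := by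
        unfold vol
        rw [List.sum_replicate, nsmul_eq_mul, hsdef]
        field_simp
      have hopt : optCount (List.replicate n s) ≤ n / p := by
        have h := opt_ub_replicate n (p-1) s hs0 (by
          have hc : ((p-1 : ℕ):ℝ) = (p:ℝ) - 1 := by
            have : ((p-1 : ℕ):ℝ) = ((p:ℕ):ℝ) - ((1:ℕ):ℝ) := by
              rw [Nat.cast_sub (by omega)]
            rw [this]; push_cast; ring
          rw [hc]
          calc ((p:ℝ)-1) * s < ((p:ℝ)-1) * b := by
                apply mul_lt_mul_of_pos_left hsb (by linarith)
            _ ≤ 1 := hbp1)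
        have hpp : p - 1 + 1 = p := by omega
        rwa [hpp] at h
      refine ⟨List.replicate n s, hmem, hvol, ?_⟩
      have hc1 : (optCount (List.replicate n s) : ℝ) ≤ (n:ℝ)/(p:ℝ) := by
        calc (optCount (List.replicate n s) : ℝ) ≤ ((n / p : ℕ) : ℝ) := by
              exact_mod_cast hopt
          _ ≤ (n:ℝ)/(p:ℝ) := Nat.cast_div_le
      have hc2 : (optCount (List.replicate n s) : ℝ)/v ≤ (n:ℝ)/((p:ℝ)*v) := by
        rw [← div_div]
        gcongr
      have hc3 : (n:ℝ)/((p:ℝ)*v) ≤ (v/b+1)/((p:ℝ)*v) := by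
        gcongr
      have hc4 : (v/b+1)/((p:ℝ)*v) = 1/((p:ℝ)*b) + 1/((p:ℝ)*v) := by
        field_simp
      have hc5 : 1/((p:ℝ)*v) ≤ 1/v := by
        apply one_div_le_one_div_of_le hv0
        nlinarith
      rw [hR]
      linarith
  · -- lower bound
    intro ε hε
    rw [Filter.eventually_atTop]
    refine ⟨max 1 (2/ε), fun v hv => ?_⟩
    intro I hIS hIv
    have hv1 : (1:ℝ) ≤ v := le_trans (le_max_left _ _) hv
    have hv0 : (0:ℝ) < v := by linarith
    have hvε : 2/ε ≤ v := le_trans (le_max_right _ _) hv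
    have h2v : 2/v ≤ ε := by
      rw [div_le_iff₀ hv0]
      have h := mul_le_mul_of_nonneg_left hvε hε.le
      rw [← mul_div_assoc, mul_div_cancel_left₀ _ (ne_of_gt hε)] at h
      linarith
    have hIb : ∀ y ∈ I, 0 < y ∧ y < b := by
      intro y hy
      obtain ⟨h1, h2⟩ := hIS y hy
      exact ⟨by linarith, h2⟩
    have hmain := opt_lb b p hp hb0 hpb I hIb
    rw [hIv] at hmain
    have hd : (R*v - 2)/v ≤ (optCount I : ℝ)/v := by gcongr
    have he : (R*v - 2)/v = R - 2/v := by
      field_simp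
    linarith


set_option maxHeartbeats 1000000 in
/-- If `(a,b) ⊆ (0,1)` contains a point `1/l` (integer `l ≥ 2`), and `1/p` is the
maximal point of the form `1/l` below `b`, with `1/p ∈ (a,b)`, then DNF restricted
to item sizes in `(a,b)` has min/min ratio `max{(1+1/p)/(1+b), p·b/(1+b)}`. -/
theorem dnf_minmin_restricted (a b : ℝ) (p : ℕ) (hp : 2 ≤ p)
    (hsub : Set.Ioo a b ⊆ Set.Ioo (0:ℝ) 1)
    (hborder : ∃ l : ℕ, 2 ≤ l ∧ (1/(l:ℝ)) ∈ Set.Ioo a b)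
    (hpb : 1/(p:ℝ) < b)
    (hpmax : ∀ l : ℕ, 1 ≤ l → 1/(l:ℝ) < b → 1/(l:ℝ) ≤ 1/(p:ℝ))
    (hap : a < 1/(p:ℝ)) :
    minRate (Set.Ioo a b) dnfCount / minRate (Set.Ioo a b) optCount
      = max ((1 + 1/(p:ℝ))/(1 + b)) ((p:ℝ)*b/(1 + b)) := by
  have hp0' : (0:ℝ) < p := by positivity
  have hb0 : (0:ℝ) < b := lt_trans (by positivity) hpb
  have hab : a < b := lt_trans hap hpb
  have ha0 : 0 ≤ a := by
    by_contra h
    push_neg at h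
    have h2 : a/2 ∈ Set.Ioo a b := ⟨by linarith, by linarith⟩
    have h3 := hsub h2
    have h4 : 0 < a/2 := h3.1
    linarith
  have hp2 : (2:ℝ) ≤ (p:ℝ) := by exact_mod_cast hp
  have hp1' : (1:ℝ) ≤ (p:ℝ) - 1 := by linarith
  have hcast : ((p-1:ℕ):ℝ) = (p:ℝ) - 1 := by
    rw [Nat.cast_sub (by omega : 1 ≤ p)]
    norm_num
  have hb1p : b ≤ 1/((p:ℝ)-1) := by
    by_contra hcon
    push_neg at hcon
    have h5 := hpmax (p-1) (by omega) (by rw [hcast]; exact hcon)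
    rw [hcast] at h5
    have hlt : 1/(p:ℝ) < 1/((p:ℝ)-1) :=
      one_div_lt_one_div_of_lt (by linarith) (by linarith)
    linarith
  have hbp1 : ((p:ℝ)-1)*b ≤ 1 := by
    have h6 := mul_le_mul_of_nonneg_left hb1p (by linarith : (0:ℝ) ≤ (p:ℝ)-1)
    rw [mul_one_div, div_self (by linarith : (p:ℝ)-1 ≠ 0)] at h6
    exact h6
  have hb1 : b ≤ 1 := by
    apply le_trans hb1p
    rw [div_le_one (by linarith)]
    linarith
  rw [minRate_dnf a b p hp ha0 hab hb1 hpb hap,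
      minRate_opt a b p hp ha0 hab hbp1 hpb hap]
  have h1b : (0:ℝ) < 1 + b := by linarith
  have hkey : (1 + 1/(p:ℝ)) * p = (p:ℝ) + 1 := by field_simp
  rcases le_total ((p:ℝ)/((p:ℝ)+1)) (1/((p:ℝ)*b)) with hcase | hcase
  · rw [min_eq_left hcase]
    have h := (div_le_div_iff₀ (by positivity) (by positivity)).mp hcase
    have hle : (p:ℝ)*b/(1+b) ≤ (1 + 1/(p:ℝ))/(1+b) := by
      rw [div_le_div_iff₀ h1b h1b]
      have hpb1 : (p:ℝ)*b ≤ 1 + 1/(p:ℝ) := by nlinarith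
      nlinarith
    rw [max_eq_left hle]
    have hpne : (p:ℝ) ≠ 0 := ne_of_gt hp0'
    have hp1ne : (p:ℝ) + 1 ≠ 0 := by positivity
    have h1bne : (1:ℝ) + b ≠ 0 := ne_of_gt h1b
    rw [div_eq_iff (ne_of_gt (show (0:ℝ) < (p:ℝ)/((p:ℝ)+1) by positivity))]
    field_simp
  · rw [min_eq_right hcase]
    have h := (div_le_div_iff₀ (by positivity) (by positivity)).mp hcase
    have hge : (1 + 1/(p:ℝ))/(1+b) ≤ (p:ℝ)*b/(1+b) := by
      rw [div_le_div_iff₀ h1b h1b]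
      have hpb1 : 1 + 1/(p:ℝ) ≤ (p:ℝ)*b := by nlinarith
      nlinarith
    rw [max_eq_right hge]
    have hpne : (p:ℝ) ≠ 0 := ne_of_gt hp0'
    have hpbne : (p:ℝ)*b ≠ 0 := by positivity
    have h1bne : (1:ℝ) + b ≠ 0 := ne_of_gt h1b
    rw [div_eq_iff (ne_of_gt (show (0:ℝ) < 1/((p:ℝ)*b) by positivity))]
    field_simp
end

section
/- Let p ≥ 2 be an integer and let x_1, …, x_p be real numbers with 0 < x_i < 1/(p−1) for every i and x_1 + ⋯ + x_p ≥ 1. Then the number of indices i with x_i < 1/(p+1) is at most the number of indices i with x_i ≥ 1/p. -/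
open Filter MeasureTheory

/-- If `p ≥ 2` and `x₁, …, x_p` satisfy `0 < xᵢ < 1/(p-1)` and `x₁ + ⋯ + x_p ≥ 1`,
then the number of indices with `xᵢ < 1/(p+1)` is at most the number of indices
with `xᵢ ≥ 1/p`. -/
theorem small_le_large_in_covered_bin (p : ℕ) (hp : 2 ≤ p) (x : Fin p → ℝ)
    (hpos : ∀ i, 0 < x i) (hlt : ∀ i, x i < 1/((p:ℝ)-1))
    (hsum : 1 ≤ ∑ i, x i) :
    (Finset.univ.filter fun i => x i < 1/((p:ℝ)+1)).card ≤
    (Finset.univ.filter fun i => 1/(p:ℝ) ≤ x i).card := by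
  classical
  by_contra hcon
  push_neg at hcon
  have hpR : (2:ℝ) ≤ (p:ℝ) := by exact_mod_cast hp
  set P : Fin p → Prop := fun i => 1/(p:ℝ) ≤ x i with hP
  set Q : Fin p → Prop := fun i => x i < 1/((p:ℝ)+1) with hQ
  have hQP : ∀ i, Q i → ¬ P i := by
    intro i hq hpi
    have h1 : 1/((p:ℝ)+1) < 1/(p:ℝ) := by
      apply one_div_lt_one_div_of_lt <;> linarith
    simp only [hP, hQ] at *
    linarith
  set L := (Finset.univ.filter fun i => P i).card with hL
  set S := (Finset.univ.filter fun i => Q i).card with hS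
  set M := ((Finset.univ.filter fun i => ¬ P i).filter fun i => ¬ Q i).card with hM
  -- card identity
  have hcard1 : L + (Finset.univ.filter fun i => ¬ P i).card = p := by
    rw [hL]
    rw [Finset.card_filter_add_card_filter_not]
    simp
  have hcard2 : ((Finset.univ.filter fun i => ¬ P i).filter fun i => Q i).card + M = (Finset.univ.filter fun i => ¬ P i).card := by
    rw [hM, Finset.card_filter_add_card_filter_not]
  have hQeq : ((Finset.univ.filter fun i => ¬ P i).filter fun i => Q i) = (Finset.univ.filter fun i => Q i) := by
    rw [Finset.filter_filter]
    apply Finset.filter_congr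
    intro i _
    exact ⟨fun h => h.2, fun h => ⟨hQP i h, h⟩⟩
  have hcard : L + (S + M) = p := by
    rw [← hcard1, ← hcard2, hQeq, hS]
  -- sum bound
  have hne : (Finset.univ : Finset (Fin p)).Nonempty :=
    ⟨⟨0, by omega⟩, Finset.mem_univ _⟩
  have hsum2 : ∑ i, x i < ∑ i, (if P i then 1/((p:ℝ)-1) else if Q i then 1/((p:ℝ)+1) else 1/(p:ℝ)) := by
    apply Finset.sum_lt_sum_of_nonempty hne
    intro i _
    by_cases h1 : P i
    · simp only [h1, if_true]; exact hlt i
    · by_cases h2 : Q i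
      · simp only [h1, h2, if_true, if_false]; exact h2
      · simp only [h1, h2, if_false]
        simp only [hP, not_le] at h1
        exact h1
  have hsum3 : ∑ i, (if P i then 1/((p:ℝ)-1) else if Q i then 1/((p:ℝ)+1) else 1/(p:ℝ))
      = L * (1/((p:ℝ)-1)) + (S * (1/((p:ℝ)+1)) + M * (1/(p:ℝ))) := by
    rw [Finset.sum_ite, Finset.sum_ite, Finset.sum_const, Finset.sum_const, Finset.sum_const,
      hQeq]
    simp [hL, hS, hM, mul_comm]
  have hLS : L + 1 ≤ S := hcon
  have hLR : (L:ℝ) + ((S:ℝ) + (M:ℝ)) = (p:ℝ) := by exact_mod_cast hcard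
  have hLSR : (L:ℝ) + 1 ≤ (S:ℝ) := by exact_mod_cast hLS
  have h2L : 2*(L:ℝ) + 1 ≤ (p:ℝ) := by
    have h' : 2*L + 1 ≤ p := by omega
    exact_mod_cast h'
  have hM0 : (0:ℝ) ≤ (M:ℝ) := Nat.cast_nonneg _
  have hd1 : (0:ℝ) < (p:ℝ) - 1 := by linarith
  have hd2 : (0:ℝ) < (p:ℝ) + 1 := by linarith
  have hd3 : (0:ℝ) < (p:ℝ) := by linarith
  rw [hsum3] at hsum2
  have key : (L:ℝ) * (1/((p:ℝ)-1)) + ((S:ℝ) * (1/((p:ℝ)+1)) + (M:ℝ) * (1/(p:ℝ))) ≤ 1 := by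
    have hexp : (L:ℝ) * (1/((p:ℝ)-1)) + ((S:ℝ) * (1/((p:ℝ)+1)) + (M:ℝ) * (1/(p:ℝ)))
        = ((L:ℝ)*(p:ℝ)*((p:ℝ)+1) + (S:ℝ)*(p:ℝ)*((p:ℝ)-1) + (M:ℝ)*((p:ℝ)-1)*((p:ℝ)+1)) / ((p:ℝ)*((p:ℝ)-1)*((p:ℝ)+1)) := by
      field_simp
      ring
    have hMe : (M:ℝ) = (p:ℝ) - (L:ℝ) - (S:ℝ) := by linarith
    rw [hexp, div_le_one (by positivity), hMe]
    nlinarith [mul_nonneg (sub_nonneg.mpr hLSR) hd1.le, h2L]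
  linarith
end

section
/- For each n ≥ 2, let I_n be a random sequence of n independent items, each of which has size ε_n with probability 1/2 and size 1 − ε_n with probability 1/2, where 0 < ε_n < 1/n. Then lim_{n→∞} E[DNF(I_n)]/n = 2/5, while lim_{n→∞} E[Opt(I_n)]/n = 1/2; consequently, lim_{n→∞} E[DNF(I_n)]/E[Opt(I_n)] = 4/5. -/
open Filter MeasureTheory

/- ======================= auxiliary development ======================= -/

section Aux

open Finset

/-- Sum over boolean tuples of length `n+1` split at the last coordinate. -/
lemma sum_ofFn_succ {M : Type*} [AddCommMonoid M] (n : ℕ) (G : List Bool → M) :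
    ∑ f : Fin (n+1) → Bool, G (List.ofFn f)
      = ∑ g : Fin n → Bool, ∑ b : Bool, G (List.ofFn g ++ [b]) := by
  rw [← Equiv.sum_comp (Fin.snocEquiv (fun _ => Bool)) (fun f => G (List.ofFn f)),
    Fintype.sum_prod_type, Finset.sum_comm]
  apply Finset.sum_congr rfl; intro g _
  apply Finset.sum_congr rfl; intro b _
  congr 1
  rw [List.ofFn_succ']
  simp [Fin.snocEquiv, List.concat_eq_append]

/-- The abstract three-state DNF chain on boolean items. -/
def bStep (s : ℕ × ℕ) (x : Bool) : ℕ × ℕ :=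
  if s.1 = 0 then (if x then (1, s.2) else (2, s.2))
  else if s.1 = 1 then (if x then (1, s.2) else (0, s.2 + 1))
  else (0, s.2 + 1)

/-- Potential (solution of the Poisson equation, scaled by 10). -/
def Hpot (a : ℕ) : ℕ := if a = 0 then 0 else if a = 1 then 2 else 6

lemma Hpot_le (a : ℕ) : Hpot a ≤ 6 := by unfold Hpot; split_ifs <;> omega

lemma bStep_sum (s : ℕ × ℕ) :
    ∑ b : Bool, (10 * (bStep s b).2 + Hpot (bStep s b).1)
      = 2 * (10 * s.2 + Hpot s.1) + 8 := by
  rcases s with ⟨a, c⟩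
  match a with
  | 0 => simp [bStep, Hpot]; ring
  | 1 => simp [bStep, Hpot]; ring
  | (k+2) => simp [bStep, Hpot]; ring

lemma dnf_sum (n : ℕ) :
    ∑ f : Fin n → Bool,
      (10 * ((List.ofFn f).foldl bStep (0,0)).2 + Hpot ((List.ofFn f).foldl bStep (0,0)).1)
      = 4 * n * 2 ^ n := by
  induction n with
  | zero => simp [Hpot]
  | succ n ih =>
    rw [sum_ofFn_succ n (fun l => 10 * (l.foldl bStep (0,0)).2 + Hpot (l.foldl bStep (0,0)).1)]
    have key : ∀ g : Fin n → Bool, ∑ b : Bool,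
        (10 * (((List.ofFn g) ++ [b]).foldl bStep (0,0)).2
          + Hpot (((List.ofFn g) ++ [b]).foldl bStep (0,0)).1)
        = 2 * (10 * ((List.ofFn g).foldl bStep (0,0)).2
            + Hpot ((List.ofFn g).foldl bStep (0,0)).1) + 8 := by
      intro g
      simp only [List.foldl_append, List.foldl_cons, List.foldl_nil]
      exact bStep_sum _
    rw [Finset.sum_congr rfl (fun g _ => key g), Finset.sum_add_distrib,
      ← Finset.mul_sum, ih]
    simp [Finset.sum_const]
    ring

lemma dnfStep_pos (v x : ℝ) (c : ℕ) (h : 1 ≤ v + x) : dnfStep (v, c) x = (0, c + 1) := by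
  simp [dnfStep, h]
lemma dnfStep_neg (v x : ℝ) (c : ℕ) (h : ¬ 1 ≤ v + x) : dnfStep (v, c) x = (v + x, c) := by
  simp [dnfStep, h]

noncomputable def lvl (ε : ℝ) (a k : ℕ) : ℝ :=
  if a = 0 then 0 else if a = 1 then k * ε else 1 - ε

lemma lvl0 (ε : ℝ) (k : ℕ) : lvl ε 0 k = 0 := by simp [lvl]
lemma lvl1 (ε : ℝ) (k : ℕ) : lvl ε 1 k = k * ε := by simp [lvl]
lemma lvl2 (ε : ℝ) (k : ℕ) : lvl ε 2 k = 1 - ε := by simp [lvl]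

lemma dnf_corr (ε : ℝ) (n : ℕ) (hε : 0 < ε) (hn : (n : ℝ) * ε < 1) (h2 : 2 * ε < 1) :
    ∀ (l : List Bool) (k c a : ℕ), k + l.length ≤ n →
      ((a = 0 ∧ k = 0) ∨ (a = 1 ∧ 1 ≤ k) ∨ a = 2) →
      (List.foldl dnfStep (lvl ε a k, c) (l.map (fun b => if b then ε else 1 - ε))).2
        = (List.foldl bStep (a, c) l).2 := by
  intro l
  induction l with
  | nil => intro k c a _ _; simp
  | cons x l ih =>
    intro k c a hlen hinv
    have hlen' : k + l.length + 1 ≤ n := by simp [List.length_cons] at hlen; omega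
    have hεlt1 : ε < 1 := by linarith
    simp only [List.map_cons, List.foldl_cons]
    rcases hinv with ⟨ha, hk⟩ | ⟨ha, hk⟩ | ha
    · subst ha hk
      cases x with
      | true =>
        rw [if_pos rfl, lvl0, dnfStep_neg 0 ε c (by linarith),
          show bStep (0, c) true = (1, c) from rfl,
          show ((0 : ℝ) + ε, c) = (lvl ε 1 1, c) by rw [lvl1]; norm_num]
        exact ih 1 c 1 (by omega) (Or.inr (Or.inl ⟨rfl, le_refl 1⟩))
      | false =>
        rw [if_neg (by simp), lvl0, dnfStep_neg 0 (1 - ε) c (by linarith),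
          show bStep (0, c) false = (2, c) from rfl,
          show ((0 : ℝ) + (1 - ε), c) = (lvl ε 2 0, c) by rw [lvl2]; norm_num]
        exact ih 0 c 2 (by omega) (Or.inr (Or.inr rfl))
    · subst ha
      cases x with
      | true =>
        have hkn : (k : ℝ) + 1 ≤ (n : ℝ) := by exact_mod_cast (by omega : k + 1 ≤ n)
        have hno : ¬ (1 : ℝ) ≤ (k : ℝ) * ε + ε := by
          push_neg
          calc (k : ℝ) * ε + ε = ((k : ℝ) + 1) * ε := by ring
            _ ≤ (n : ℝ) * ε := mul_le_mul_of_nonneg_right hkn hε.le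
            _ < 1 := hn
        rw [if_pos rfl, lvl1, dnfStep_neg _ ε c hno,
          show bStep (1, c) true = (1, c) from rfl,
          show ((k : ℝ) * ε + ε, c) = (lvl ε 1 (k + 1), c) by rw [lvl1]; push_cast; ring_nf]
        exact ih (k+1) c 1 (by omega) (Or.inr (Or.inl ⟨rfl, by omega⟩))
      | false =>
        have hk1 : (1 : ℝ) ≤ (k : ℝ) := by exact_mod_cast hk
        have hyes : (1 : ℝ) ≤ (k : ℝ) * ε + (1 - ε) := by nlinarith
        rw [if_neg (by simp), lvl1, dnfStep_pos _ (1 - ε) c hyes,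
          show bStep (1, c) false = (0, c + 1) from rfl,
          show ((0 : ℝ), c + 1) = (lvl ε 0 0, c + 1) by rw [lvl0]]
        exact ih 0 (c+1) 0 (by omega) (Or.inl ⟨rfl, rfl⟩)
    · subst ha
      cases x with
      | true =>
        rw [if_pos rfl, lvl2, dnfStep_pos _ ε c (by linarith),
          show bStep (2, c) true = (0, c + 1) from rfl,
          show ((0 : ℝ), c + 1) = (lvl ε 0 0, c + 1) by rw [lvl0]]
        exact ih 0 (c+1) 0 (by omega) (Or.inl ⟨rfl, rfl⟩)
      | false =>
        rw [if_neg (by simp), lvl2, dnfStep_pos _ (1 - ε) c (by linarith),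
          show bStep (2, c) false = (0, c + 1) from rfl,
          show ((0 : ℝ), c + 1) = (lvl ε 0 0, c + 1) by rw [lvl0]]
        exact ih 0 (c+1) 0 (by omega) (Or.inl ⟨rfl, rfl⟩)

lemma dnfCount_eq_bool (ε : ℝ) (n : ℕ) (hε : 0 < ε) (hn : (n : ℝ) * ε < 1) (h2 : 2 * ε < 1)
    (f : Fin n → Bool) :
    dnfCount (List.ofFn fun i => if f i then ε else 1 - ε)
      = ((List.ofFn f).foldl bStep (0, 0)).2 := by
  have h1 : (List.ofFn fun i => if f i then ε else 1 - ε)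
      = (List.ofFn f).map (fun b => if b then ε else 1 - ε) := by
    rw [List.map_ofFn]; rfl
  rw [dnfCount, h1]
  rw [show ((0 : ℝ), (0 : ℕ)) = (lvl ε 0 0, (0:ℕ)) by rw [lvl0]]
  exact dnf_corr ε n hε hn h2 (List.ofFn f) 0 0 0 (by simp) (Or.inl ⟨rfl, rfl⟩)

lemma opt_upper (L : List ℝ) (h1 : ∀ i : Fin L.length, L.get i < 1)
    (h0 : ∀ i : Fin L.length, 0 ≤ L.get i) : 2 * optCount L ≤ L.length := by
  rw [optCount, Nat.mul_comm, ← Nat.le_div_iff_mul_le (by norm_num)]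
  apply Finset.sup_le
  intro g _
  rw [Nat.le_div_iff_mul_le (by norm_num), Nat.mul_comm]
  set cov := Finset.univ.filter fun b : Fin L.length =>
      1 ≤ ∑ i ∈ Finset.univ.filter (fun i => g i = b), L.get i with hcov
  have hfib : ∀ b ∈ cov, 2 ≤ (Finset.univ.filter (fun i => g i = b)).card := by
    intro b hb
    rw [hcov, Finset.mem_filter] at hb
    by_contra hlt
    push_neg at hlt
    have hle1 : (Finset.univ.filter (fun i => g i = b)).card ≤ 1 := by omega
    have : Nonempty (Fin L.length) := ⟨b⟩
    obtain ⟨x, hx⟩ := Finset.card_le_one_iff_subset_singleton.mp hle1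
    have : ∑ i ∈ Finset.univ.filter (fun i => g i = b), L.get i ≤ ∑ i ∈ {x}, L.get i :=
      Finset.sum_le_sum_of_subset_of_nonneg hx (fun i _ _ => h0 i)
    rw [Finset.sum_singleton] at this
    have := h1 x
    linarith [hb.2]
  calc 2 * cov.card = ∑ _b ∈ cov, 2 := by rw [Finset.sum_const]; ring
    _ ≤ ∑ b ∈ cov, (Finset.univ.filter (fun i => g i = b)).card :=
        Finset.sum_le_sum hfib
    _ = (cov.biUnion fun b => Finset.univ.filter (fun i => g i = b)).card := by
        rw [Finset.card_biUnion]
        intro x _ y _ hxy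
        rw [Function.onFun, Finset.disjoint_left]
        intro i hi hi'
        rw [Finset.mem_filter] at hi hi'
        exact hxy (hi.2 ▸ hi'.2 ▸ rfl)
    _ ≤ (Finset.univ : Finset (Fin L.length)).card := Finset.card_le_card (Finset.subset_univ _)
    _ = L.length := by simp

open Classical in
lemma opt_lower_s18 (L : List ℝ) (h0 : ∀ i : Fin L.length, 0 ≤ L.get i)
    (m : ℕ) (a b : Fin m → Fin L.length)
    (hab : ∀ j k, a j ≠ b k) (ha : Function.Injective a) (hb : Function.Injective b)
    (hsum : ∀ j, 1 ≤ L.get (a j) + L.get (b j)) : m ≤ optCount L := by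
  rcases Nat.eq_zero_or_pos m with hm | hm
  · omega
  have hm0 : (0 : ℕ) < m := hm
  set g : Fin L.length → Fin L.length := fun i =>
    if h : ∃ j, a j = i then b h.choose
    else if h : ∃ j, b j = i then b h.choose
    else b ⟨0, hm0⟩ with hg
  have hga : ∀ j, g (a j) = b j := by
    intro j
    have h : ∃ j', a j' = a j := ⟨j, rfl⟩
    rw [hg]
    simp only [dif_pos h]
    rw [ha h.choose_spec]
  have hgb : ∀ j, g (b j) = b j := by
    intro j
    have h1 : ¬ ∃ j', a j' = b j := by
      rintro ⟨j', hj'⟩; exact hab j' j hj'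
    have h : ∃ j', b j' = b j := ⟨j, rfl⟩
    rw [hg]
    simp only [dif_neg h1, dif_pos h]
    rw [h.choose_spec]
  rw [optCount]
  refine le_trans ?_ (Finset.le_sup (Finset.mem_univ g))
  set cov := Finset.univ.filter fun β : Fin L.length =>
      1 ≤ ∑ i ∈ Finset.univ.filter (fun i => g i = β), L.get i with hcov
  have hsub : Finset.image b Finset.univ ⊆ cov := by
    intro β hβ
    rw [Finset.mem_image] at hβ
    obtain ⟨j, _, rfl⟩ := hβ
    rw [hcov, Finset.mem_filter]
    refine ⟨Finset.mem_univ _, ?_⟩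
    have hpair : ({a j, b j} : Finset (Fin L.length)) ⊆
        Finset.univ.filter (fun i => g i = b j) := by
      intro i hi
      rw [Finset.mem_insert, Finset.mem_singleton] at hi
      rw [Finset.mem_filter]
      rcases hi with rfl | rfl
      · exact ⟨Finset.mem_univ _, hga j⟩
      · exact ⟨Finset.mem_univ _, hgb j⟩
    calc (1 : ℝ) ≤ L.get (a j) + L.get (b j) := hsum j
      _ = ∑ i ∈ ({a j, b j} : Finset (Fin L.length)), L.get i :=
          (Finset.sum_pair (hab j j)).symm
      _ ≤ _ := Finset.sum_le_sum_of_subset_of_nonneg hpair (fun i _ _ => h0 i)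
  calc m = (Finset.image b Finset.univ).card := by
        rw [Finset.card_image_of_injective _ hb, Finset.card_univ, Fintype.card_fin]
    _ ≤ cov.card := Finset.card_le_card hsub

lemma count_ofFn_eq_card (n : ℕ) (f : Fin n → Bool) (v : Bool) :
    (List.ofFn f).count v = (Finset.univ.filter fun i : Fin n => f i = v).card := by
  induction n with
  | zero => simp
  | succ n ih =>
    rw [List.ofFn_succ, List.count_cons, ih (fun i => f i.succ)]
    rw [Finset.card_filter, Finset.card_filter, Fin.sum_univ_succ]
    simp only [beq_iff_eq]
    rcases Bool.eq_false_or_eq_true (f 0) with h | h <;> rcases v with _ | _ <;>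
      simp [h] <;> omega

lemma opt_ge_min (ε : ℝ) (hε0 : 0 < ε) (hε1 : ε < 1) (n : ℕ) (f : Fin n → Bool) :
    min ((List.ofFn f).count true) ((List.ofFn f).count false)
      ≤ optCount (List.ofFn fun i => if f i then ε else 1 - ε) := by
  classical
  set L : List ℝ := List.ofFn fun i => if f i then ε else 1 - ε with hL
  have hlen : L.length = n := by rw [hL, List.length_ofFn]
  have hget : ∀ i : Fin L.length, L.get i = if f (Fin.cast hlen i) then ε else 1 - ε := by
    intro i
    exact List.get_ofFn _ _
  have h0 : ∀ i : Fin L.length, 0 ≤ L.get i := by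
    intro i; rw [hget]; split <;> linarith
  set T : Finset (Fin L.length) :=
    Finset.univ.filter fun i => f (Fin.cast hlen i) = true with hT
  set F : Finset (Fin L.length) :=
    Finset.univ.filter fun i => f (Fin.cast hlen i) = false with hF
  have hTcard : T.card = (List.ofFn f).count true := by
    rw [count_ofFn_eq_card]
    apply Finset.card_equiv (finCongr hlen)
    intro i
    simp [hT, finCongr]
  have hFcard : F.card = (List.ofFn f).count false := by
    rw [count_ofFn_eq_card]
    apply Finset.card_equiv (finCongr hlen)
    intro i
    simp [hF, finCongr]
  rw [← hTcard, ← hFcard]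
  set m := min T.card F.card with hm
  set a : Fin m → Fin L.length :=
    fun j => T.orderEmbOfFin rfl (Fin.castLE (min_le_left _ _) j) with hA
  set b : Fin m → Fin L.length :=
    fun j => F.orderEmbOfFin rfl (Fin.castLE (min_le_right _ _) j) with hB
  have haT : ∀ j, a j ∈ T := fun j => Finset.orderEmbOfFin_mem _ _ _
  have hbF : ∀ j, b j ∈ F := fun j => Finset.orderEmbOfFin_mem _ _ _
  have hTtrue : ∀ i ∈ T, f (Fin.cast hlen i) = true := by
    intro i hi; rw [hT, Finset.mem_filter] at hi; exact hi.2
  have hFfalse : ∀ i ∈ F, f (Fin.cast hlen i) = false := by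
    intro i hi; rw [hF, Finset.mem_filter] at hi; exact hi.2
  apply opt_lower_s18 L h0 m a b
  · intro j k h
    have h1 := hTtrue _ (haT j)
    have h2 := hFfalse _ (hbF k)
    rw [h] at h1
    rw [h1] at h2
    exact Bool.noConfusion h2
  · intro j k h
    have := (T.orderEmbOfFin rfl).injective h
    exact Fin.castLE_injective _ this
  · intro j k h
    have := (F.orderEmbOfFin rfl).injective h
    exact Fin.castLE_injective _ this
  · intro j
    rw [hget (a j), hget (b j), hTtrue _ (haT j), hFfalse _ (hbF j)]
    norm_num

lemma count_add_count (l : List Bool) : l.count true + l.count false = l.length := by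
  induction l with
  | nil => simp
  | cons x l ih => cases x <;> simp [List.count_cons] <;> omega

lemma count_append_true (l : List Bool) :
    (l ++ [true]).count true = l.count true + 1 := by simp
lemma count_append_false (l : List Bool) :
    (l ++ [false]).count true = l.count true := by simp

lemma var_sum (n : ℕ) :
    ∑ f : Fin n → Bool, (2 * ((List.ofFn f).count true : ℝ) - (n : ℝ)) ^ 2
      = (n : ℝ) * 2 ^ n := by
  induction n with
  | zero => simp
  | succ n ih =>
    rw [sum_ofFn_succ n (fun l => (2 * (l.count true : ℝ) - ((n+1 : ℕ) : ℝ)) ^ 2)]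
    have key : ∀ g : Fin n → Bool,
        ∑ b : Bool, (2 * (((List.ofFn g) ++ [b]).count true : ℝ) - ((n+1 : ℕ) : ℝ)) ^ 2
          = 2 * (2 * ((List.ofFn g).count true : ℝ) - (n : ℝ)) ^ 2 + 2 := by
      intro g
      rw [Fintype.sum_bool, count_append_true, count_append_false]
      push_cast
      ring
    rw [Finset.sum_congr rfl (fun g _ => key g), Finset.sum_add_distrib, ← Finset.mul_sum, ih]
    simp [Finset.sum_const]
    push_cast
    ring

lemma abs_sum_le (n : ℕ) :
    ∑ f : Fin n → Bool, |2 * ((List.ofFn f).count true : ℝ) - (n : ℝ)|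
      ≤ Real.sqrt n * 2 ^ n := by
  have h1 : (∑ f : Fin n → Bool, |2 * ((List.ofFn f).count true : ℝ) - (n : ℝ)|) ^ 2
      ≤ (2 ^ n : ℝ) * ((n : ℝ) * 2 ^ n) := by
    have := sq_sum_le_card_mul_sum_sq
      (s := (Finset.univ : Finset (Fin n → Bool)))
      (f := fun f => |2 * ((List.ofFn f).count true : ℝ) - (n : ℝ)|)
    simp only [sq_abs] at this
    calc (∑ f : Fin n → Bool, |2 * ((List.ofFn f).count true : ℝ) - (n : ℝ)|) ^ 2
        ≤ (Finset.univ.card : ℝ) *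
            ∑ f : Fin n → Bool, (2 * ((List.ofFn f).count true : ℝ) - (n : ℝ)) ^ 2 := this
      _ = (2 ^ n : ℝ) * ((n : ℝ) * 2 ^ n) := by
          rw [var_sum n, Finset.card_univ, Fintype.card_fun]
          simp
  have hnn : (0 : ℝ) ≤ ∑ f : Fin n → Bool, |2 * ((List.ofFn f).count true : ℝ) - (n : ℝ)| :=
    Finset.sum_nonneg fun f _ => abs_nonneg _
  have h2 : (2 ^ n : ℝ) * ((n : ℝ) * 2 ^ n) = (Real.sqrt n * 2 ^ n) ^ 2 := by
    rw [mul_pow, Real.sq_sqrt (Nat.cast_nonneg n)]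
    ring
  have hynn : (0:ℝ) ≤ Real.sqrt n * 2 ^ n :=
    mul_nonneg (Real.sqrt_nonneg _) (by positivity)
  calc ∑ f : Fin n → Bool, |2 * ((List.ofFn f).count true : ℝ) - (n : ℝ)|
      = Real.sqrt ((∑ f : Fin n → Bool, |2 * ((List.ofFn f).count true : ℝ) - (n : ℝ)|) ^ 2) :=
        (Real.sqrt_sq hnn).symm
    _ ≤ Real.sqrt ((Real.sqrt n * 2 ^ n) ^ 2) := Real.sqrt_le_sqrt (by rw [← h2]; exact h1)
    _ = Real.sqrt n * 2 ^ n := Real.sqrt_sq hynn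

end Aux
/-- For `n` independent items, each of size `ε_n` or `1 - ε_n` with probability
1/2 each (`0 < ε_n < 1/n`), `lim E[DNF]/n = 2/5`, `lim E[Opt]/n = 1/2`, and
consequently `lim E[DNF]/E[Opt] = 4/5`. -/
theorem dnf_two_point_distribution (ε : ℕ → ℝ)
    (hε : ∀ n : ℕ, 2 ≤ n → 0 < ε n ∧ ε n < 1/(n:ℝ)) :
    Filter.Tendsto (fun n : ℕ => bernE dnfCount n (ε n) / (n:ℝ))
      Filter.atTop (nhds (2/5)) ∧
    Filter.Tendsto (fun n : ℕ => bernE optCount n (ε n) / (n:ℝ))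
      Filter.atTop (nhds (1/2)) ∧
    Filter.Tendsto (fun n : ℕ => bernE dnfCount n (ε n) / bernE optCount n (ε n))
      Filter.atTop (nhds (4/5)) := by
  classical
  have hbounds : ∀ n : ℕ, 2 ≤ n →
      (2/5 - 3/5 * (1/(n:ℝ)) ≤ bernE dnfCount n (ε n) / n ∧
        bernE dnfCount n (ε n) / n ≤ 2/5) ∧
      (1/2 - 1/2 * (Real.sqrt (n:ℝ))⁻¹ ≤ bernE optCount n (ε n) / n ∧
        bernE optCount n (ε n) / n ≤ 1/2) := by
    intro n hn
    obtain ⟨he0, he1⟩ := hε n hn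
    set e := ε n with he
    have hN2 : (2:ℝ) ≤ (n:ℝ) := by exact_mod_cast hn
    have hN0 : (0:ℝ) < (n:ℝ) := by linarith
    have hP0 : (0:ℝ) < (2:ℝ)^n := by positivity
    have hne : (n:ℝ) * e < 1 := by
      rw [mul_comm]
      calc e * (n:ℝ) < (1/(n:ℝ)) * n := mul_lt_mul_of_pos_right he1 hN0
        _ = 1 := by field_simp
    have h2e : 2 * e < 1 := by nlinarith
    have he_lt1 : e < 1 := by linarith
    constructor
    · -- DNF bounds
      have hb : bernE dnfCount n e
          = (∑ f : Fin n → Bool, (((List.ofFn f).foldl bStep (0,0)).2 : ℝ)) / 2^n := by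
        rw [bernE]
        congr 1
        apply Finset.sum_congr rfl
        intro f _
        rw [dnfCount_eq_bool e n he0 hne h2e f]
      set A : ℕ := ∑ f : Fin n → Bool, ((List.ofFn f).foldl bStep (0,0)).2 with hA
      have hbA : bernE dnfCount n e = (A : ℝ) / 2^n := by
        rw [hb, hA]
        push_cast
        rfl
      have hsplit : 10 * A + (∑ f : Fin n → Bool, Hpot ((List.ofFn f).foldl bStep (0,0)).1)
          = 4 * n * 2^n := by
        rw [hA, Finset.mul_sum, ← Finset.sum_add_distrib]
        exact dnf_sum n
      have hBle : (∑ f : Fin n → Bool, Hpot ((List.ofFn f).foldl bStep (0,0)).1)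
            ≤ 6 * 2^n := by
        calc (∑ f : Fin n → Bool, Hpot ((List.ofFn f).foldl bStep (0,0)).1)
            ≤ ∑ _f : Fin n → Bool, 6 := Finset.sum_le_sum (fun f _ => Hpot_le _)
          _ = 6 * 2^n := by
              rw [Finset.sum_const, Finset.card_univ, Fintype.card_fun]
              simp [mul_comm]
      have hA1 : 10 * (A:ℝ) ≤ 4 * n * 2^n := by
        have : 10 * A ≤ 4 * n * 2^n := by omega
        exact_mod_cast this
      have hA2 : 4 * (n:ℝ) * 2^n ≤ 10 * A + 6 * 2^n := by
        have : 4 * n * 2^n ≤ 10 * A + 6 * 2^n := by omega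
        exact_mod_cast this
      rw [hbA]
      constructor
      · rw [div_div, le_div_iff₀ (by positivity)]
        have e1 : (1/(n:ℝ)) * ((2:ℝ)^n * n) = 2^n := by field_simp
        nlinarith [e1]
      · rw [div_div, div_le_iff₀ (by positivity)]
        nlinarith
    · -- OPT bounds
      set v : (Fin n → Bool) → List ℝ :=
        fun f => List.ofFn fun i => if f i then e else 1 - e with hv
      have hlen : ∀ f, (v f).length = n := fun f => List.length_ofFn
      have hget1 : ∀ f, ∀ i : Fin (v f).length, (v f).get i < 1 := by
        intro f i
        rw [List.get_ofFn (fun i : Fin n => if f i then e else 1 - e) i]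
        split <;> linarith
      have hget0 : ∀ f, ∀ i : Fin (v f).length, 0 ≤ (v f).get i := by
        intro f i
        rw [List.get_ofFn (fun i : Fin n => if f i then e else 1 - e) i]
        split <;> linarith
      have hupper : ∀ f, (optCount (v f) : ℝ) ≤ (n:ℝ)/2 := by
        intro f
        have := opt_upper (v f) (hget1 f) (hget0 f)
        rw [hlen f] at this
        have : (2 * optCount (v f) : ℝ) ≤ (n : ℝ) := by exact_mod_cast this
        linarith
      have hlower : ∀ f : Fin n → Bool,
          ((n:ℝ) - |2 * ((List.ofFn f).count true : ℝ) - (n:ℝ)|)/2 ≤ (optCount (v f) : ℝ) := by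
        intro f
        have hmin := opt_ge_min e he0 he_lt1 n f
        set ct := (List.ofFn f).count true with hct
        set cf := (List.ofFn f).count false with hcf
        have hsumc : (ct:ℝ) + (cf:ℝ) = (n:ℝ) := by
          have := count_add_count (List.ofFn f)
          rw [List.length_ofFn] at this
          exact_mod_cast this
        have hminR : ((min ct cf : ℕ) : ℝ) ≤ (optCount (v f) : ℝ) := by exact_mod_cast hmin
        have hcast : ((min ct cf : ℕ) : ℝ) = min (ct:ℝ) (cf:ℝ) := by push_cast; rfl
        rw [hcast] at hminR
        refine le_trans ?_ hminR
        rcases le_total (ct:ℝ) (cf:ℝ) with hle | hle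
        · rw [min_eq_left hle, abs_of_nonpos (by linarith)]
          linarith
        · rw [min_eq_right hle, abs_of_nonneg (by linarith)]
          linarith
      have hbO : bernE optCount n e
          = (∑ f : Fin n → Bool, (optCount (v f) : ℝ)) / 2^n := by
        rw [bernE]
      have hOsum_le : (∑ f : Fin n → Bool, (optCount (v f) : ℝ)) ≤ 2^n * ((n:ℝ)/2) := by
        calc (∑ f : Fin n → Bool, (optCount (v f) : ℝ))
            ≤ ∑ _f : Fin n → Bool, (n:ℝ)/2 := Finset.sum_le_sum (fun f _ => hupper f)
          _ = 2^n * ((n:ℝ)/2) := by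
              rw [Finset.sum_const, Finset.card_univ, Fintype.card_fun]
              simp [nsmul_eq_mul]
      have hOsum_ge : ((n:ℝ) * 2^n - Real.sqrt n * 2^n)/2
          ≤ (∑ f : Fin n → Bool, (optCount (v f) : ℝ)) := by
        have h1 : (∑ f : Fin n → Bool,
            ((n:ℝ) - |2 * ((List.ofFn f).count true : ℝ) - (n:ℝ)|)/2)
            ≤ ∑ f : Fin n → Bool, (optCount (v f) : ℝ) :=
          Finset.sum_le_sum (fun f _ => hlower f)
        refine le_trans ?_ h1
        have h2 : (∑ f : Fin n → Bool,
            ((n:ℝ) - |2 * ((List.ofFn f).count true : ℝ) - (n:ℝ)|)/2)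
            = ((n:ℝ) * 2^n - ∑ f : Fin n → Bool,
                |2 * ((List.ofFn f).count true : ℝ) - (n:ℝ)|)/2 := by
          rw [← Finset.sum_div, Finset.sum_sub_distrib, Finset.sum_const,
            Finset.card_univ, Fintype.card_fun]
          simp [nsmul_eq_mul, mul_comm]
        rw [h2]
        have := abs_sum_le n
        linarith
      rw [hbO]
      have hs0 : (0:ℝ) < Real.sqrt n := Real.sqrt_pos.mpr hN0
      have hss : Real.sqrt n * Real.sqrt n = (n:ℝ) := Real.mul_self_sqrt hN0.le
      constructor
      · rw [div_div, le_div_iff₀ (by positivity)]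
        have e2 : (Real.sqrt n)⁻¹ * ((2:ℝ)^n * n) = 2^n * Real.sqrt n := by
          rw [show (Real.sqrt n)⁻¹ * ((2:ℝ)^n * n) = 2^n * ((n:ℝ) / Real.sqrt n) from by
              rw [div_eq_mul_inv]; ring,
            Real.div_sqrt]
        nlinarith [e2]
      · rw [div_div, div_le_iff₀ (by positivity)]
        nlinarith
  -- limits
  have hDl : Filter.Tendsto (fun n : ℕ => 2/5 - 3/5 * (1/(n:ℝ)))
      Filter.atTop (nhds (2/5)) := by
    have h0 : Filter.Tendsto (fun n : ℕ => 3/5 * (1/(n:ℝ))) Filter.atTop (nhds 0) := by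
      have := tendsto_one_div_atTop_nhds_zero_nat.const_mul (3/5 : ℝ)
      simpa using this
    have := (tendsto_const_nhds (x := (2/5 : ℝ)) (f := Filter.atTop (α := ℕ))).sub h0
    simpa using this
  have hsinv : Filter.Tendsto (fun n : ℕ => (Real.sqrt (n:ℝ))⁻¹)
      Filter.atTop (nhds 0) := by
    have h := (Real.continuous_sqrt.tendsto 0).comp tendsto_one_div_atTop_nhds_zero_nat
    simp only [Function.comp_def, Real.sqrt_zero] at h
    apply h.congr
    intro n
    rw [one_div, Real.sqrt_inv]
  have hOl : Filter.Tendsto (fun n : ℕ => 1/2 - 1/2 * (Real.sqrt (n:ℝ))⁻¹)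
      Filter.atTop (nhds (1/2)) := by
    have h0 : Filter.Tendsto (fun n : ℕ => 1/2 * (Real.sqrt (n:ℝ))⁻¹)
        Filter.atTop (nhds 0) := by
      have := hsinv.const_mul (1/2 : ℝ)
      simpa using this
    have := (tendsto_const_nhds (x := (1/2 : ℝ)) (f := Filter.atTop (α := ℕ))).sub h0
    simpa using this
  have hD : Filter.Tendsto (fun n : ℕ => bernE dnfCount n (ε n) / (n:ℝ))
      Filter.atTop (nhds (2/5)) := by
    apply tendsto_of_tendsto_of_tendsto_of_le_of_le' hDl tendsto_const_nhds
    · filter_upwards [Filter.eventually_atTop.mpr ⟨2, fun n hn => hn⟩] with n hn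
      exact ((hbounds n hn).1).1
    · filter_upwards [Filter.eventually_atTop.mpr ⟨2, fun n hn => hn⟩] with n hn
      exact ((hbounds n hn).1).2
  have hO : Filter.Tendsto (fun n : ℕ => bernE optCount n (ε n) / (n:ℝ))
      Filter.atTop (nhds (1/2)) := by
    apply tendsto_of_tendsto_of_tendsto_of_le_of_le' hOl tendsto_const_nhds
    · filter_upwards [Filter.eventually_atTop.mpr ⟨2, fun n hn => hn⟩] with n hn
      exact ((hbounds n hn).2).1
    · filter_upwards [Filter.eventually_atTop.mpr ⟨2, fun n hn => hn⟩] with n hn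
      exact ((hbounds n hn).2).2
  refine ⟨hD, hO, ?_⟩
  have hratio : Filter.Tendsto
      (fun n : ℕ => (bernE dnfCount n (ε n) / (n:ℝ)) / (bernE optCount n (ε n) / (n:ℝ)))
      Filter.atTop (nhds (4/5)) := by
    have := hD.div hO (by norm_num : (1/2 : ℝ) ≠ 0)
    convert this using 2
    all_goals norm_num
  apply hratio.congr'
  filter_upwards [Filter.eventually_atTop.mpr ⟨1, fun n hn => hn⟩] with n hn
  have hn0 : ((n:ℝ)) ≠ 0 := by
    have : (1:ℝ) ≤ (n:ℝ) := by exact_mod_cast hn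
    linarith
  rw [div_div_eq_mul_div, div_mul_cancel₀ _ hn0]
end
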